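/- arXiv:2512.07577 — 8 statements merged into one kernel-verified Lean document; each statement's English description precedes it below -/
import Mathlib

section
/- Let δ ≥ e^{−n/16} and 1/m < ε < 1/2. Let (A, w) be a ReLU network with n input nodes and m hidden layer nodes. If (A, w) is (ε, δ)-far from computing the constant 0-function, then there exists an input x ∈ {0,1}^n such that wᵀ·relu(Ax) > (1/8)·ε·m·n. -/
open scoped Classical
open Finset

noncomputable section

/-- The ReLU activation function. -/
def relu (z : ℝ) : ℝ := max z 0

/-- Interpret a Boolean vector as a real 0/1 vector. -/
def bv {n : ℕ} (x : Fin n → Bool) : Fin n → ℝ := fun i => if x i then 1 else 0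

/-- The value at the output node of the ReLU network `(A, w)` on input `x`:
`wᵀ · relu (A x)`. -/
def netVal {m n : ℕ} (A : Matrix (Fin m) (Fin n) ℝ) (w : Fin m → ℝ) (x : Fin n → ℝ) : ℝ :=
  ∑ j, w j * relu (∑ i, A j i * x i)

/-- The Boolean function computed by the ReLU network `(A, w)`. -/
def netBool {m n : ℕ} (A : Matrix (Fin m) (Fin n) ℝ) (w : Fin m → ℝ) (x : Fin n → Bool) : Bool :=
  decide (0 < netVal A w (bv x))

/-- The constant 0-function. -/
def zeroFun {n : ℕ} : (Fin n → Bool) → Bool := fun _ => false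

/-- The OR-function: 1 iff the input is nonzero. -/
def orFun {n : ℕ} : (Fin n → Bool) → Bool := fun x => decide (∃ i, x i = true)

/-- `(A, w)` is `(ε, δ)`-close to computing `f`: one can change at most `ε·n·m` entries of `A`
and `ε·m` entries of `w` (staying in `[-1,1]`) so that the resulting network disagrees with `f`
on at most a `δ`-fraction of the `2^n` inputs. -/
def IsClose {m n : ℕ} (A : Matrix (Fin m) (Fin n) ℝ) (w : Fin m → ℝ) (ε δ : ℝ)
    (f : (Fin n → Bool) → Bool) : Prop :=
  ∃ (A' : Matrix (Fin m) (Fin n) ℝ) (w' : Fin m → ℝ),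
    (∀ j i, |A' j i| ≤ 1) ∧ (∀ j, |w' j| ≤ 1) ∧
    (((Finset.univ.filter (fun p : Fin m × Fin n => A' p.1 p.2 ≠ A p.1 p.2)).card : ℝ)
        ≤ ε * n * m) ∧
    (((Finset.univ.filter (fun j : Fin m => w' j ≠ w j)).card : ℝ) ≤ ε * m) ∧
    (((Finset.univ.filter (fun x : Fin n → Bool => netBool A' w' x ≠ f x)).card : ℝ)
        ≤ δ * 2 ^ n)

lemma relu_nonneg (z : ℝ) : 0 ≤ relu z := le_max_right _ _

lemma sum_bv {n : ℕ} (x : Fin n → Bool) :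
    ∑ i, bv x i = ((univ.filter fun i => x i = true).card : ℝ) := by
  simp [bv, Finset.sum_boole]

lemma sum_wt_pow (n : ℕ) (c : ℝ) :
    ∑ x : Fin n → Bool, c ^ (univ.filter fun i => x i = true).card = (c + 1) ^ n := by
  have h1 : ∀ x : Fin n → Bool,
      c ^ (univ.filter fun i => x i = true).card
        = ∏ i, (if x i = true then c else 1) := by
    intro x
    rw [Finset.prod_ite, Finset.prod_const, Finset.prod_const, one_pow, mul_one]
  simp_rw [h1]
  rw [← Fintype.prod_sum (fun (_ : Fin n) (b : Bool) => if b = true then c else (1:ℝ))]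
  simp [Fintype.sum_bool]

-- counting lemma
lemma count_light (n : ℕ) :
    (((univ : Finset (Fin n → Bool)).filter
        (fun x => ((univ.filter fun i => x i = true).card : ℝ) < n / 4)).card : ℝ)
      ≤ Real.exp (-(n : ℝ) / 16) * 2 ^ n := by
  set wt : (Fin n → Bool) → ℕ := fun x => (univ.filter fun i => x i = true).card with hwt
  have key : ∀ x : Fin n → Bool, ((wt x : ℝ)) < n / 4 →
      (1 : ℝ) ≤ (3 : ℝ) ^ ((n : ℝ) / 4) * (1/3 : ℝ) ^ wt x := by
    intro x hx
    have h3 : (3:ℝ) ^ ((wt x : ℝ)) ≤ (3:ℝ) ^ ((n : ℝ)/4) :=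
      Real.rpow_le_rpow_of_exponent_le (by norm_num) hx.le
    have h3' : (3:ℝ) ^ ((wt x : ℝ)) = (3:ℝ) ^ (wt x) := Real.rpow_natCast 3 (wt x)
    have hpos : (0:ℝ) < (3:ℝ) ^ (wt x) := by positivity
    rw [h3'] at h3
    have : (1/3 : ℝ) ^ wt x = ((3:ℝ) ^ wt x)⁻¹ := by
      rw [one_div, inv_pow]
    rw [this, ← div_eq_mul_inv, le_div_iff₀ hpos, one_mul]
    exact h3
  calc (((univ : Finset (Fin n → Bool)).filter
        (fun x => ((wt x : ℝ)) < n / 4)).card : ℝ)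
      = ∑ x ∈ (univ : Finset (Fin n → Bool)).filter (fun x => ((wt x : ℝ)) < n / 4), (1:ℝ) := by
        simp
    _ ≤ ∑ x ∈ (univ : Finset (Fin n → Bool)).filter (fun x => ((wt x : ℝ)) < n / 4),
          (3 : ℝ) ^ ((n : ℝ) / 4) * (1/3 : ℝ) ^ wt x := by
        apply Finset.sum_le_sum
        intro x hx
        exact key x (Finset.mem_filter.mp hx).2
    _ ≤ ∑ x : Fin n → Bool, (3 : ℝ) ^ ((n : ℝ) / 4) * (1/3 : ℝ) ^ wt x := by
        apply Finset.sum_le_sum_of_subset_of_nonneg (Finset.filter_subset _ _)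
        intro x _ _
        positivity
    _ = (3 : ℝ) ^ ((n : ℝ) / 4) * (1/3 + 1) ^ n := by
        rw [← Finset.mul_sum, sum_wt_pow]
    _ ≤ Real.exp (-(n : ℝ) / 16) * 2 ^ n := by
        have hb : (3 : ℝ) ^ ((1:ℝ) / 4) * (1/3 + 1) ≤ Real.exp (-(1:ℝ) / 16) * 2 := by
          have h1 : (3 : ℝ) ^ ((1:ℝ)/4) ≤ 45/32 := by
            have h4 : ((3 : ℝ) ^ ((1:ℝ)/4)) ^ (4:ℕ) = 3 := by
              rw [← Real.rpow_natCast ((3:ℝ) ^ ((1:ℝ)/4)) 4, ← Real.rpow_mul (by norm_num)]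
              norm_num
            nlinarith [Real.rpow_nonneg (by norm_num : (0:ℝ) ≤ 3) ((1:ℝ)/4),
              sq_nonneg ((3:ℝ) ^ ((1:ℝ)/4) - 45/32), sq_nonneg (((3:ℝ) ^ ((1:ℝ)/4))^2 - (45/32)^2),
              sq_nonneg ((3:ℝ) ^ ((1:ℝ)/4) + 45/32)]
          have h2 : (15/16 : ℝ) ≤ Real.exp (-(1:ℝ)/16) := by
            have := Real.add_one_le_exp (-(1:ℝ)/16)
            linarith
          nlinarith [Real.exp_pos (-(1:ℝ)/16)]
        have hbase0 : (0:ℝ) ≤ (3 : ℝ) ^ ((1:ℝ) / 4) * (1/3 + 1) := by positivity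
        calc (3 : ℝ) ^ ((n : ℝ) / 4) * (1/3 + 1) ^ n
            = ((3 : ℝ) ^ ((1:ℝ)/4) * (1/3 + 1)) ^ n := by
              rw [mul_pow, ← Real.rpow_natCast ((3:ℝ) ^ ((1:ℝ)/4)) n,
                ← Real.rpow_mul (by norm_num : (0:ℝ) ≤ 3)]
              ring_nf
          _ ≤ (Real.exp (-(1:ℝ)/16) * 2) ^ n := pow_le_pow_left₀ hbase0 hb n
          _ = Real.exp (-(n : ℝ) / 16) * 2 ^ n := by
              rw [mul_pow, ← Real.exp_nat_mul]
              ring_nf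

/-- If `(A, w)` is `(ε, δ)`-far from computing the constant 0-function
(with `δ ≥ e^{-n/16}` and `1/m < ε < 1/2`), then some input has output value
exceeding `(1/8)·ε·m·n`. -/
theorem far_from_zero_function_large_output (n m : ℕ) (ε δ : ℝ)
    (hδ : Real.exp (-(n : ℝ) / 16) ≤ δ) (hε1 : 1 / (m : ℝ) < ε) (hε2 : ε < 1 / 2)
    (A : Matrix (Fin m) (Fin n) ℝ) (w : Fin m → ℝ)
    (hA : ∀ j i, |A j i| ≤ 1) (hw : ∀ j, |w j| ≤ 1)
    (hfar : ¬ IsClose A w ε δ zeroFun) :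
    ∃ x : Fin n → Bool, (1 / 8) * ε * m * n < netVal A w (bv x) := by
  by_contra hcon
  push_neg at hcon
  apply hfar
  have hδ0 : 0 < δ := lt_of_lt_of_le (Real.exp_pos _) hδ
  have hε0 : 0 < ε := lt_of_le_of_lt (by positivity) hε1
  by_cases hP : (((univ.filter (fun j : Fin m => 0 ≤ w j)).card : ℝ)) ≤ ε * m
  · -- Case A: few nonnegative weights; zero them out
    refine ⟨A, fun j => if 0 ≤ w j then 0 else w j, hA, ?_, ?_, ?_, ?_⟩
    · intro j
      by_cases h : 0 ≤ w j <;> simp [h, hw j]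
    · simp only [ne_eq, not_true_eq_false]
      rw [Finset.filter_false_of_mem (fun p _ => by simp)]
      simp
      positivity
    · refine le_trans ?_ hP
      have hsub : (univ.filter (fun j : Fin m =>
          (if 0 ≤ w j then (0:ℝ) else w j) ≠ w j)) ⊆ univ.filter (fun j : Fin m => 0 ≤ w j) := by
        intro j hj
        simp only [Finset.mem_filter, Finset.mem_univ, true_and] at hj ⊢
        by_contra h
        simp [h] at hj
      exact_mod_cast Nat.cast_le.mpr (Finset.card_le_card hsub)
    · have hzero : ∀ x : Fin n → Bool,
          netBool A (fun j => if 0 ≤ w j then (0:ℝ) else w j) x = false := by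
        intro x
        have hle : netVal A (fun j => if 0 ≤ w j then (0:ℝ) else w j) (bv x) ≤ 0 := by
          apply Finset.sum_nonpos
          intro j _
          by_cases h : 0 ≤ w j
          · simp [h]
          · simp only [h, if_false]
            exact mul_nonpos_of_nonpos_of_nonneg (le_of_not_ge h) (relu_nonneg _)
        simp [netBool, not_lt.mpr hle]
      rw [Finset.filter_false_of_mem (fun x _ => by simp [hzero x, zeroFun])]
      simp
      positivity
  · -- Case B: many nonnegative weights
    push_neg at hP
    have hm0 : 0 < (m : ℝ) := by
      rcases Nat.eq_zero_or_pos m with h | h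
      · exfalso; subst h; simp at hP
      · exact_mod_cast h
    have hεm1 : 1 < ε * m := by
      rw [div_lt_iff₀ hm0] at hε1; linarith
    set s : ℕ := ⌊ε * m⌋₊ with hs
    have hs1 : 1 ≤ s := Nat.le_floor (by exact_mod_cast hεm1.le)
    have hsle : (s : ℝ) ≤ ε * m := Nat.floor_le (by positivity)
    have hs2 : ε * m / 2 ≤ (s : ℝ) := by
      rcases le_or_gt 2 (ε * m) with h | h
      · have := Nat.sub_one_lt_floor (ε * m)
        linarith
      · have : (1:ℝ) ≤ (s:ℝ) := by exact_mod_cast hs1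
        linarith
    have hscard : s ≤ (univ.filter (fun j : Fin m => 0 ≤ w j)).card := by
      have : (s : ℝ) < ((univ.filter (fun j : Fin m => 0 ≤ w j)).card : ℝ) :=
        lt_of_le_of_lt hsle hP
      exact_mod_cast this.le
    obtain ⟨S, hSsub, hScard⟩ := Finset.exists_subset_card_eq hscard
    refine ⟨fun j i => if j ∈ S then 1 else A j i, fun j => if j ∈ S then -1 else w j,
      ?_, ?_, ?_, ?_, ?_⟩
    · intro j i; by_cases h : j ∈ S <;> simp [h, hA j i]
    · intro j; by_cases h : j ∈ S <;> simp [h, hw j]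
    · -- A-difference count
      have hsub : (univ.filter (fun p : Fin m × Fin n =>
          (if p.1 ∈ S then (1:ℝ) else A p.1 p.2) ≠ A p.1 p.2)) ⊆ S ×ˢ univ := by
        intro p hp
        simp only [Finset.mem_filter, Finset.mem_univ, true_and] at hp
        by_contra h
        simp only [Finset.mem_product, Finset.mem_univ, and_true] at h
        simp [h] at hp
      have hcard := Finset.card_le_card hsub
      rw [Finset.card_product, hScard, Finset.card_univ, Fintype.card_fin] at hcard
      calc ((univ.filter (fun p : Fin m × Fin n =>
            (if p.1 ∈ S then (1:ℝ) else A p.1 p.2) ≠ A p.1 p.2)).card : ℝ)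
          ≤ (s : ℝ) * n := by exact_mod_cast hcard
        _ ≤ (ε * m) * n := by
            apply mul_le_mul_of_nonneg_right hsle (Nat.cast_nonneg n)
        _ = ε * n * m := by ring
    · -- w-difference count
      have hsub : (univ.filter (fun j : Fin m =>
          (if j ∈ S then (-1:ℝ) else w j) ≠ w j)) ⊆ S := by
        intro j hj
        simp only [Finset.mem_filter, Finset.mem_univ, true_and] at hj
        by_contra h
        simp [h] at hj
      have := Finset.card_le_card hsub
      rw [hScard] at this
      calc ((univ.filter (fun j : Fin m =>
            (if j ∈ S then (-1:ℝ) else w j) ≠ w j)).card : ℝ)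
          ≤ (s : ℝ) := by exact_mod_cast this
        _ ≤ ε * m := hsle
    · -- disagreement count
      have hkey : ∀ x : Fin n → Bool, (n : ℝ) / 4 ≤ ((univ.filter fun i => x i = true).card : ℝ) →
          netBool (fun j i => if j ∈ S then (1:ℝ) else A j i)
            (fun j => if j ∈ S then (-1:ℝ) else w j) x = false := by
        intro x hx
        set wtx : ℝ := ((univ.filter fun i => x i = true).card : ℝ) with hwtx
        have hwt0 : 0 ≤ wtx := Nat.cast_nonneg _
        have hval : netVal (fun j i => if j ∈ S then (1:ℝ) else A j i)
            (fun j => if j ∈ S then (-1:ℝ) else w j) (bv x) ≤ 0 := by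
          have hsplit : netVal (fun j i => if j ∈ S then (1:ℝ) else A j i)
              (fun j => if j ∈ S then (-1:ℝ) else w j) (bv x)
              = (∑ j ∈ univ \ S, w j * relu (∑ i, A j i * bv x i)) + ∑ j ∈ S, (-1) * wtx := by
            unfold netVal
            rw [← Finset.sum_sdiff (Finset.subset_univ S)]
            congr 1
            · apply Finset.sum_congr rfl
              intro j hj
              have hjS : j ∉ S := (Finset.mem_sdiff.mp hj).2
              simp [hjS]
            · apply Finset.sum_congr rfl
              intro j hj
              simp only [if_pos hj, one_mul]
              rw [sum_bv x, ← hwtx, relu, max_eq_left hwt0]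
          have hS0 : 0 ≤ ∑ j ∈ S, w j * relu (∑ i, A j i * bv x i) := by
            apply Finset.sum_nonneg
            intro j hj
            have hwj : 0 ≤ w j := by
              have := hSsub hj
              simpa using this
            exact mul_nonneg hwj (relu_nonneg _)
          have hrest : (∑ j ∈ univ \ S, w j * relu (∑ i, A j i * bv x i))
              ≤ (1/8) * ε * m * n := by
            have hall := hcon x
            rw [netVal, ← Finset.sum_sdiff (Finset.subset_univ S)] at hall
            linarith
          have hsum2 : (∑ j ∈ S, (-1:ℝ) * wtx) = -((s:ℝ) * wtx) := by
            rw [Finset.sum_const, hScard, nsmul_eq_mul]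
            ring
          rw [hsplit, hsum2]
          have hprod : ε * m / 2 * ((n:ℝ)/4) ≤ (s:ℝ) * wtx := by
            apply mul_le_mul hs2 hx (by positivity) (Nat.cast_nonneg s)
          nlinarith
        simp [netBool, not_lt.mpr hval]
      have hsub : (univ.filter (fun x : Fin n → Bool =>
          netBool (fun j i => if j ∈ S then (1:ℝ) else A j i)
            (fun j => if j ∈ S then (-1:ℝ) else w j) x ≠ zeroFun x))
          ⊆ (univ : Finset (Fin n → Bool)).filter
            (fun x => ((univ.filter fun i => x i = true).card : ℝ) < n / 4) := by
        intro x hx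
        simp only [Finset.mem_filter, Finset.mem_univ, true_and] at hx ⊢
        by_contra h
        push_neg at h
        exact hx (by rw [hkey x h]; rfl)
      calc ((univ.filter (fun x : Fin n → Bool =>
            netBool (fun j i => if j ∈ S then (1:ℝ) else A j i)
              (fun j => if j ∈ S then (-1:ℝ) else w j) x ≠ zeroFun x)).card : ℝ)
          ≤ (((univ : Finset (Fin n → Bool)).filter
              (fun x => ((univ.filter fun i => x i = true).card : ℝ) < n / 4)).card : ℝ) := by
            exact_mod_cast Nat.cast_le.mpr (Finset.card_le_card hsub)
        _ ≤ Real.exp (-(n : ℝ) / 16) * 2 ^ n := count_light n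
        _ ≤ δ * 2 ^ n := by
            apply mul_le_mul_of_nonneg_right hδ (by positivity)
end
end

section
/- Let 0 < ε < 1/2 and 0 < λ < 1/2. Let w ∈ [−1,1]^m and A ∈ [−1,1]^{m×n}. Let t and s be integers with t ≥ 2048·ln(4/λ)/ε² and s ≥ 2048·ln(4t/λ)/ε². Let T be the sampling matrix of a uniformly random t-element subset of {1,…,m} and S the sampling matrix of an independent uniformly random s-element subset of {1,…,n}. Then for any fixed x ∈ {0,1}^n, the probability (over the random choices of S and T) that |(mn/(st))·wᵀ·relu(T·A·S·x) − wᵀ·relu(Ax)| > (1/16)·ε·n·m is at most λ. -/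
open scoped Classical
open Finset

noncomputable section

/-- The sampling matrix of a subset `Q`: diagonal 0/1 matrix with 1 exactly at indices in `Q`. -/
def samplM {k : ℕ} (Q : Finset (Fin k)) : Matrix (Fin k) (Fin k) ℝ :=
  Matrix.diagonal fun i => if i ∈ Q then 1 else 0


namespace SamplingAux

lemma relu_abs_le (z : ℝ) : |relu z| ≤ |z| := by
  unfold relu
  rcases le_total z 0 with h | h
  · rw [max_eq_right h]; simp [abs_nonneg]
  · rw [max_eq_left h]

lemma relu_lipschitz (a b : ℝ) : |relu a - relu b| ≤ |a - b| :=
  abs_max_sub_max_le_abs a b 0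

lemma relu_smul (a z : ℝ) (ha : 0 ≤ a) : relu (a * z) = a * relu z := by
  unfold relu
  rcases le_total z 0 with h | h
  · rw [max_eq_right h, max_eq_right (by nlinarith : a * z ≤ 0), mul_zero]
  · rw [max_eq_left h, max_eq_left (by positivity : 0 ≤ a * z)]

lemma netVal_sampled {m n : ℕ} (A : Matrix (Fin m) (Fin n) ℝ) (w : Fin m → ℝ)
    (T : Finset (Fin m)) (S : Finset (Fin n)) (x : Fin n → ℝ) :
    netVal (samplM T * A * samplM S) w x = ∑ j ∈ T, w j * relu (∑ i ∈ S, A j i * x i) := by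
  unfold netVal samplM
  have hentry : ∀ (j : Fin m) (i : Fin n),
      (Matrix.diagonal (fun i => if i ∈ T then (1:ℝ) else 0) * A *
        Matrix.diagonal (fun i => if i ∈ S then (1:ℝ) else 0)) j i
      = (if j ∈ T then (1:ℝ) else 0) * A j i * (if i ∈ S then (1:ℝ) else 0) := by
    intro j i
    rw [Matrix.mul_diagonal, Matrix.diagonal_mul]
  have hterm : ∀ j : Fin m, w j * relu (∑ i, (Matrix.diagonal (fun i => if i ∈ T then (1:ℝ) else 0)
      * A * Matrix.diagonal (fun i => if i ∈ S then (1:ℝ) else 0)) j i * x i)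
      = if j ∈ T then w j * relu (∑ i ∈ S, A j i * x i) else 0 := by
    intro j
    simp only [hentry]
    by_cases hj : j ∈ T
    · simp only [hj, if_true, one_mul]
      congr 2
      rw [show (∑ i ∈ S, A j i * x i) = ∑ i ∈ Finset.univ ∩ S, A j i * x i by
        rw [Finset.univ_inter], ← Finset.sum_ite_mem]
      apply Finset.sum_congr rfl
      intro i _
      by_cases hi : i ∈ S <;> simp [hi]
    · simp [hj, relu]
  rw [Finset.sum_congr rfl (fun j _ => hterm j), Finset.sum_ite_mem, Finset.univ_inter]

end SamplingAux

namespace SamplingAux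
open Real Finset


lemma two_point (p q : ℝ) (hp : 0 ≤ p) (hq : 0 ≤ q) (hpq : p + q = 1) (y : ℝ) :
    p * Real.exp y + q * Real.exp (-y) ≤ Real.exp ((p - q) * y + y ^ 2 / 2) := by
  set g : ℝ → ℝ := fun z => p * Real.exp z + q * Real.exp (-z) with hgdef
  have gpos : ∀ z, 0 < g z := by
    intro z
    rcases eq_or_lt_of_le hp with h | h
    · have hq1 : q = 1 := by linarith
      simp [hgdef, ← h, hq1, Real.exp_pos]
    · have h1 : 0 < p * Real.exp z := mul_pos h (Real.exp_pos z)
      have h2 : 0 ≤ q * Real.exp (-z) := mul_nonneg hq (Real.exp_pos _).le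
      simp only [hgdef]; linarith
  set G : ℝ → ℝ := fun z => p * Real.exp z - q * Real.exp (-z) with hGdef
  have hg : ∀ z, HasDerivAt g (G z) z := by
    intro z
    have h1 : HasDerivAt (fun z : ℝ => p * Real.exp z) (p * Real.exp z) z :=
      (Real.hasDerivAt_exp z).const_mul p
    have h2 : HasDerivAt (fun z : ℝ => Real.exp (-z)) (Real.exp (-z) * (-1)) z :=
      (hasDerivAt_neg z).exp
    have h3 := h2.const_mul q
    have h4 := h1.add h3
    have h5 : HasDerivAt g (p * Real.exp z + q * (Real.exp (-z) * -1)) z := h4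
    convert h5 using 1
    simp only [hGdef]; ring
  have hG : ∀ z, HasDerivAt G (g z) z := by
    intro z
    have h1 : HasDerivAt (fun z : ℝ => p * Real.exp z) (p * Real.exp z) z :=
      (Real.hasDerivAt_exp z).const_mul p
    have h2 : HasDerivAt (fun z : ℝ => Real.exp (-z)) (Real.exp (-z) * (-1)) z :=
      (hasDerivAt_neg z).exp
    have h3 := h2.const_mul q
    have h4 := h1.sub h3
    have h5 : HasDerivAt G (p * Real.exp z - q * (Real.exp (-z) * -1)) z := h4
    convert h5 using 1
    simp only [hgdef]; ring
  set φ : ℝ → ℝ := fun z => (p - q) + z - G z / g z with hφdef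
  have hφ : ∀ z, HasDerivAt φ ((G z / g z) ^ 2) z := by
    intro z
    have hdiv : HasDerivAt (fun z => G z / g z)
        ((g z * g z - G z * G z) / g z ^ 2) z := (hG z).div (hg z) (gpos z).ne'
    have h1 : HasDerivAt (fun z : ℝ => (p - q) + z) 1 z := by
      simpa using (hasDerivAt_id z).const_add (p - q)
    have h5 := h1.sub hdiv
    have heq : 1 - (g z * g z - G z * G z) / g z ^ 2 = (G z / g z) ^ 2 := by
      have hne : g z ≠ 0 := (gpos z).ne'
      field_simp
      ring
    rw [heq] at h5
    exact h5
  have hφmono : Monotone φ := by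
    apply monotone_of_deriv_nonneg (fun z => (hφ z).differentiableAt)
    intro z
    rw [(hφ z).deriv]
    positivity
  have hφ0 : φ 0 = 0 := by
    simp only [hφdef, hGdef, hgdef]
    rw [Real.exp_zero]
    simp [hpq]
  set hfun : ℝ → ℝ := fun z => (p - q) * z + z ^ 2 / 2 - Real.log (g z) with hhdef
  have hh : ∀ z, HasDerivAt hfun (φ z) z := by
    intro z
    have h1 : HasDerivAt (fun z : ℝ => (p - q) * z) (p - q) z := by
      simpa using (hasDerivAt_id z).const_mul (p - q)
    have h2 : HasDerivAt (fun z : ℝ => z ^ 2 / 2) z z := by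
      have := (hasDerivAt_pow 2 z).div_const 2
      norm_num at this
      exact this
    have h3 : HasDerivAt (fun z => Real.log (g z)) (G z / g z) z :=
      (hg z).log (gpos z).ne'
    exact (h1.add h2).sub h3
  have hdiff : Differentiable ℝ hfun := fun z => (hh z).differentiableAt
  have key : ∀ z, 0 ≤ hfun z := by
    intro z
    have h0 : hfun 0 = 0 := by
      simp [hhdef, hgdef, hpq, Real.exp_zero]
    rcases le_total 0 z with hz | hz
    · have hmono : MonotoneOn hfun (Set.Ici 0) := by
        apply monotoneOn_of_deriv_nonneg (convex_Ici 0) hdiff.continuous.continuousOn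
          (hdiff.differentiableOn)
        intro u hu
        rw [interior_Ici] at hu
        rw [(hh u).deriv]
        have : φ 0 ≤ φ u := hφmono (le_of_lt hu)
        linarith [hφ0 ▸ this]
      have := hmono (Set.self_mem_Ici) (Set.mem_Ici.mpr hz) hz
      linarith [h0 ▸ this]
    · have hanti : AntitoneOn hfun (Set.Iic 0) := by
        apply antitoneOn_of_deriv_nonpos (convex_Iic 0) hdiff.continuous.continuousOn
          (hdiff.differentiableOn)
        intro u hu
        rw [interior_Iic] at hu
        rw [(hh u).deriv]
        have : φ u ≤ φ 0 := hφmono (le_of_lt hu)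
        linarith [hφ0 ▸ this]
      have := hanti (Set.mem_Iic.mpr hz) (Set.self_mem_Iic) hz
      linarith [h0 ▸ this]
  have hk := key y
  have hlog : Real.log (g y) ≤ (p - q) * y + y ^ 2 / 2 := by
    simp only [hhdef] at hk; linarith
  have := (Real.log_le_iff_le_exp (gpos y)).mp hlog
  simpa [hgdef] using this

lemma uniform_mgf {ι : Type*} (U : Finset ι) (hU : U.Nonempty) (c : ι → ℝ) (B θ : ℝ)
    (hB : 0 < B) (hc : ∀ i ∈ U, |c i| ≤ B) :
    ∑ i ∈ U, Real.exp (θ * c i) ≤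
      (U.card : ℝ) * Real.exp (θ * ((∑ i ∈ U, c i) / U.card) + θ ^ 2 * B ^ 2 / 2) := by
  set M : ℝ := (U.card : ℝ) with hM
  have hMpos : 0 < M := by
    simp only [hM]
    exact_mod_cast Finset.card_pos.mpr hU
  set S : ℝ := ∑ i ∈ U, c i with hS
  set μ : ℝ := S / M with hμ
  have hμB : |μ| ≤ B := by
    have h1 : |S| ≤ ∑ i ∈ U, |c i| := Finset.abs_sum_le_sum_abs _ _
    have h2 : ∑ i ∈ U, |c i| ≤ ∑ i ∈ U, B := Finset.sum_le_sum hc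
    rw [Finset.sum_const, nsmul_eq_mul] at h2
    rw [hμ, abs_div, abs_of_pos hMpos, div_le_iff₀ hMpos]
    calc |S| ≤ M * B := by rw [hM]; linarith
      _ = B * M := by ring
  -- chord bound for each i
  have chord : ∀ i ∈ U, Real.exp (θ * c i) ≤
      (B - c i) / (2 * B) * Real.exp (-(θ * B)) + (B + c i) / (2 * B) * Real.exp (θ * B) := by
    intro i hi
    have hci := hc i hi
    have ha : (0:ℝ) ≤ (B - c i) / (2 * B) := by
      apply div_nonneg _ (by linarith)
      have := abs_le.mp hci
      linarith [this.2]
    have hb : (0:ℝ) ≤ (B + c i) / (2 * B) := by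
      apply div_nonneg _ (by linarith)
      have := abs_le.mp hci
      linarith [this.1]
    have hab : (B - c i) / (2 * B) + (B + c i) / (2 * B) = 1 := by
      field_simp
      ring
    have := convexOn_exp.2 (Set.mem_univ (-(θ * B))) (Set.mem_univ (θ * B)) ha hb hab
    simp only [smul_eq_mul] at this
    have harg : (B - c i) / (2 * B) * -(θ * B) + (B + c i) / (2 * B) * (θ * B) = θ * c i := by
      field_simp
      ring
    rw [harg] at this
    exact this
  have hsum : ∑ i ∈ U, Real.exp (θ * c i) ≤
      M * ((B - μ) / (2 * B) * Real.exp (-(θ * B)) + (B + μ) / (2 * B) * Real.exp (θ * B)) := by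
    calc ∑ i ∈ U, Real.exp (θ * c i)
        ≤ ∑ i ∈ U, ((B - c i) / (2 * B) * Real.exp (-(θ * B)) +
            (B + c i) / (2 * B) * Real.exp (θ * B)) := Finset.sum_le_sum chord
      _ = (M * B - S) / (2 * B) * Real.exp (-(θ * B)) +
            (M * B + S) / (2 * B) * Real.exp (θ * B) := by
          rw [Finset.sum_add_distrib, ← Finset.sum_mul, ← Finset.sum_mul]
          congr 1
          · congr 1
            rw [← Finset.sum_div, Finset.sum_sub_distrib, Finset.sum_const, nsmul_eq_mul, hS, hM]
          · congr 1
            rw [← Finset.sum_div, Finset.sum_add_distrib, Finset.sum_const, nsmul_eq_mul, hS, hM]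
      _ = M * ((B - μ) / (2 * B) * Real.exp (-(θ * B)) + (B + μ) / (2 * B) * Real.exp (θ * B)) := by
          have hSμ : S = M * μ := by rw [hμ]; field_simp
          rw [hSμ]
          field_simp
  -- apply two_point with p = (B+μ)/(2B), q = (B-μ)/(2B), y = θ*B
  have hmab := abs_le.mp hμB
  have hp : (0:ℝ) ≤ (B + μ) / (2 * B) := by apply div_nonneg _ (by linarith); linarith [hmab.1]
  have hq : (0:ℝ) ≤ (B - μ) / (2 * B) := by apply div_nonneg _ (by linarith); linarith [hmab.2]
  have hpq : (B + μ) / (2 * B) + (B - μ) / (2 * B) = 1 := by field_simp; ring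
  have htp := two_point _ _ hp hq hpq (θ * B)
  have harg2 : ((B + μ) / (2 * B) - (B - μ) / (2 * B)) * (θ * B) + (θ * B) ^ 2 / 2
      = θ * μ + θ ^ 2 * B ^ 2 / 2 := by
    field_simp
    ring
  rw [harg2] at htp
  calc ∑ i ∈ U, Real.exp (θ * c i)
      ≤ M * ((B - μ) / (2 * B) * Real.exp (-(θ * B)) + (B + μ) / (2 * B) * Real.exp (θ * B)) := hsum
    _ ≤ M * Real.exp (θ * μ + θ ^ 2 * B ^ 2 / 2) := by
        apply mul_le_mul_of_nonneg_left _ hMpos.le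
        calc (B - μ) / (2 * B) * Real.exp (-(θ * B)) + (B + μ) / (2 * B) * Real.exp (θ * B)
            = (B + μ) / (2 * B) * Real.exp (θ * B) + (B - μ) / (2 * B) * Real.exp (-(θ * B)) := by
              ring
          _ ≤ Real.exp (θ * μ + θ ^ 2 * B ^ 2 / 2) := htp
    _ = M * Real.exp (θ * ((∑ i ∈ U, c i) / M) + θ ^ 2 * B ^ 2 / 2) := by rw [← hS, ← hμ]

lemma powersetCard_succ_sum {ι : Type*} [DecidableEq ι] (U : Finset ι) (t : ℕ) (G : Finset ι → ℝ) :
    ∑ j ∈ U, ∑ T ∈ (U.erase j).powersetCard t, G (insert j T)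
      = (t + 1 : ℝ) * ∑ T ∈ U.powersetCard (t + 1), G T := by
  have key : ∑ j ∈ U, ∑ T ∈ (U.erase j).powersetCard t, G (insert j T)
      = ∑ T ∈ U.powersetCard (t + 1), ∑ j ∈ T, G T := by
    rw [Finset.sum_sigma', Finset.sum_sigma']
    apply Finset.sum_nbij' (fun p => ⟨insert p.1 p.2, p.1⟩) (fun p => ⟨p.2, p.1.erase p.2⟩)
    · rintro ⟨j, T⟩ hmem
      simp only [Finset.mem_sigma] at hmem ⊢
      obtain ⟨hj, hT⟩ := hmem
      rw [Finset.mem_powersetCard] at hT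
      obtain ⟨hTsub, hTcard⟩ := hT
      have hjT : j ∉ T := fun h => (Finset.mem_erase.mp (hTsub h)).1 rfl
      constructor
      · rw [Finset.mem_powersetCard]
        constructor
        · intro a ha
          rcases Finset.mem_insert.mp ha with h | h
          · rwa [h]
          · exact Finset.mem_of_mem_erase (hTsub h)
        · rw [Finset.card_insert_of_notMem hjT, hTcard]
      · exact Finset.mem_insert_self _ _
    · rintro ⟨T, j⟩ hmem
      simp only [Finset.mem_sigma] at hmem ⊢
      obtain ⟨hT, hj⟩ := hmem
      rw [Finset.mem_powersetCard] at hT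
      obtain ⟨hTsub, hTcard⟩ := hT
      constructor
      · exact hTsub hj
      · rw [Finset.mem_powersetCard]
        constructor
        · intro a ha
          have haT := Finset.mem_of_mem_erase ha
          have hane : a ≠ j := (Finset.mem_erase.mp ha).1
          exact Finset.mem_erase.mpr ⟨hane, hTsub haT⟩
        · rw [Finset.card_erase_of_mem hj, hTcard]
          simp
    · rintro ⟨j, T⟩ hmem
      simp only [Finset.mem_sigma] at hmem
      obtain ⟨hj, hT⟩ := hmem
      rw [Finset.mem_powersetCard] at hT
      have hjT : j ∉ T := fun h => (Finset.mem_erase.mp (hT.1 h)).1 rfl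
      simp [Finset.erase_insert hjT]
    · rintro ⟨T, j⟩ hmem
      simp only [Finset.mem_sigma] at hmem
      simp [Finset.insert_erase hmem.2]
    · rintro ⟨j, T⟩ _
      rfl
  rw [key]
  rw [Finset.mul_sum]
  apply Finset.sum_congr rfl
  intro T hT
  rw [Finset.mem_powersetCard] at hT
  rw [Finset.sum_const, hT.2, nsmul_eq_mul]
  push_cast
  ring

lemma subset_mgf {ι : Type*} [DecidableEq ι] (c : ι → ℝ) (B θ : ℝ) (hB : 0 < B)
    (hc : ∀ i, |c i| ≤ B) :
    ∀ (t : ℕ) (U : Finset ι), t ≤ U.card →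
      ∑ T ∈ U.powersetCard t, Real.exp (θ * ∑ j ∈ T, c j) ≤
        (U.card.choose t : ℝ) *
          Real.exp (θ * t * ((∑ j ∈ U, c j) / U.card) + t * (θ ^ 2 * B ^ 2 / 2)) := by
  intro t
  induction t with
  | zero =>
    intro U _
    simp [Finset.powersetCard_zero]
  | succ t ih =>
    intro U hU
    have hUpos : 0 < U.card := lt_of_lt_of_le (Nat.succ_pos t) hU
    have hUne : U.Nonempty := Finset.card_pos.mp hUpos
    set M : ℕ := U.card with hMdef
    set S : ℝ := ∑ j ∈ U, c j with hSdef
    set Q : ℝ := θ ^ 2 * B ^ 2 / 2 with hQdef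
    have hQ0 : 0 ≤ Q := by positivity
    rcases eq_or_lt_of_le hU with hM1 | hM2
    · -- t + 1 = M
      -- powersetCard M U = {U}
      have : U.powersetCard (t+1) = {U} := by
        rw [hM1, hMdef]
        exact Finset.powersetCard_self U
      rw [this, Finset.sum_singleton, ← hM1, Nat.choose_self, Nat.cast_one, one_mul]
      apply Real.exp_le_exp.mpr
      push_cast
      have h1 : θ * ((t:ℝ)+1) * (S / ((t:ℝ)+1)) = θ * S := by
        field_simp
      rw [h1]
      nlinarith [hQ0]
    · -- t + 1 < M
      set Mr : ℝ := (M : ℝ) with hMr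
      have hM2' : 2 ≤ M := by omega
      have hMr2 : (2:ℝ) ≤ Mr := by rw [hMr]; exact_mod_cast hM2'
      have hMr1pos : (0:ℝ) < Mr - 1 := by linarith
      have hMrpos : (0:ℝ) < Mr := by linarith
      set α : ℝ := (Mr - 1 - t) / (Mr - 1) with hα
      have htM : (t : ℝ) ≤ Mr - 2 := by
        have h2 : t + 2 ≤ M := hM2
        have h3 := (Nat.cast_le (α := ℝ)).mpr h2
        push_cast at h3
        linarith
      have hα0 : 0 ≤ α := by
        apply div_nonneg _ hMr1pos.le
        linarith
      have hα1 : α ≤ 1 := by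
        rw [div_le_one hMr1pos]
        have : (0:ℝ) ≤ t := Nat.cast_nonneg t
        linarith
      set C1 : ℝ := ((M - 1).choose t : ℝ) with hC1
      have hC10 : 0 ≤ C1 := by positivity
      have hcastM : ((M - 1 : ℕ) : ℝ) = Mr - 1 := by
        have h4 : 1 ≤ M := hUpos
        push_cast [h4]
        ring
      have hcerase : ∀ j ∈ U, (U.erase j).card = M - 1 := fun j hj =>
        Finset.card_erase_of_mem hj
      have key := powersetCard_succ_sum U t (fun T => Real.exp (θ * ∑ j ∈ T, c j))
      have main : ((t:ℝ) + 1) * ∑ T ∈ U.powersetCard (t+1), Real.exp (θ * ∑ j ∈ T, c j)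
          ≤ ((t:ℝ) + 1) * ((M.choose (t+1) : ℝ) *
              Real.exp (θ * ((t:ℝ)+1) * (S / Mr) + ((t:ℝ)+1) * Q)) := by
        rw [← key]
        have step1 : ∀ j ∈ U, ∑ T ∈ (U.erase j).powersetCard t,
            Real.exp (θ * ∑ i ∈ insert j T, c i)
            = Real.exp (θ * c j) * ∑ T ∈ (U.erase j).powersetCard t,
                Real.exp (θ * ∑ i ∈ T, c i) := by
          intro j hj
          rw [Finset.mul_sum]
          apply Finset.sum_congr rfl
          intro T hT
          rw [Finset.mem_powersetCard] at hT
          have hjT : j ∉ T := fun h => (Finset.mem_erase.mp (hT.1 h)).1 rfl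
          rw [Finset.sum_insert hjT, mul_add, Real.exp_add]
        have step2 : ∀ j ∈ U, ∑ T ∈ (U.erase j).powersetCard t,
            Real.exp (θ * ∑ i ∈ T, c i)
            ≤ C1 * Real.exp (θ * t * ((S - c j) / (Mr - 1)) + t * Q) := by
          intro j hj
          have hle : t ≤ (U.erase j).card := by
            rw [hcerase j hj]; omega
          have h5 := ih (U.erase j) hle
          rw [hcerase j hj, hcastM, Finset.sum_erase_eq_sub hj] at h5
          exact h5
        calc ∑ j ∈ U, ∑ T ∈ (U.erase j).powersetCard t, Real.exp (θ * ∑ i ∈ insert j T, c i)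
            = ∑ j ∈ U, Real.exp (θ * c j) * ∑ T ∈ (U.erase j).powersetCard t,
                Real.exp (θ * ∑ i ∈ T, c i) := Finset.sum_congr rfl step1
          _ ≤ ∑ j ∈ U, Real.exp (θ * c j) *
                (C1 * Real.exp (θ * t * ((S - c j) / (Mr - 1)) + t * Q)) := by
              apply Finset.sum_le_sum
              intro j hj
              exact mul_le_mul_of_nonneg_left (step2 j hj) (Real.exp_pos _).le
          _ = C1 * Real.exp ((t:ℝ) * Q) * Real.exp (θ * t * (S / (Mr - 1)))
                * ∑ j ∈ U, Real.exp ((θ * α) * c j) := by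
              rw [Finset.mul_sum]
              apply Finset.sum_congr rfl
              intro j hj
              have h6 : θ * c j + (θ * (t:ℝ) * ((S - c j) / (Mr - 1)) + (t:ℝ) * Q)
                  = (t:ℝ) * Q + (θ * (t:ℝ) * (S / (Mr - 1)) + (θ * α) * c j) := by
                rw [hα]
                field_simp
                ring
              calc Real.exp (θ * c j) * (C1 * Real.exp (θ * (t:ℝ) * ((S - c j) / (Mr - 1)) + (t:ℝ) * Q))
                  = C1 * (Real.exp (θ * c j) *
                      Real.exp (θ * (t:ℝ) * ((S - c j) / (Mr - 1)) + (t:ℝ) * Q)) := by ring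
                _ = C1 * Real.exp (θ * c j + (θ * (t:ℝ) * ((S - c j) / (Mr - 1)) + (t:ℝ) * Q)) := by
                    rw [← Real.exp_add]
                _ = C1 * Real.exp ((t:ℝ) * Q + (θ * (t:ℝ) * (S / (Mr - 1)) + (θ * α) * c j)) := by
                    rw [h6]
                _ = C1 * Real.exp ((t:ℝ) * Q) * Real.exp (θ * (t:ℝ) * (S / (Mr - 1)))
                      * Real.exp ((θ * α) * c j) := by
                    rw [Real.exp_add, Real.exp_add]; ring
          _ ≤ C1 * Real.exp ((t:ℝ) * Q) * Real.exp (θ * t * (S / (Mr - 1)))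
                * (Mr * Real.exp ((θ * α) * (S / Mr) + (θ * α) ^ 2 * B ^ 2 / 2)) := by
              apply mul_le_mul_of_nonneg_left _ (by positivity)
              have h7 := uniform_mgf U hUne c B (θ * α) hB (fun i _ => hc i)
              rw [← hSdef, ← hMr] at h7
              exact h7
          _ ≤ C1 * Real.exp ((t:ℝ) * Q) * Real.exp (θ * t * (S / (Mr - 1)))
                * (Mr * Real.exp ((θ * α) * (S / Mr) + Q)) := by
              apply mul_le_mul_of_nonneg_left _ (by positivity)
              apply mul_le_mul_of_nonneg_left _ hMrpos.le
              apply Real.exp_le_exp.mpr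
              have h8 : (θ * α) ^ 2 * B ^ 2 / 2 ≤ Q := by
                rw [hQdef]
                have hB2 : (0:ℝ) ≤ B ^ 2 := sq_nonneg B
                have hα2 : α ^ 2 ≤ 1 := by nlinarith
                have h9 : (θ * α) ^ 2 ≤ θ ^ 2 := by
                  calc (θ * α) ^ 2 = θ ^ 2 * α ^ 2 := by ring
                    _ ≤ θ ^ 2 * 1 := mul_le_mul_of_nonneg_left hα2 (sq_nonneg θ)
                    _ = θ ^ 2 := by ring
                have h10 := mul_le_mul_of_nonneg_right h9 hB2
                linarith
              linarith
          _ = ((t:ℝ) + 1) * ((M.choose (t+1) : ℝ) *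
                Real.exp (θ * ((t:ℝ)+1) * (S / Mr) + ((t:ℝ)+1) * Q)) := by
              have hch : Mr * C1 = ((t:ℝ) + 1) * (M.choose (t+1) : ℝ) := by
                have h := Nat.add_one_mul_choose_eq (M - 1) t
                have hsucc : M - 1 + 1 = M := Nat.succ_pred_eq_of_pos hUpos
                rw [hsucc] at h
                have h10 := congrArg (fun k : ℕ => (k : ℝ)) h
                push_cast at h10
                rw [hMr, hC1]
                push_cast
                linarith [h10]
              have hexp : (t:ℝ) * Q + (θ * t * (S / (Mr - 1)) + ((θ * α) * (S / Mr) + Q))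
                  = θ * ((t:ℝ)+1) * (S / Mr) + ((t:ℝ)+1) * Q := by
                rw [hα]
                field_simp
                ring
              calc C1 * Real.exp ((t:ℝ) * Q) * Real.exp (θ * t * (S / (Mr - 1))) *
                    (Mr * Real.exp ((θ * α) * (S / Mr) + Q))
                  = (Mr * C1) * (Real.exp ((t:ℝ) * Q) * (Real.exp (θ * t * (S / (Mr - 1))) *
                      Real.exp ((θ * α) * (S / Mr) + Q))) := by ring
                _ = (Mr * C1) * Real.exp ((t:ℝ) * Q + (θ * t * (S / (Mr - 1)) +
                      ((θ * α) * (S / Mr) + Q))) := by rw [← Real.exp_add, ← Real.exp_add]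
                _ = ((t:ℝ) + 1) * ((M.choose (t+1) : ℝ) *
                      Real.exp (θ * ((t:ℝ)+1) * (S / Mr) + ((t:ℝ)+1) * Q)) := by
                    rw [hch, hexp]
                    ring
      have htpos : (0:ℝ) < (t:ℝ) + 1 := by positivity
      have hfin := (mul_le_mul_iff_right₀ htpos).mp main
      push_cast
      exact hfin

lemma tail_one_sided {ι : Type*} [DecidableEq ι] (c : ι → ℝ) (B : ℝ) (hB : 0 < B)
    (hc : ∀ i, |c i| ≤ B) (t : ℕ) (htpos : 0 < t) (U : Finset ι) (htU : t ≤ U.card)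
    (δ : ℝ) (hδ : 0 < δ) :
    (((U.powersetCard t).filter (fun T =>
        (t : ℝ) * ((∑ j ∈ U, c j) / U.card) + δ < ∑ j ∈ T, c j)).card : ℝ)
      ≤ Real.exp (-δ ^ 2 / (2 * t * B ^ 2)) * (U.card.choose t : ℝ) := by
  set μ : ℝ := (∑ j ∈ U, c j) / U.card with hμ
  set θ : ℝ := δ / (t * B ^ 2) with hθ
  have htr : (0:ℝ) < t := by exact_mod_cast htpos
  have hθpos : 0 < θ := by rw [hθ]; positivity
  have hcount : (((U.powersetCard t).filter (fun T =>
      (t : ℝ) * μ + δ < ∑ j ∈ T, c j)).card : ℝ)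
      ≤ ∑ T ∈ U.powersetCard t, Real.exp (θ * ((∑ j ∈ T, c j) - ((t : ℝ) * μ + δ))) := by
    calc (((U.powersetCard t).filter (fun T =>
        (t : ℝ) * μ + δ < ∑ j ∈ T, c j)).card : ℝ)
        = ∑ T ∈ (U.powersetCard t).filter (fun T =>
            (t : ℝ) * μ + δ < ∑ j ∈ T, c j), (1:ℝ) := by
          rw [Finset.sum_const, nsmul_eq_mul, mul_one]
      _ ≤ ∑ T ∈ (U.powersetCard t).filter (fun T =>
            (t : ℝ) * μ + δ < ∑ j ∈ T, c j),
            Real.exp (θ * ((∑ j ∈ T, c j) - ((t : ℝ) * μ + δ))) := by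
          apply Finset.sum_le_sum
          intro T hT
          rw [Finset.mem_filter] at hT
          apply Real.one_le_exp
          have := hT.2
          have harg : 0 ≤ (∑ j ∈ T, c j) - ((t : ℝ) * μ + δ) := by linarith
          positivity
      _ ≤ ∑ T ∈ U.powersetCard t,
            Real.exp (θ * ((∑ j ∈ T, c j) - ((t : ℝ) * μ + δ))) := by
          apply Finset.sum_le_sum_of_subset_of_nonneg (Finset.filter_subset _ _)
          intro T _ _
          positivity
  have hmgf := subset_mgf c B θ hB hc t U htU
  have hsplit : ∑ T ∈ U.powersetCard t,
      Real.exp (θ * ((∑ j ∈ T, c j) - ((t : ℝ) * μ + δ)))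
      = Real.exp (-(θ * ((t : ℝ) * μ + δ))) *
          ∑ T ∈ U.powersetCard t, Real.exp (θ * ∑ j ∈ T, c j) := by
    rw [Finset.mul_sum]
    apply Finset.sum_congr rfl
    intro T _
    rw [← Real.exp_add]
    congr 1
    ring
  have hfinal : Real.exp (-(θ * ((t : ℝ) * μ + δ))) *
      ((U.card.choose t : ℝ) * Real.exp (θ * t * μ + t * (θ ^ 2 * B ^ 2 / 2)))
      = Real.exp (-δ ^ 2 / (2 * t * B ^ 2)) * (U.card.choose t : ℝ) := by
    have hee : -(θ * ((t : ℝ) * μ + δ)) + (θ * t * μ + t * (θ ^ 2 * B ^ 2 / 2))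
        = -δ ^ 2 / (2 * t * B ^ 2) := by
      rw [hθ]
      field_simp
      ring
    rw [show Real.exp (-(θ * ((t : ℝ) * μ + δ))) *
        ((U.card.choose t : ℝ) * Real.exp (θ * t * μ + t * (θ ^ 2 * B ^ 2 / 2)))
        = (U.card.choose t : ℝ) * (Real.exp (-(θ * ((t : ℝ) * μ + δ))) *
            Real.exp (θ * t * μ + t * (θ ^ 2 * B ^ 2 / 2))) from by ring,
      ← Real.exp_add, hee]
    ring
  calc (((U.powersetCard t).filter (fun T =>
      (t : ℝ) * μ + δ < ∑ j ∈ T, c j)).card : ℝ)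
      ≤ ∑ T ∈ U.powersetCard t,
          Real.exp (θ * ((∑ j ∈ T, c j) - ((t : ℝ) * μ + δ))) := hcount
    _ = Real.exp (-(θ * ((t : ℝ) * μ + δ))) *
          ∑ T ∈ U.powersetCard t, Real.exp (θ * ∑ j ∈ T, c j) := hsplit
    _ ≤ Real.exp (-(θ * ((t : ℝ) * μ + δ))) *
          ((U.card.choose t : ℝ) * Real.exp (θ * t * μ + t * (θ ^ 2 * B ^ 2 / 2))) := by
        apply mul_le_mul_of_nonneg_left hmgf (Real.exp_pos _).le
    _ = Real.exp (-δ ^ 2 / (2 * t * B ^ 2)) * (U.card.choose t : ℝ) := hfinal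

lemma tail_two_sided {ι : Type*} [DecidableEq ι] (c : ι → ℝ) (B : ℝ) (hB : 0 < B)
    (hc : ∀ i, |c i| ≤ B) (t : ℕ) (htpos : 0 < t) (U : Finset ι) (htU : t ≤ U.card)
    (δ : ℝ) (hδ : 0 < δ) :
    (((U.powersetCard t).filter (fun T =>
        δ < |(∑ j ∈ T, c j) - (t : ℝ) * ((∑ j ∈ U, c j) / U.card)|)).card : ℝ)
      ≤ 2 * Real.exp (-δ ^ 2 / (2 * t * B ^ 2)) * (U.card.choose t : ℝ) := by
  set μ : ℝ := (∑ j ∈ U, c j) / U.card with hμ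
  have hsub : (U.powersetCard t).filter (fun T =>
      δ < |(∑ j ∈ T, c j) - (t : ℝ) * μ|)
      ⊆ ((U.powersetCard t).filter (fun T => (t : ℝ) * μ + δ < ∑ j ∈ T, c j))
        ∪ ((U.powersetCard t).filter (fun T =>
            (t : ℝ) * ((∑ j ∈ U, (-c) j) / U.card) + δ < ∑ j ∈ T, (-c) j)) := by
    intro T hT
    rw [Finset.mem_filter] at hT
    obtain ⟨hT1, hT2⟩ := hT
    rw [Finset.mem_union, Finset.mem_filter, Finset.mem_filter]
    rcases lt_abs.mp hT2 with h | h
    · left; exact ⟨hT1, by linarith⟩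
    · right
      refine ⟨hT1, ?_⟩
      have hnegsum : ∑ j ∈ U, (-c) j = -(∑ j ∈ U, c j) := by
        simp [Finset.sum_neg_distrib]
      have hnegT : ∑ j ∈ T, (-c) j = -(∑ j ∈ T, c j) := by
        simp [Finset.sum_neg_distrib]
      rw [hnegsum, hnegT]
      rw [neg_div, mul_neg]
      linarith
  have h1 := tail_one_sided c B hB hc t htpos U htU δ hδ
  have h2 := tail_one_sided (-c) B hB (fun i => by simpa using hc i) t htpos U htU δ hδ
  calc (((U.powersetCard t).filter (fun T =>
      δ < |(∑ j ∈ T, c j) - (t : ℝ) * μ|)).card : ℝ)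
      ≤ ((((U.powersetCard t).filter (fun T => (t : ℝ) * μ + δ < ∑ j ∈ T, c j))
          ∪ ((U.powersetCard t).filter (fun T =>
              (t : ℝ) * ((∑ j ∈ U, (-c) j) / U.card) + δ < ∑ j ∈ T, (-c) j))).card : ℝ) := by
        exact_mod_cast Finset.card_le_card hsub
    _ ≤ (((U.powersetCard t).filter (fun T => (t : ℝ) * μ + δ < ∑ j ∈ T, c j)).card : ℝ)
        + (((U.powersetCard t).filter (fun T =>
            (t : ℝ) * ((∑ j ∈ U, (-c) j) / U.card) + δ < ∑ j ∈ T, (-c) j)).card : ℝ) := by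
        exact_mod_cast Finset.card_union_le _ _
    _ ≤ Real.exp (-δ ^ 2 / (2 * t * B ^ 2)) * (U.card.choose t : ℝ)
        + Real.exp (-δ ^ 2 / (2 * t * B ^ 2)) * (U.card.choose t : ℝ) := add_le_add h1 h2
    _ = 2 * Real.exp (-δ ^ 2 / (2 * t * B ^ 2)) * (U.card.choose t : ℝ) := by ring

lemma tail_fin {k : ℕ} (c : Fin k → ℝ) (B : ℝ) (hB : 0 < B) (hc : ∀ i, |c i| ≤ B)
    (u : ℕ) (hu : 0 < u) (huk : u ≤ k) (δ : ℝ) (hδ : 0 < δ) :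
    ((((Finset.univ : Finset (Fin k)).powersetCard u).filter (fun T =>
        δ < |(∑ j ∈ T, c j) - (u : ℝ) * ((∑ j, c j) / (k : ℝ))|)).card : ℝ)
      ≤ 2 * Real.exp (-δ ^ 2 / (2 * u * B ^ 2)) * (k.choose u : ℝ) := by
  have h := tail_two_sided c B hB hc u hu Finset.univ
    (by simpa using huk) δ hδ
  simpa using h

end SamplingAux
set_option maxHeartbeats 2000000 in
/-- Random-sampling concentration. For a uniformly random `t`-subset `T` of the
hidden nodes and an independent uniformly random `s`-subset `S` of the input nodes, for any
fixed `x`, the scaled sampled output `(mn/(st))·wᵀ·relu(TASx)` differs from `wᵀ·relu(Ax)` by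
more than `(1/16)·ε·n·m` with probability at most `λ`. -/
theorem sampling_concentration (n m : ℕ) (ε lam : ℝ)
    (hε1 : 0 < ε) (hε2 : ε < 1 / 2) (hl1 : 0 < lam) (hl2 : lam < 1 / 2)
    (w : Fin m → ℝ) (A : Matrix (Fin m) (Fin n) ℝ)
    (hw : ∀ j, |w j| ≤ 1) (hA : ∀ j i, |A j i| ≤ 1)
    (t s : ℕ)
    (ht : 2048 * Real.log (4 / lam) / ε ^ 2 ≤ t)
    (hs : 2048 * Real.log (4 * t / lam) / ε ^ 2 ≤ s)
    (x : Fin n → Bool) :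
    let Ω : Finset (Finset (Fin m) × Finset (Fin n)) :=
      ((Finset.univ : Finset (Fin m)).powersetCard t) ×ˢ
        ((Finset.univ : Finset (Fin n)).powersetCard s)
    ((Ω.filter (fun TS : Finset (Fin m) × Finset (Fin n) =>
        (1 / 16) * ε * n * m <
          |((m : ℝ) * n / ((s : ℝ) * t)) * netVal (samplM TS.1 * A * samplM TS.2) w (bv x)
            - netVal A w (bv x)|)).card : ℝ)
      ≤ lam * (Ω.card : ℝ) := by
  classical
  intro Ω
  have hΩ : Ω = ((Finset.univ : Finset (Fin m)).powersetCard t) ×ˢ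
      ((Finset.univ : Finset (Fin n)).powersetCard s) := rfl
  rw [hΩ]
  -- basic positivity facts
  have hlam4 : (1:ℝ) < 4 / lam := by
    rw [lt_div_iff₀ hl1]; linarith
  have hL1 : 0 < Real.log (4 / lam) := Real.log_pos hlam4
  have hε2pos : (0:ℝ) < ε ^ 2 := by positivity
  have htr0 : (0:ℝ) < t := lt_of_lt_of_le (by positivity) ht
  have htpos : 0 < t := by exact_mod_cast htr0
  have htr1 : (1:ℝ) ≤ t := by exact_mod_cast htpos
  have hlam4t : (1:ℝ) < 4 * t / lam := by
    rw [lt_div_iff₀ hl1]; nlinarith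
  have hL2 : 0 < Real.log (4 * t / lam) := Real.log_pos hlam4t
  have hsr0 : (0:ℝ) < s := lt_of_lt_of_le (by positivity) hs
  have hspos : 0 < s := by exact_mod_cast hsr0
  by_cases htm : t ≤ m
  swap
  · have h1 : (Finset.univ : Finset (Fin m)).powersetCard t = ∅ :=
      Finset.powersetCard_eq_empty.mpr (by simpa using Nat.lt_of_not_le htm)
    rw [h1, Finset.empty_product]
    simp
  by_cases hsn : s ≤ n
  swap
  · have h1 : (Finset.univ : Finset (Fin n)).powersetCard s = ∅ :=
      Finset.powersetCard_eq_empty.mpr (by simpa using Nat.lt_of_not_le hsn)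
    rw [h1, Finset.product_empty]
    simp
  have hm1 : 0 < m := lt_of_lt_of_le htpos htm
  have hn1 : 0 < n := lt_of_lt_of_le hspos hsn
  have hNr : (0:ℝ) < n := by exact_mod_cast hn1
  have hRr : (0:ℝ) < m := by exact_mod_cast hm1
  set c2 : Fin m → Fin n → ℝ := fun j i => A j i * bv x i with hc2
  set f : Fin m → ℝ := fun j => w j * relu (∑ i, c2 j i) with hf
  have hbv : ∀ i, |bv x i| ≤ 1 := by
    intro i; unfold bv; split <;> norm_num
  have hc2abs : ∀ j i, |c2 j i| ≤ 1 := by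
    intro j i
    calc |c2 j i| = |A j i| * |bv x i| := abs_mul _ _
      _ ≤ 1 * 1 := mul_le_mul (hA j i) (hbv i) (abs_nonneg _) zero_le_one
      _ = 1 := mul_one 1
  have hfabs : ∀ j, |f j| ≤ (n:ℝ) := by
    intro j
    calc |f j| = |w j| * |relu (∑ i, c2 j i)| := abs_mul _ _
      _ ≤ 1 * |∑ i, c2 j i| :=
          mul_le_mul (hw j) (SamplingAux.relu_abs_le _) (abs_nonneg _) zero_le_one
      _ = |∑ i, c2 j i| := one_mul _
      _ ≤ ∑ i, |c2 j i| := Finset.abs_sum_le_sum_abs _ _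
      _ ≤ ∑ _i : Fin n, (1:ℝ) := Finset.sum_le_sum (fun i _ => hc2abs j i)
      _ = n := by simp
  set δ1 : ℝ := 1/32 * ε * n * t with hδ1
  set δ2 : ℝ := 1/32 * ε * s with hδ2
  have hδ1pos : 0 < δ1 := by rw [hδ1]; positivity
  have hδ2pos : 0 < δ2 := by rw [hδ2]; positivity
  -- tail bounds
  have h1 := SamplingAux.tail_fin f (n:ℝ) hNr hfabs t htpos htm δ1 hδ1pos
  have h2 : ∀ j : Fin m, ((((Finset.univ : Finset (Fin n)).powersetCard s).filter (fun S =>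
      δ2 < |(∑ i ∈ S, c2 j i) - (s:ℝ) * ((∑ i, c2 j i) / (n:ℝ))|)).card : ℝ)
      ≤ 2 * Real.exp (-δ2 ^ 2 / (2 * s * (1:ℝ) ^ 2)) * (n.choose s : ℝ) := fun j =>
    SamplingAux.tail_fin (c2 j) 1 one_pos (hc2abs j) s hspos hsn δ2 hδ2pos
  -- exponential bounds
  have hexp1 : Real.exp (-δ1 ^ 2 / (2 * t * (n:ℝ) ^ 2)) ≤ lam / 4 := by
    have hlog : Real.log (lam / 4) = -Real.log (4 / lam) := by
      rw [show lam / 4 = (4 / lam)⁻¹ by rw [inv_div], Real.log_inv]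
    have heq : δ1 ^ 2 / (2 * (t:ℝ) * (n:ℝ) ^ 2) = ε ^ 2 * (t:ℝ) / 2048 := by
      rw [hδ1]; field_simp; ring
    have hht : 2048 * Real.log (4 / lam) ≤ ε ^ 2 * t := by
      have := (div_le_iff₀ hε2pos).mp ht
      linarith
    have harg : -δ1 ^ 2 / (2 * (t:ℝ) * (n:ℝ) ^ 2) ≤ Real.log (lam / 4) := by
      rw [hlog, neg_div, neg_le_neg_iff, heq]
      linarith
    calc Real.exp (-δ1 ^ 2 / (2 * t * (n:ℝ) ^ 2)) ≤ Real.exp (Real.log (lam / 4)) :=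
        Real.exp_le_exp.mpr harg
      _ = lam / 4 := Real.exp_log (by positivity)
  have hexp2 : Real.exp (-δ2 ^ 2 / (2 * s * (1:ℝ) ^ 2)) ≤ lam / (4 * t) := by
    have hlog : Real.log (lam / (4 * t)) = -Real.log (4 * t / lam) := by
      rw [show lam / (4 * (t:ℝ)) = (4 * (t:ℝ) / lam)⁻¹ by rw [inv_div], Real.log_inv]
    have heq : δ2 ^ 2 / (2 * (s:ℝ) * (1:ℝ) ^ 2) = ε ^ 2 * (s:ℝ) / 2048 := by
      rw [hδ2]; field_simp; ring
    have hhs : 2048 * Real.log (4 * t / lam) ≤ ε ^ 2 * s := by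
      have := (div_le_iff₀ hε2pos).mp hs
      linarith
    have harg : -δ2 ^ 2 / (2 * (s:ℝ) * (1:ℝ) ^ 2) ≤ Real.log (lam / (4 * t)) := by
      rw [hlog, neg_div, neg_le_neg_iff, heq]
      linarith
    calc Real.exp (-δ2 ^ 2 / (2 * s * (1:ℝ) ^ 2)) ≤ Real.exp (Real.log (lam / (4 * t))) :=
        Real.exp_le_exp.mpr harg
      _ = lam / (4 * t) := Real.exp_log (by positivity)
  set pT := (Finset.univ : Finset (Fin m)).powersetCard t with hpT
  set pS := (Finset.univ : Finset (Fin n)).powersetCard s with hpS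
  -- the two events
  set P1 : Finset (Fin m) × Finset (Fin n) → Prop := fun TS =>
    δ1 < |(∑ j ∈ TS.1, f j) - (t:ℝ) * ((∑ j, f j) / (m:ℝ))| with hP1def
  set P2 : Finset (Fin m) × Finset (Fin n) → Prop := fun TS =>
    ∃ j ∈ TS.1, δ2 < |(∑ i ∈ TS.2, c2 j i) - (s:ℝ) * ((∑ i, c2 j i) / (n:ℝ))| with hP2def
  -- deterministic part: main event implies P1 or P2
  have hsub : (pT ×ˢ pS).filter (fun TS : Finset (Fin m) × Finset (Fin n) =>
      (1 / 16) * ε * n * m <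
        |((m : ℝ) * n / ((s : ℝ) * t)) * netVal (samplM TS.1 * A * samplM TS.2) w (bv x)
          - netVal A w (bv x)|)
      ⊆ ((pT ×ˢ pS).filter P1) ∪ ((pT ×ˢ pS).filter P2) := by
    intro TS hTS
    rw [Finset.mem_filter] at hTS
    obtain ⟨hTSΩ, hmain⟩ := hTS
    rw [Finset.mem_union, Finset.mem_filter, Finset.mem_filter]
    by_contra hcon
    push_neg at hcon
    obtain ⟨hcon1, hcon2⟩ := hcon
    have hnP1 := hcon1 hTSΩ
    have hnP2 := hcon2 hTSΩ
    rw [hP1def] at hnP1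
    rw [hP2def] at hnP2
    obtain ⟨T, S⟩ := TS
    simp only at hnP1 hnP2 hmain
    push_neg at hnP1 hnP2
    have hTm : T ∈ pT := (Finset.mem_product.mp hTSΩ).1
    have hSm : S ∈ pS := (Finset.mem_product.mp hTSΩ).2
    have hTcard : T.card = t := (Finset.mem_powersetCard.mp hTm).2
    have hScard : S.card = s := (Finset.mem_powersetCard.mp hSm).2
    set Y : Fin m → ℝ := fun j => ∑ i ∈ S, c2 j i with hY
    set g : Fin m → ℝ := fun j => w j * ((n:ℝ)/(s:ℝ) * relu (Y j)) with hg
    have hVal : netVal (samplM T * A * samplM S) w (bv x) = ∑ j ∈ T, w j * relu (Y j) :=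
      SamplingAux.netVal_sampled A w T S (bv x)
    have hrow : ∀ j ∈ T, |g j - f j| ≤ 1/32 * ε * n := by
      intro j hj
      have e1 : g j - f j = w j * ((n:ℝ)/(s:ℝ) * relu (Y j) - relu (∑ i, c2 j i)) := by
        rw [hg, hf]; ring
      have e2 : (n:ℝ)/(s:ℝ) * relu (Y j) = relu ((n:ℝ)/(s:ℝ) * Y j) :=
        (SamplingAux.relu_smul _ _ (by positivity)).symm
      rw [e1, abs_mul]
      calc |w j| * |(n:ℝ)/(s:ℝ) * relu (Y j) - relu (∑ i, c2 j i)|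
          ≤ 1 * |(n:ℝ)/(s:ℝ) * relu (Y j) - relu (∑ i, c2 j i)| :=
            mul_le_mul_of_nonneg_right (hw j) (abs_nonneg _)
        _ = |relu ((n:ℝ)/(s:ℝ) * Y j) - relu (∑ i, c2 j i)| := by rw [one_mul, e2]
        _ ≤ |(n:ℝ)/(s:ℝ) * Y j - ∑ i, c2 j i| := SamplingAux.relu_lipschitz _ _
        _ = (n:ℝ)/(s:ℝ) * |Y j - (s:ℝ) * ((∑ i, c2 j i) / (n:ℝ))| := by
            rw [show (n:ℝ)/(s:ℝ) * Y j - ∑ i, c2 j i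
                = (n:ℝ)/(s:ℝ) * (Y j - (s:ℝ) * ((∑ i, c2 j i) / (n:ℝ))) by
              field_simp, abs_mul, abs_of_pos (by positivity : (0:ℝ) < (n:ℝ)/(s:ℝ))]
        _ ≤ (n:ℝ)/(s:ℝ) * δ2 :=
            mul_le_mul_of_nonneg_left (hnP2 j hj) (by positivity)
        _ = 1/32 * ε * n := by rw [hδ2]; field_simp
    have hVg : ((m:ℝ) * n / ((s:ℝ) * t)) * ∑ j ∈ T, w j * relu (Y j)
        = (m:ℝ)/(t:ℝ) * ∑ j ∈ T, g j := by
      rw [Finset.mul_sum, Finset.mul_sum]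
      apply Finset.sum_congr rfl
      intro j _
      rw [hg]
      field_simp
    have hsumrow : |∑ j ∈ T, (g j - f j)| ≤ (t:ℝ) * (1/32 * ε * n) := by
      calc |∑ j ∈ T, (g j - f j)| ≤ ∑ j ∈ T, |g j - f j| := Finset.abs_sum_le_sum_abs _ _
        _ ≤ ∑ _j ∈ T, (1/32 * ε * (n:ℝ)) := Finset.sum_le_sum hrow
        _ = T.card * (1/32 * ε * (n:ℝ)) := by rw [Finset.sum_const, nsmul_eq_mul]
        _ = (t:ℝ) * (1/32 * ε * n) := by rw [hTcard]
    have hterm1 : |((m:ℝ) * n / ((s:ℝ) * t)) * netVal (samplM T * A * samplM S) w (bv x)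
        - (m:ℝ)/(t:ℝ) * ∑ j ∈ T, f j| ≤ 1/32 * ε * n * m := by
      rw [hVal, hVg]
      rw [show (m:ℝ)/(t:ℝ) * ∑ j ∈ T, g j - (m:ℝ)/(t:ℝ) * ∑ j ∈ T, f j
          = (m:ℝ)/(t:ℝ) * (∑ j ∈ T, (g j - f j)) by rw [Finset.sum_sub_distrib]; ring]
      rw [abs_mul, abs_of_pos (by positivity : (0:ℝ) < (m:ℝ)/(t:ℝ))]
      calc (m:ℝ)/(t:ℝ) * |∑ j ∈ T, (g j - f j)|
          ≤ (m:ℝ)/(t:ℝ) * ((t:ℝ) * (1/32 * ε * n)) :=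
            mul_le_mul_of_nonneg_left hsumrow (by positivity)
        _ = 1/32 * ε * n * m := by field_simp
    have hterm2 : |(m:ℝ)/(t:ℝ) * ∑ j ∈ T, f j - netVal A w (bv x)| ≤ 1/32 * ε * n * m := by
      have hFe : netVal A w (bv x) = ∑ j, f j := rfl
      rw [hFe]
      rw [show (m:ℝ)/(t:ℝ) * ∑ j ∈ T, f j - ∑ j, f j
          = (m:ℝ)/(t:ℝ) * ((∑ j ∈ T, f j) - (t:ℝ) * ((∑ j, f j) / (m:ℝ))) by
        field_simp]
      rw [abs_mul, abs_of_pos (by positivity : (0:ℝ) < (m:ℝ)/(t:ℝ))]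
      calc (m:ℝ)/(t:ℝ) * |(∑ j ∈ T, f j) - (t:ℝ) * ((∑ j, f j) / (m:ℝ))|
          ≤ (m:ℝ)/(t:ℝ) * δ1 := mul_le_mul_of_nonneg_left hnP1 (by positivity)
        _ = 1/32 * ε * n * m := by rw [hδ1]; field_simp
    have htri := abs_sub_le
      (((m:ℝ) * n / ((s:ℝ) * t)) * netVal (samplM T * A * samplM S) w (bv x))
      ((m:ℝ)/(t:ℝ) * ∑ j ∈ T, f j) (netVal A w (bv x))
    have : |((m:ℝ) * n / ((s:ℝ) * t)) * netVal (samplM T * A * samplM S) w (bv x)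
        - netVal A w (bv x)| ≤ (1/16) * ε * n * m := by linarith
    exact absurd hmain (not_lt.mpr this)
  -- counting
  have hchoosem : (0:ℝ) ≤ (m.choose t : ℝ) := by positivity
  have hchoosen : (0:ℝ) ≤ (n.choose s : ℝ) := by positivity
  have hpTcard : pT.card = m.choose t := by
    rw [hpT, Finset.card_powersetCard, Finset.card_univ, Fintype.card_fin]
  have hpScard : pS.card = n.choose s := by
    rw [hpS, Finset.card_powersetCard, Finset.card_univ, Fintype.card_fin]
  have hcount1 : (((pT ×ˢ pS).filter P1).card : ℝ)
      ≤ lam / 2 * ((m.choose t : ℝ) * (n.choose s : ℝ)) := by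
    have hprod : (pT ×ˢ pS).filter P1
        = (pT.filter (fun T => δ1 < |(∑ j ∈ T, f j) - (t:ℝ) * ((∑ j, f j) / (m:ℝ))|)) ×ˢ pS := by
      ext TS
      rw [Finset.mem_filter, Finset.mem_product, Finset.mem_product, Finset.mem_filter, hP1def]
      tauto
    rw [hprod, Finset.card_product, hpScard]
    push_cast
    calc ((pT.filter (fun T => δ1 < |(∑ j ∈ T, f j) - (t:ℝ) * ((∑ j, f j) / (m:ℝ))|)).card : ℝ)
          * (n.choose s : ℝ)
        ≤ (2 * Real.exp (-δ1 ^ 2 / (2 * t * (n:ℝ) ^ 2)) * (m.choose t : ℝ)) * (n.choose s : ℝ) := by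
          apply mul_le_mul_of_nonneg_right _ hchoosen
          exact h1
      _ ≤ (2 * (lam / 4) * (m.choose t : ℝ)) * (n.choose s : ℝ) := by
          apply mul_le_mul_of_nonneg_right _ hchoosen
          apply mul_le_mul_of_nonneg_right _ hchoosem
          linarith
      _ = lam / 2 * ((m.choose t : ℝ) * (n.choose s : ℝ)) := by ring
  have hrowcount : ∀ j : Fin m, ((pS.filter (fun S =>
      δ2 < |(∑ i ∈ S, c2 j i) - (s:ℝ) * ((∑ i, c2 j i) / (n:ℝ))|)).card : ℝ)
      ≤ lam / (2 * t) * (n.choose s : ℝ) := by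
    intro j
    calc ((pS.filter (fun S =>
        δ2 < |(∑ i ∈ S, c2 j i) - (s:ℝ) * ((∑ i, c2 j i) / (n:ℝ))|)).card : ℝ)
        ≤ 2 * Real.exp (-δ2 ^ 2 / (2 * s * (1:ℝ) ^ 2)) * (n.choose s : ℝ) := h2 j
      _ ≤ 2 * (lam / (4 * t)) * (n.choose s : ℝ) := by
          apply mul_le_mul_of_nonneg_right _ hchoosen
          linarith
      _ = lam / (2 * t) * (n.choose s : ℝ) := by
          field_simp
          ring
  have hcount2 : (((pT ×ˢ pS).filter P2).card : ℝ)
      ≤ lam / 2 * ((m.choose t : ℝ) * (n.choose s : ℝ)) := by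
    have hstep : ((pT ×ˢ pS).filter P2).card
        = ∑ T ∈ pT, (pS.filter (fun S => ∃ j ∈ T,
            δ2 < |(∑ i ∈ S, c2 j i) - (s:ℝ) * ((∑ i, c2 j i) / (n:ℝ))|)).card := by
      rw [Finset.card_filter, Finset.sum_product]
      apply Finset.sum_congr rfl
      intro T _
      rw [Finset.card_filter]
    have hinner : ∀ T ∈ pT, ((pS.filter (fun S => ∃ j ∈ T,
        δ2 < |(∑ i ∈ S, c2 j i) - (s:ℝ) * ((∑ i, c2 j i) / (n:ℝ))|)).card : ℝ)
        ≤ lam / 2 * (n.choose s : ℝ) := by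
      intro T hT
      have hTcard : T.card = t := (Finset.mem_powersetCard.mp hT).2
      have hsubB : pS.filter (fun S => ∃ j ∈ T,
          δ2 < |(∑ i ∈ S, c2 j i) - (s:ℝ) * ((∑ i, c2 j i) / (n:ℝ))|)
          ⊆ T.biUnion (fun j => pS.filter (fun S =>
              δ2 < |(∑ i ∈ S, c2 j i) - (s:ℝ) * ((∑ i, c2 j i) / (n:ℝ))|)) := by
        intro S hS
        rw [Finset.mem_filter] at hS
        obtain ⟨hS1, j, hj, hbad⟩ := hS
        exact Finset.mem_biUnion.mpr ⟨j, hj, Finset.mem_filter.mpr ⟨hS1, hbad⟩⟩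
      calc ((pS.filter (fun S => ∃ j ∈ T,
          δ2 < |(∑ i ∈ S, c2 j i) - (s:ℝ) * ((∑ i, c2 j i) / (n:ℝ))|)).card : ℝ)
          ≤ ((T.biUnion (fun j => pS.filter (fun S =>
              δ2 < |(∑ i ∈ S, c2 j i) - (s:ℝ) * ((∑ i, c2 j i) / (n:ℝ))|))).card : ℝ) := by
            exact_mod_cast Finset.card_le_card hsubB
        _ ≤ ∑ j ∈ T, ((pS.filter (fun S =>
              δ2 < |(∑ i ∈ S, c2 j i) - (s:ℝ) * ((∑ i, c2 j i) / (n:ℝ))|)).card : ℝ) := by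
            exact_mod_cast Finset.card_biUnion_le
        _ ≤ ∑ _j ∈ T, (lam / (2 * t) * (n.choose s : ℝ)) :=
            Finset.sum_le_sum (fun j _ => hrowcount j)
        _ = (t:ℝ) * (lam / (2 * t) * (n.choose s : ℝ)) := by
            rw [Finset.sum_const, hTcard, nsmul_eq_mul]
        _ = lam / 2 * (n.choose s : ℝ) := by
            field_simp
    calc (((pT ×ˢ pS).filter P2).card : ℝ)
        = ∑ T ∈ pT, ((pS.filter (fun S => ∃ j ∈ T,
            δ2 < |(∑ i ∈ S, c2 j i) - (s:ℝ) * ((∑ i, c2 j i) / (n:ℝ))|)).card : ℝ) := by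
          rw [hstep]; push_cast; rfl
      _ ≤ ∑ _T ∈ pT, (lam / 2 * (n.choose s : ℝ)) := Finset.sum_le_sum hinner
      _ = (m.choose t : ℝ) * (lam / 2 * (n.choose s : ℝ)) := by
          rw [Finset.sum_const, hpTcard, nsmul_eq_mul]
      _ = lam / 2 * ((m.choose t : ℝ) * (n.choose s : ℝ)) := by ring
  have hΩcard : (((pT ×ˢ pS).card : ℕ) : ℝ) = (m.choose t : ℝ) * (n.choose s : ℝ) := by
    rw [Finset.card_product, hpTcard, hpScard]
    push_cast
    ring
  have hcard_le : (((pT ×ˢ pS).filter (fun TS : Finset (Fin m) × Finset (Fin n) =>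
      (1 / 16) * ε * n * m <
        |((m : ℝ) * n / ((s : ℝ) * t)) * netVal (samplM TS.1 * A * samplM TS.2) w (bv x)
          - netVal A w (bv x)|)).card : ℝ)
      ≤ (((pT ×ˢ pS).filter P1).card : ℝ) + (((pT ×ˢ pS).filter P2).card : ℝ) := by
    have h := le_trans (Finset.card_le_card hsub) (Finset.card_union_le _ _)
    exact_mod_cast h
  calc (((pT ×ˢ pS).filter (fun TS : Finset (Fin m) × Finset (Fin n) =>
      (1 / 16) * ε * n * m <
        |((m : ℝ) * n / ((s : ℝ) * t)) * netVal (samplM TS.1 * A * samplM TS.2) w (bv x)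
          - netVal A w (bv x)|)).card : ℝ)
      ≤ (((pT ×ˢ pS).filter P1).card : ℝ) + (((pT ×ˢ pS).filter P2).card : ℝ) := hcard_le
    _ ≤ lam / 2 * ((m.choose t : ℝ) * (n.choose s : ℝ))
        + lam / 2 * ((m.choose t : ℝ) * (n.choose s : ℝ)) := add_le_add hcount1 hcount2
    _ = lam * ((m.choose t : ℝ) * (n.choose s : ℝ)) := by ring
    _ = lam * (((pT ×ˢ pS).card : ℕ) : ℝ) := by rw [hΩcard]
end
end

section
/- Let 0 < ε < 1/2 and 0 < λ < 1/2. Let (A, w) be a ReLU network with n input nodes and m hidden layer nodes, let s ≥ 1 and t ≥ 512·ln(2^{s+1}/λ)/ε², and let S be the sampling matrix of a uniformly random s-element subset of {1,…,n} and T the sampling matrix of an independent uniformly random t-element subset of {1,…,m}. (1) If wᵀ·relu(Ax) ≤ 0 for all x ∈ {0,1}^n (i.e., (A, w) computes the constant 0-function), then with probability at least 1 − λ over the choices of S and T it holds that for all x ∈ {0,1}^n: (nm/(st))·wᵀ·relu(T·A·S·x) − (1/16)·ε·n·m < 0. (2) If wᵀ·relu(Ax) > 0 for all x ∈ {0,1}^n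 with x ≠ 0 (i.e., (A, w) computes the OR-function), then with probability at least 1 − λ it holds that for all x ∈ {0,1}^n with x ≠ 0: (nm/(st))·wᵀ·relu(T·A·S·x) + (1/16)·ε·n·m > 0. -/
open scoped Classical
open Finset

noncomputable section

set_option maxHeartbeats 1000000

lemma pow_tangent {X Y : ℝ} (hX : 0 ≤ X) (hY : 0 ≤ Y) (t : ℕ) :
    Y ^ t + (t : ℝ) * Y ^ (t - 1) * (X - Y) ≤ X ^ t := by
  cases t with
  | zero => simp
  | succ k =>
    rcases eq_or_lt_of_le hY with h0 | hYpos
    · cases k with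
      | zero => simp [← h0]
      | succ k' =>
        rw [← h0]
        simp only [Nat.add_sub_cancel]
        rw [zero_pow (by omega : k' + 1 ≠ 0), zero_pow (by omega : k' + 1 + 1 ≠ 0)]
        have : (0:ℝ) ≤ X ^ (k' + 1 + 1) := by positivity
        nlinarith
    · have hd : (-2 : ℝ) ≤ X / Y - 1 := by
        have : 0 ≤ X / Y := div_nonneg hX hYpos.le
        linarith
      have h := one_add_mul_le_pow hd (k + 1)
      have h1 : (1 : ℝ) + (X / Y - 1) = X / Y := by ring
      rw [h1] at h
      have h2 := mul_le_mul_of_nonneg_left h (pow_nonneg hYpos.le (k + 1))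
      rw [div_pow, mul_div_cancel₀ _ (by positivity : Y ^ (k+1) ≠ 0)] at h2
      simp only [Nat.add_sub_cancel]
      push_cast
      calc Y ^ (k+1) + ((k:ℝ)+1) * Y ^ k * (X - Y)
          = Y ^ (k+1) * (1 + ((k:ℝ)+1) * (X / Y - 1)) := by
            field_simp
            ring
        _ ≤ X ^ (k+1) := by push_cast at h2 ⊢; linarith

lemma step_ineq (m' t' : ℕ) (a b : ℝ) (ha : 0 ≤ a) (hb : 0 ≤ b) :
    (m'.choose (t' + 1) : ℝ) * a ^ (t' + 1) + (m'.choose t' : ℝ) * a ^ t' * b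
      ≤ ((m' + 1).choose (t' + 1) : ℝ) * (((m' : ℝ) * a + b) / ((m' : ℝ) + 1)) ^ (t' + 1) := by
  have hm1 : (0 : ℝ) < (m' : ℝ) + 1 := by positivity
  set X : ℝ := ((m' : ℝ) * a + b) / ((m' : ℝ) + 1) with hX
  have hXnn : 0 ≤ X := by positivity
  have key := pow_tangent hXnn ha (t' + 1)
  simp only [Nat.add_sub_cancel] at key
  have hnat := Nat.add_one_mul_choose_eq m' t'
  have hC : ((m' + 1).choose (t' + 1) : ℝ) * ((t' : ℝ) + 1) = ((m' : ℝ) + 1) * (m'.choose t' : ℝ) := by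
    exact_mod_cast congrArg (Nat.cast (R := ℝ)) hnat.symm
  have hP : ((m' + 1).choose (t' + 1) : ℝ) = (m'.choose t' : ℝ) + (m'.choose (t' + 1) : ℝ) := by
    rw [Nat.choose_succ_succ]; push_cast; ring
  have hC2 : ((m'.choose t' : ℝ) + (m'.choose (t' + 1) : ℝ)) * ((t' : ℝ) + 1)
      = ((m' : ℝ) + 1) * (m'.choose t' : ℝ) := by rw [← hP]; exact hC
  have hXa : X - a = (b - a) / ((m' : ℝ) + 1) := by
    rw [hX]; field_simp; ring
  have h2 := mul_le_mul_of_nonneg_left key (Nat.cast_nonneg ((m' + 1).choose (t' + 1)))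
  calc (m'.choose (t' + 1) : ℝ) * a ^ (t' + 1) + (m'.choose t' : ℝ) * a ^ t' * b
      = ((m' + 1).choose (t' + 1) : ℝ) * (a ^ (t' + 1) + ((t' : ℝ) + 1) * a ^ t' * (X - a)) := by
        rw [hXa, hP]
        have hinv : ((m' : ℝ) + 1) * ((m' : ℝ) + 1)⁻¹ = 1 := mul_inv_cancel₀ hm1.ne'
        linear_combination (-(a ^ t' * (b - a)) / ((m' : ℝ) + 1)) * hC2
          + (a ^ t' * (m'.choose t' : ℝ) * (a - b)) * hinv
    _ ≤ ((m' + 1).choose (t' + 1) : ℝ) * X ^ (t' + 1) := by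
        push_cast at h2 ⊢
        linarith

lemma maclaurin {ι : Type*} [DecidableEq ι] (s : Finset ι) :
    ∀ (z : ι → ℝ), (∀ i ∈ s, 0 ≤ z i) → ∀ t : ℕ,
      (∑ T ∈ s.powersetCard t, ∏ j ∈ T, z j) * (s.card : ℝ) ^ t
        ≤ (s.card.choose t : ℝ) * (∑ i ∈ s, z i) ^ t := by
  induction s using Finset.induction_on with
  | empty =>
    intro z _ t
    cases t with
    | zero => simp
    | succ k => simp
  | @insert a s' ha ih =>
    intro z hz t
    have hb : 0 ≤ z a := hz a (mem_insert_self a s')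
    have hz' : ∀ i ∈ s', 0 ≤ z i := fun i hi => hz i (mem_insert_of_mem hi)
    have hS' : 0 ≤ ∑ i ∈ s', z i := Finset.sum_nonneg hz'
    cases t with
    | zero => simp
    | succ t' =>
      -- expand the powersetCard of an insert
      rw [Finset.powersetCard_succ_insert ha]
      have hdisj : Disjoint (s'.powersetCard (t' + 1)) ((s'.powersetCard t').image (insert a)) := by
        rw [Finset.disjoint_left]
        intro T hT hT2
        rw [Finset.mem_image] at hT2
        obtain ⟨U, hU, rfl⟩ := hT2
        have := Finset.mem_powersetCard.mp hT
        exact ha (this.1 (mem_insert_self a U))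
      rw [Finset.sum_union hdisj]
      have himg : ∑ T ∈ (s'.powersetCard t').image (insert a), ∏ j ∈ T, z j
          = z a * ∑ T ∈ s'.powersetCard t', ∏ j ∈ T, z j := by
        rw [Finset.sum_image, Finset.mul_sum]
        · apply Finset.sum_congr rfl
          intro T hT
          have haT : a ∉ T := fun h => ha ((Finset.mem_powersetCard.mp hT).1 h)
          rw [Finset.prod_insert haT]
        · intro T1 h1 T2 h2 heq
          have haT1 : a ∉ T1 := fun h => ha ((Finset.mem_powersetCard.mp h1).1 h)
          have haT2 : a ∉ T2 := fun h => ha ((Finset.mem_powersetCard.mp h2).1 h)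
          have := congrArg (Finset.erase · a) heq
          simpa [Finset.erase_insert haT1, Finset.erase_insert haT2] using this
      rw [himg, Finset.card_insert_of_notMem ha, Finset.sum_insert ha]
      set E1 := ∑ T ∈ s'.powersetCard (t' + 1), ∏ j ∈ T, z j with hE1
      set E2 := ∑ T ∈ s'.powersetCard t', ∏ j ∈ T, z j with hE2
      have hE1nn : 0 ≤ E1 :=
        Finset.sum_nonneg fun T hT => Finset.prod_nonneg fun j hj =>
          hz' j ((Finset.mem_powersetCard.mp hT).1 hj)
      have hE2nn : 0 ≤ E2 :=
        Finset.sum_nonneg fun T hT => Finset.prod_nonneg fun j hj =>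
          hz' j ((Finset.mem_powersetCard.mp hT).1 hj)
      rcases Nat.eq_zero_or_pos s'.card with hm0 | hmpos
      · -- s' is empty
        have hs'e : s' = ∅ := Finset.card_eq_zero.mp hm0
        subst hs'e
        cases t' with
        | zero =>
          have he1 : E1 = 0 := by
            rw [hE1, Finset.powersetCard_eq_empty.mpr (by simp)]
            simp
          have he2 : E2 = 1 := by rw [hE2]; simp
          rw [he1, he2]
          simp
        | succ k =>
          have he1 : E1 = 0 := by
            rw [hE1, Finset.powersetCard_eq_empty.mpr (by simp)]
            simp
          have he2 : E2 = 0 := by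
            rw [hE2, Finset.powersetCard_eq_empty.mpr (by simp)]
            simp
          rw [he1, he2]
          have : (0:ℝ) ≤ (Nat.choose 1 (k + 1 + 1) : ℝ) * (z a + 0) ^ (k + 1 + 1) := by positivity
          simpa using this
      · have hmR : (0 : ℝ) < (s'.card : ℝ) := by exact_mod_cast hmpos
        set M : ℝ := (s'.card : ℝ) with hM
        set S' : ℝ := ∑ i ∈ s', z i with hSd
        set aa : ℝ := S' / M with haa
        have haann : 0 ≤ aa := div_nonneg hS' hmR.le
        have hMa : M * aa = S' := by rw [haa]; field_simp
        have hib1 : E1 ≤ (s'.card.choose (t' + 1) : ℝ) * aa ^ (t' + 1) := by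
          have h := ih z hz' (t' + 1)
          rw [← hE1, ← hSd, show S' = M * aa from hMa.symm, mul_pow] at h
          have h2 : E1 * M ^ (t' + 1) ≤ ((s'.card.choose (t' + 1) : ℝ) * aa ^ (t' + 1)) * M ^ (t' + 1) := by
            calc E1 * M ^ (t' + 1) ≤ (s'.card.choose (t' + 1) : ℝ) * (M ^ (t' + 1) * aa ^ (t' + 1)) := h
              _ = ((s'.card.choose (t' + 1) : ℝ) * aa ^ (t' + 1)) * M ^ (t' + 1) := by ring
          exact le_of_mul_le_mul_right h2 (by positivity)
        have hib2 : E2 ≤ (s'.card.choose t' : ℝ) * aa ^ t' := by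
          have h := ih z hz' t'
          rw [← hE2, ← hSd, show S' = M * aa from hMa.symm, mul_pow] at h
          have h2 : E2 * M ^ t' ≤ ((s'.card.choose t' : ℝ) * aa ^ t') * M ^ t' := by
            calc E2 * M ^ t' ≤ (s'.card.choose t' : ℝ) * (M ^ t' * aa ^ t') := h
              _ = ((s'.card.choose t' : ℝ) * aa ^ t') * M ^ t' := by ring
          exact le_of_mul_le_mul_right h2 (by positivity)
        have step := step_ineq s'.card t' aa (z a) haann hb
        rw [hMa] at step
        have hMp1 : (0:ℝ) < M + 1 := by positivity
        calc (E1 + z a * E2) * ((#s' + 1 : ℕ) : ℝ) ^ (t' + 1)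
            ≤ ((s'.card.choose (t' + 1) : ℝ) * aa ^ (t' + 1)
                + (s'.card.choose t' : ℝ) * aa ^ t' * z a) * ((#s' + 1 : ℕ) : ℝ) ^ (t' + 1) := by
              apply mul_le_mul_of_nonneg_right ?_ (by positivity)
              have : z a * E2 ≤ z a * ((s'.card.choose t' : ℝ) * aa ^ t') :=
                mul_le_mul_of_nonneg_left hib2 hb
              nlinarith
          _ = ((s'.card.choose (t' + 1) : ℝ) * aa ^ (t' + 1)
                + (s'.card.choose t' : ℝ) * aa ^ t' * z a) * (M + 1) ^ (t' + 1) := by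
              push_cast [hM]; ring_nf
          _ ≤ (((s'.card + 1).choose (t' + 1) : ℝ) * ((S' + z a) / (M + 1)) ^ (t' + 1)) * (M + 1) ^ (t' + 1) := by
              apply mul_le_mul_of_nonneg_right step (by positivity)
          _ = ((s'.card + 1).choose (t' + 1) : ℝ) * (S' + z a) ^ (t' + 1) := by
              rw [div_pow, mul_assoc, div_mul_cancel₀ _ (by positivity : (M + 1) ^ (t' + 1) ≠ 0)]
          _ = ((#s' + 1).choose (t' + 1) : ℝ) * (z a + S') ^ (t' + 1) := by
              ring_nf

lemma exp_interp {a c θ : ℝ} (hc : 0 < c) (ha : |a| ≤ c) (hθ : 0 ≤ θ) :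
    Real.exp (θ * a) ≤ (c + a) / (2 * c) * Real.exp (θ * c)
      + (c - a) / (2 * c) * Real.exp (-(θ * c)) := by
  obtain ⟨ha1, ha2⟩ := abs_le.mp ha
  have hp : 0 ≤ (c + a) / (2 * c) := by
    apply div_nonneg (by linarith) (by linarith)
  have hq : 0 ≤ (c - a) / (2 * c) := by
    apply div_nonneg (by linarith) (by linarith)
  have hpq : (c + a) / (2 * c) + (c - a) / (2 * c) = 1 := by
    field_simp
    ring
  have h := convexOn_exp.2 (Set.mem_univ (θ * c)) (Set.mem_univ (-(θ * c))) hp hq hpq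
  simp only [smul_eq_mul] at h
  have harg : (c + a) / (2 * c) * (θ * c) + (c - a) / (2 * c) * -(θ * c) = θ * a := by
    field_simp
    ring
  rwa [harg] at h

lemma chernoff_count {m : ℕ} (hm : 1 ≤ m) (t : ℕ) (a : Fin m → ℝ) (c δ : ℝ)
    (hc : 0 < c) (hδ : 0 < δ) (ha : ∀ j, |a j| ≤ c) (hsum : ∑ j, a j ≤ 0) :
    ((((univ : Finset (Fin m)).powersetCard t).filter
        (fun T => (t : ℝ) * δ ≤ ∑ j ∈ T, a j)).card : ℝ)
      ≤ Real.exp (-(t : ℝ) * δ ^ 2 / (2 * c ^ 2)) * (m.choose t : ℝ) := by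
  classical
  set θ : ℝ := δ / c ^ 2 with hθd
  have hθ : 0 < θ := by positivity
  set P := (univ : Finset (Fin m)).powersetCard t with hP
  set F := P.filter (fun T => (t : ℝ) * δ ≤ ∑ j ∈ T, a j) with hF
  -- step 1 : card * exp(θ t δ) ≤ ∑ exp(θ ∑_T a)
  have key1 : (F.card : ℝ) * Real.exp (θ * ((t : ℝ) * δ))
      ≤ ∑ T ∈ P, Real.exp (θ * ∑ j ∈ T, a j) := by
    calc (F.card : ℝ) * Real.exp (θ * ((t : ℝ) * δ))
        = ∑ _T ∈ F, Real.exp (θ * ((t : ℝ) * δ)) := by rw [Finset.sum_const, nsmul_eq_mul]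
      _ ≤ ∑ T ∈ F, Real.exp (θ * ∑ j ∈ T, a j) := by
          apply Finset.sum_le_sum
          intro T hT
          have hTb := (Finset.mem_filter.mp hT).2
          exact Real.exp_le_exp.mpr (mul_le_mul_of_nonneg_left hTb hθ.le)
      _ ≤ ∑ T ∈ P, Real.exp (θ * ∑ j ∈ T, a j) :=
          Finset.sum_le_sum_of_subset_of_nonneg (Finset.filter_subset _ _)
            (fun _ _ _ => (Real.exp_pos _).le)
  -- step 2 : rewrite as products and apply maclaurin
  have key2 : ∑ T ∈ P, Real.exp (θ * ∑ j ∈ T, a j)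
      = ∑ T ∈ P, ∏ j ∈ T, Real.exp (θ * a j) := by
    apply Finset.sum_congr rfl
    intro T _
    rw [Finset.mul_sum, Real.exp_sum]
  have hmR : (0 : ℝ) < (m : ℝ) := by exact_mod_cast hm
  have mac := maclaurin (univ : Finset (Fin m)) (fun j => Real.exp (θ * a j))
    (fun _ _ => (Real.exp_pos _).le) t
  rw [Finset.card_univ, Fintype.card_fin] at mac
  -- step 3 : bound the sum of exponentials
  have key3 : ∑ j, Real.exp (θ * a j) ≤ (m : ℝ) * Real.exp (θ ^ 2 * c ^ 2 / 2) := by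
    have hsum2 : ∑ j, Real.exp (θ * a j)
        ≤ ∑ j : Fin m, ((c + a j) / (2 * c) * Real.exp (θ * c)
            + (c - a j) / (2 * c) * Real.exp (-(θ * c))) :=
      Finset.sum_le_sum fun j _ => exp_interp hc (ha j) hθ.le
    have hexpand : ∑ j : Fin m, ((c + a j) / (2 * c) * Real.exp (θ * c)
            + (c - a j) / (2 * c) * Real.exp (-(θ * c)))
        = (m : ℝ) * ((Real.exp (θ * c) + Real.exp (-(θ * c))) / 2)
          + (∑ j, a j) / (2 * c) * (Real.exp (θ * c) - Real.exp (-(θ * c))) := by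
      rw [Finset.sum_add_distrib]
      rw [← Finset.sum_mul, ← Finset.sum_mul]
      rw [← Finset.sum_div, ← Finset.sum_div]
      rw [Finset.sum_add_distrib, Finset.sum_sub_distrib]
      rw [Finset.sum_const, Finset.card_univ, Fintype.card_fin, nsmul_eq_mul]
      field_simp
      ring
    have hmono : Real.exp (-(θ * c)) ≤ Real.exp (θ * c) :=
      Real.exp_le_exp.mpr (by nlinarith)
    have hneg : (∑ j, a j) / (2 * c) * (Real.exp (θ * c) - Real.exp (-(θ * c))) ≤ 0 := by
      apply mul_nonpos_of_nonpos_of_nonneg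
      · apply div_nonpos_of_nonpos_of_nonneg hsum (by linarith)
      · linarith
    have hcosh : (Real.exp (θ * c) + Real.exp (-(θ * c))) / 2 ≤ Real.exp (θ ^ 2 * c ^ 2 / 2) := by
      have h1 : Real.cosh (θ * c) ≤ Real.exp ((θ * c) ^ 2 / 2) := Real.cosh_le_exp_half_sq (θ * c)
      rw [Real.cosh_eq] at h1
      calc (Real.exp (θ * c) + Real.exp (-(θ * c))) / 2 ≤ Real.exp ((θ * c) ^ 2 / 2) := h1
        _ = Real.exp (θ ^ 2 * c ^ 2 / 2) := by ring_nf
    calc ∑ j, Real.exp (θ * a j)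
        ≤ (m : ℝ) * ((Real.exp (θ * c) + Real.exp (-(θ * c))) / 2)
          + (∑ j, a j) / (2 * c) * (Real.exp (θ * c) - Real.exp (-(θ * c))) := by
          rw [← hexpand]; exact hsum2
      _ ≤ (m : ℝ) * ((Real.exp (θ * c) + Real.exp (-(θ * c))) / 2) := by linarith
      _ ≤ (m : ℝ) * Real.exp (θ ^ 2 * c ^ 2 / 2) := by
          apply mul_le_mul_of_nonneg_left hcosh hmR.le
  -- combine : E ≤ choose * exp (t θ² c² / 2)
  have hE : ∑ T ∈ P, ∏ j ∈ T, Real.exp (θ * a j)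
      ≤ (m.choose t : ℝ) * Real.exp ((t : ℝ) * (θ ^ 2 * c ^ 2 / 2)) := by
    have h1 : (∑ T ∈ P, ∏ j ∈ T, Real.exp (θ * a j)) * (m : ℝ) ^ t
        ≤ (m.choose t : ℝ) * ((m : ℝ) * Real.exp (θ ^ 2 * c ^ 2 / 2)) ^ t := by
      calc (∑ T ∈ P, ∏ j ∈ T, Real.exp (θ * a j)) * (m : ℝ) ^ t
          ≤ (m.choose t : ℝ) * (∑ j, Real.exp (θ * a j)) ^ t := mac
        _ ≤ (m.choose t : ℝ) * ((m : ℝ) * Real.exp (θ ^ 2 * c ^ 2 / 2)) ^ t := by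
            apply mul_le_mul_of_nonneg_left ?_ (Nat.cast_nonneg _)
            apply pow_le_pow_left₀ (Finset.sum_nonneg fun j _ => (Real.exp_pos _).le) key3
    rw [mul_pow, ← Real.exp_nat_mul] at h1
    have h2 : (∑ T ∈ P, ∏ j ∈ T, Real.exp (θ * a j)) * (m : ℝ) ^ t
        ≤ ((m.choose t : ℝ) * Real.exp ((t : ℝ) * (θ ^ 2 * c ^ 2 / 2))) * (m : ℝ) ^ t := by
      calc (∑ T ∈ P, ∏ j ∈ T, Real.exp (θ * a j)) * (m : ℝ) ^ t
          ≤ (m.choose t : ℝ) * ((m : ℝ) ^ t * Real.exp ((t : ℝ) * (θ ^ 2 * c ^ 2 / 2))) := h1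
        _ = ((m.choose t : ℝ) * Real.exp ((t : ℝ) * (θ ^ 2 * c ^ 2 / 2))) * (m : ℝ) ^ t := by ring
    exact le_of_mul_le_mul_right h2 (by positivity)
  -- final computation
  have final : (F.card : ℝ) * Real.exp (θ * ((t : ℝ) * δ))
      ≤ (m.choose t : ℝ) * Real.exp ((t : ℝ) * (θ ^ 2 * c ^ 2 / 2)) := by
    calc (F.card : ℝ) * Real.exp (θ * ((t : ℝ) * δ)) ≤ ∑ T ∈ P, Real.exp (θ * ∑ j ∈ T, a j) := key1
      _ = ∑ T ∈ P, ∏ j ∈ T, Real.exp (θ * a j) := key2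
      _ ≤ _ := hE
  have hepos : (0 : ℝ) < Real.exp (θ * ((t : ℝ) * δ)) := Real.exp_pos _
  rw [← le_div_iff₀ hepos] at final
  calc (F.card : ℝ) ≤ (m.choose t : ℝ) * Real.exp ((t : ℝ) * (θ ^ 2 * c ^ 2 / 2))
        / Real.exp (θ * ((t : ℝ) * δ)) := final
    _ = Real.exp (-(t : ℝ) * δ ^ 2 / (2 * c ^ 2)) * (m.choose t : ℝ) := by
        rw [mul_div_assoc, ← Real.exp_sub]
        rw [mul_comm]
        congr 1
        rw [hθd]
        field_simp
        ring

lemma sampled_eq {m n : ℕ} (A : Matrix (Fin m) (Fin n) ℝ) (w : Fin m → ℝ)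
    (S : Finset (Fin n)) (T : Finset (Fin m)) (x : Fin n → Bool) :
    netVal (samplM T * A * samplM S) w (bv x)
      = ∑ j ∈ T, w j * relu (∑ i, A j i * bv (fun i => x i && decide (i ∈ S)) i) := by
  have hentry : ∀ (j : Fin m) (i : Fin n), (samplM T * A * samplM S) j i
      = (if j ∈ T then (1 : ℝ) else 0) * (A j i * (if i ∈ S then (1 : ℝ) else 0)) := by
    intro j i
    rw [samplM, samplM, Matrix.mul_diagonal, Matrix.diagonal_mul, mul_assoc]
  have hin : ∀ (j : Fin m) (i : Fin n),
      A j i * ((if i ∈ S then (1 : ℝ) else 0) * bv x i)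
        = A j i * bv (fun i => x i && decide (i ∈ S)) i := by
    intro j i
    by_cases hiS : i ∈ S <;> by_cases hx : x i <;> simp [bv, hiS, hx]
  unfold netVal
  have hterm : ∀ j : Fin m, w j * relu (∑ i, (samplM T * A * samplM S) j i * bv x i)
      = if j ∈ T then w j * relu (∑ i, A j i * bv (fun i => x i && decide (i ∈ S)) i) else 0 := by
    intro j
    by_cases hj : j ∈ T
    · simp only [hj, if_true]
      congr 2
      apply Finset.sum_congr rfl
      intro i _
      rw [hentry, if_pos hj, one_mul, mul_assoc]
      exact hin j i
    · simp only [hj, if_false]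
      have : ∑ i, (samplM T * A * samplM S) j i * bv x i = 0 := by
        apply Finset.sum_eq_zero
        intro i _
        rw [hentry]
        simp [hj]
      rw [this]
      simp [relu]
  calc ∑ j, w j * relu (∑ i, (samplM T * A * samplM S) j i * bv x i)
      = ∑ j, if j ∈ T then w j * relu (∑ i, A j i * bv (fun i => x i && decide (i ∈ S)) i) else 0 :=
        Finset.sum_congr rfl fun j _ => hterm j
    _ = ∑ j ∈ univ ∩ T, w j * relu (∑ i, A j i * bv (fun i => x i && decide (i ∈ S)) i) :=
        Finset.sum_ite_mem _ _ _
    _ = _ := by rw [Finset.univ_inter]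

lemma term_abs_le {m n : ℕ} (A : Matrix (Fin m) (Fin n) ℝ) (w : Fin m → ℝ)
    (hA : ∀ j i, |A j i| ≤ 1) (hw : ∀ j, |w j| ≤ 1) (p : Finset (Fin n)) (j : Fin m) :
    |w j * relu (∑ i, A j i * bv (fun i => decide (i ∈ p)) i)| ≤ (p.card : ℝ) := by
  have hbv : ∀ i, bv (fun i => decide (i ∈ p)) i = if i ∈ p then (1 : ℝ) else 0 := by
    intro i; by_cases h : i ∈ p <;> simp [bv, h]
  have h1 : |∑ i, A j i * bv (fun i => decide (i ∈ p)) i| ≤ (p.card : ℝ) := by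
    calc |∑ i, A j i * bv (fun i => decide (i ∈ p)) i|
        ≤ ∑ i, |A j i * bv (fun i => decide (i ∈ p)) i| := Finset.abs_sum_le_sum_abs _ _
      _ ≤ ∑ i, (if i ∈ p then (1 : ℝ) else 0) := by
          apply Finset.sum_le_sum
          intro i _
          rw [abs_mul, hbv]
          by_cases h : i ∈ p
          · simpa [h] using hA j i
          · simp [h]
      _ = (p.card : ℝ) := by
          rw [Finset.sum_ite_mem, Finset.univ_inter, Finset.sum_const, nsmul_eq_mul, mul_one]
  have hrelu : |relu (∑ i, A j i * bv (fun i => decide (i ∈ p)) i)|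
      ≤ |∑ i, A j i * bv (fun i => decide (i ∈ p)) i| := by
    rw [relu, abs_of_nonneg (le_max_right _ _)]
    exact max_le (le_abs_self _) (abs_nonneg _)
  calc |w j * relu _| = |w j| * |relu _| := abs_mul _ _
    _ ≤ 1 * (p.card : ℝ) := mul_le_mul (hw j) (le_trans hrelu h1) (abs_nonneg _) zero_le_one
    _ = (p.card : ℝ) := one_mul _

lemma netVal_empty_pattern {m n : ℕ} (A : Matrix (Fin m) (Fin n) ℝ) (w : Fin m → ℝ) :
    netVal A w (bv (fun i : Fin n => decide (i ∈ (∅ : Finset (Fin n))))) = 0 := by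
  unfold netVal
  apply Finset.sum_eq_zero
  intro j _
  have : ∑ i, A j i * bv (fun i : Fin n => decide (i ∈ (∅ : Finset (Fin n)))) i = 0 := by
    apply Finset.sum_eq_zero
    intro i _
    simp [bv]
  rw [this]
  simp [relu]

lemma main_count {n m : ℕ} (A : Matrix (Fin m) (Fin n) ℝ) (w : Fin m → ℝ)
    (hA : ∀ j i, |A j i| ≤ 1) (hw : ∀ j, |w j| ≤ 1)
    (s t : ℕ) (hs : 1 ≤ s) (ε lam : ℝ) (hε1 : 0 < ε) (hlam : 0 ≤ lam)
    (hexp : Real.exp (-(t : ℝ) * (ε * (s : ℝ) / 16) ^ 2 / (2 * (s : ℝ) ^ 2)) ≤ lam / 2 ^ (s + 1))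
    (hm : 1 ≤ m)
    (σ : ℝ) (hσ : |σ| = 1)
    (hval : ∀ (p : Finset (Fin n)), (p.card : ℝ) ≤ (s : ℝ) →
      σ * netVal A w (bv fun i => decide (i ∈ p)) ≤ 0) :
    (((((univ : Finset (Fin n)).powersetCard s) ×ˢ ((univ : Finset (Fin m)).powersetCard t)).filter
        (fun ST : Finset (Fin n) × Finset (Fin m) => ∃ x : Fin n → Bool,
          (t : ℝ) * (ε * (s : ℝ) / 16) ≤
            ∑ j ∈ ST.2, σ * (w j * relu (∑ i, A j i * bv (fun i => x i && decide (i ∈ ST.1)) i)))).card : ℝ)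
      ≤ lam * (((((univ : Finset (Fin n)).powersetCard s) ×ˢ
          ((univ : Finset (Fin m)).powersetCard t)).card : ℝ)) := by
  classical
  set Ps := (univ : Finset (Fin n)).powersetCard s with hPs
  set Pt := (univ : Finset (Fin m)).powersetCard t with hPt
  set δ : ℝ := ε * (s : ℝ) / 16 with hδd
  have hsR : (0 : ℝ) < (s : ℝ) := by exact_mod_cast hs
  have hδ : 0 < δ := by rw [hδd]; positivity
  -- the per-pattern coefficient function
  set apat : Finset (Fin n) → Fin m → ℝ :=
    fun p j => σ * (w j * relu (∑ i, A j i * bv (fun i => decide (i ∈ p)) i)) with hapat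
  -- per (S, pattern) bad set of T's
  set badp : Finset (Fin n) → Finset (Finset (Fin m)) :=
    fun p => Pt.filter (fun T => (t : ℝ) * δ ≤ ∑ j ∈ T, apat p j) with hbadp
  set badT : Finset (Fin n) → Finset (Finset (Fin m)) :=
    fun S => Pt.filter (fun T => ∃ x : Fin n → Bool,
      (t : ℝ) * δ ≤ ∑ j ∈ T, σ * (w j * relu (∑ i, A j i * bv (fun i => x i && decide (i ∈ S)) i)))
    with hbadT
  -- step A : subset of a biUnion over S
  have hsubA : (Ps ×ˢ Pt).filter (fun ST : Finset (Fin n) × Finset (Fin m) =>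
        ∃ x : Fin n → Bool, (t : ℝ) * δ ≤
          ∑ j ∈ ST.2, σ * (w j * relu (∑ i, A j i * bv (fun i => x i && decide (i ∈ ST.1)) i)))
      ⊆ Ps.biUnion (fun S => ({S} : Finset (Finset (Fin n))) ×ˢ badT S) := by
    intro ST hST
    obtain ⟨hmem, hbad⟩ := Finset.mem_filter.mp hST
    obtain ⟨hS, hT⟩ := Finset.mem_product.mp hmem
    rw [Finset.mem_biUnion]
    exact ⟨ST.1, hS, Finset.mem_product.mpr ⟨Finset.mem_singleton_self _,
      Finset.mem_filter.mpr ⟨hT, hbad⟩⟩⟩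
  -- step B : each badT S is inside the union over patterns
  have hsubB : ∀ S : Finset (Fin n), badT S ⊆ S.powerset.biUnion badp := by
    intro S T hT
    obtain ⟨hTmem, x, hx⟩ := Finset.mem_filter.mp hT
    rw [Finset.mem_biUnion]
    refine ⟨S.filter (fun i => x i = true), Finset.mem_powerset.mpr (Finset.filter_subset _ _), ?_⟩
    rw [hbadp]
    refine Finset.mem_filter.mpr ⟨hTmem, ?_⟩
    have hfun : (fun i => x i && decide (i ∈ S)) =
        (fun i => decide (i ∈ S.filter (fun i => x i = true))) := by
      funext i
      by_cases hx1 : x i <;> by_cases h2 : i ∈ S <;> simp [hx1, h2]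
    simp only [hapat]
    rw [← hfun]
    exact hx
  -- step C : chernoff bound for each pattern p with p ⊆ S, S ∈ Ps
  have hC : ∀ (p : Finset (Fin n)), (p.card : ℝ) ≤ (s : ℝ) →
      ((badp p).card : ℝ) ≤ lam / 2 ^ (s + 1) * (m.choose t : ℝ) := by
    intro p hp
    have habs : ∀ j, |apat p j| ≤ (s : ℝ) := by
      intro j
      rw [hapat, abs_mul, hσ, one_mul]
      exact le_trans (term_abs_le A w hA hw p j) hp
    have hsum : ∑ j, apat p j ≤ 0 := by
      rw [hapat, ← Finset.mul_sum]
      exact hval p hp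
    calc ((badp p).card : ℝ)
        ≤ Real.exp (-(t : ℝ) * δ ^ 2 / (2 * (s : ℝ) ^ 2)) * (m.choose t : ℝ) :=
          chernoff_count hm t (apat p) (s : ℝ) δ hsR hδ habs hsum
      _ ≤ lam / 2 ^ (s + 1) * (m.choose t : ℝ) :=
          mul_le_mul_of_nonneg_right hexp (Nat.cast_nonneg _)
  -- step D : card of badT S
  have hD : ∀ S ∈ Ps, ((badT S).card : ℝ) ≤ lam * (m.choose t : ℝ) := by
    intro S hS
    have hScard : S.card = s := (Finset.mem_powersetCard_univ.mp hS)
    have h1 : ((badT S).card : ℕ) ≤ ∑ p ∈ S.powerset, (badp p).card :=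
      le_trans (Finset.card_le_card (hsubB S)) (Finset.card_biUnion_le)
    have h2 : ((badT S).card : ℝ) ≤ ∑ p ∈ S.powerset, ((badp p).card : ℝ) := by
      exact_mod_cast h1
    calc ((badT S).card : ℝ) ≤ ∑ p ∈ S.powerset, ((badp p).card : ℝ) := h2
      _ ≤ ∑ _p ∈ S.powerset, lam / 2 ^ (s + 1) * (m.choose t : ℝ) := by
          apply Finset.sum_le_sum
          intro p hp
          apply hC
          have := Finset.card_le_card (Finset.mem_powerset.mp hp)
          rw [hScard] at this
          exact_mod_cast this
      _ = (2 : ℝ) ^ s * (lam / 2 ^ (s + 1) * (m.choose t : ℝ)) := by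
          rw [Finset.sum_const, Finset.card_powerset, hScard, nsmul_eq_mul]
          push_cast
          ring
      _ ≤ lam * (m.choose t : ℝ) := by
          rw [pow_succ]
          have h3 : (2 : ℝ) ^ s * (lam / (2 ^ s * 2) * (m.choose t : ℝ))
              = lam / 2 * (m.choose t : ℝ) := by
            field_simp
          rw [h3]
          have : lam / 2 ≤ lam := by linarith
          exact mul_le_mul_of_nonneg_right this (Nat.cast_nonneg _)
  -- step E : put everything together
  have hPtcard : (Pt.card : ℝ) = (m.choose t : ℝ) := by
    rw [hPt, Finset.card_powersetCard, Finset.card_univ, Fintype.card_fin]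
  have hE : (((Ps ×ˢ Pt).filter (fun ST : Finset (Fin n) × Finset (Fin m) =>
        ∃ x : Fin n → Bool, (t : ℝ) * δ ≤
          ∑ j ∈ ST.2, σ * (w j * relu (∑ i, A j i * bv (fun i => x i && decide (i ∈ ST.1)) i)))).card : ℝ)
      ≤ ∑ S ∈ Ps, ((badT S).card : ℝ) := by
    have h1 := Finset.card_le_card hsubA
    have h2 := le_trans h1 (Finset.card_biUnion_le)
    have h3 : ∀ S : Finset (Fin n), (({S} : Finset (Finset (Fin n))) ×ˢ badT S).card
        = (badT S).card := by
      intro S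
      rw [Finset.card_product, Finset.card_singleton, one_mul]
    calc ((((Ps ×ˢ Pt).filter _).card : ℕ) : ℝ)
        ≤ ((∑ S ∈ Ps, (({S} : Finset (Finset (Fin n))) ×ˢ badT S).card : ℕ) : ℝ) := by
          exact_mod_cast h2
      _ = ∑ S ∈ Ps, ((badT S).card : ℝ) := by
          push_cast
          exact Finset.sum_congr rfl fun S _ => by rw [h3]
  calc (((Ps ×ˢ Pt).filter _).card : ℝ) ≤ ∑ S ∈ Ps, ((badT S).card : ℝ) := hE
    _ ≤ ∑ _S ∈ Ps, lam * (m.choose t : ℝ) := Finset.sum_le_sum hD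
    _ = (Ps.card : ℝ) * (lam * (m.choose t : ℝ)) := by
        rw [Finset.sum_const, nsmul_eq_mul]
    _ = lam * ((Ps ×ˢ Pt).card : ℝ) := by
        rw [Finset.card_product]
        push_cast
        rw [← hPtcard]
        ring

lemma conv1 {N M S T V e : ℝ} (hN : 0 < N) (hM : 0 < M) (hS : 0 < S) (hT : 0 < T)
    (h : 1 / 16 * e * N * M ≤ N * M / (S * T) * V) : T * (e * S / 16) ≤ V := by
  have hst : (0 : ℝ) < S * T := by positivity
  rw [div_mul_eq_mul_div (N * M) (S * T) V, le_div_iff₀ hst] at h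
  have h2 : N * M * (T * (e * S / 16)) ≤ N * M * V := by linear_combination h
  exact le_of_mul_le_mul_left h2 (by positivity)

/-- If the network computes the constant 0-function (resp. the OR-function),
then with probability at least `1 - λ` over a uniformly random `s`-subset `S` of the inputs
and an independent uniformly random `t`-subset `T` of the hidden nodes, for all inputs `x`
the biased scaled sampled value `(nm/(st))·wᵀ·relu(TASx) - (1/16)·ε·n·m` is negative
(resp. `(nm/(st))·wᵀ·relu(TASx) + (1/16)·ε·n·m` is positive for `x ≠ 0`). -/
theorem computing_network_accepted (n m : ℕ) (ε lam : ℝ)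
    (hε1 : 0 < ε) (hε2 : ε < 1 / 2) (hl1 : 0 < lam) (hl2 : lam < 1 / 2)
    (A : Matrix (Fin m) (Fin n) ℝ) (w : Fin m → ℝ)
    (hA : ∀ j i, |A j i| ≤ 1) (hw : ∀ j, |w j| ≤ 1)
    (s t : ℕ) (hs : 1 ≤ s)
    (ht : 512 * Real.log ((2 : ℝ) ^ (s + 1) / lam) / ε ^ 2 ≤ t) :
    let Ω : Finset (Finset (Fin n) × Finset (Fin m)) :=
      ((Finset.univ : Finset (Fin n)).powersetCard s) ×ˢ
        ((Finset.univ : Finset (Fin m)).powersetCard t)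
    ((∀ x : Fin n → Bool, netVal A w (bv x) ≤ 0) →
      (1 - lam) * (Ω.card : ℝ) ≤
        ((Ω.filter (fun ST : Finset (Fin n) × Finset (Fin m) =>
          ∀ x : Fin n → Bool,
            ((n : ℝ) * m / ((s : ℝ) * t)) * netVal (samplM ST.2 * A * samplM ST.1) w (bv x)
              - (1 / 16) * ε * n * m < 0)).card : ℝ)) ∧
    ((∀ x : Fin n → Bool, x ≠ (fun _ => false) → 0 < netVal A w (bv x)) →
      (1 - lam) * (Ω.card : ℝ) ≤
        ((Ω.filter (fun ST : Finset (Fin n) × Finset (Fin m) =>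
          ∀ x : Fin n → Bool, x ≠ (fun _ => false) →
            0 < ((n : ℝ) * m / ((s : ℝ) * t)) * netVal (samplM ST.2 * A * samplM ST.1) w (bv x)
              + (1 / 16) * ε * n * m)).card : ℝ)) := by
  intro Ω
  by_cases hne : Ω = ∅
  · constructor <;> intro _ <;> simp [hne]
  · obtain ⟨⟨S0, T0⟩, hmem⟩ := Finset.nonempty_iff_ne_empty.mpr hne
    obtain ⟨hS0, hT0⟩ := Finset.mem_product.mp hmem
    have hsn : s ≤ n := by
      have h1 : S0.card = s := Finset.mem_powersetCard_univ.mp hS0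
      have h2 := Finset.card_le_univ S0
      rw [h1] at h2
      simpa using h2
    have htm : t ≤ m := by
      have h1 : T0.card = t := Finset.mem_powersetCard_univ.mp hT0
      have h2 := Finset.card_le_univ T0
      rw [h1] at h2
      simpa using h2
    have hL : 0 < Real.log ((2 : ℝ) ^ (s + 1) / lam) := by
      apply Real.log_pos
      rw [one_lt_div hl1]
      have h2 : (2 : ℝ) ^ 1 ≤ (2 : ℝ) ^ (s + 1) :=
        pow_le_pow_right₀ one_le_two (by omega)
      simp only [pow_one] at h2
      linarith
    have ht1 : 1 ≤ t := by
      have h1 : (0 : ℝ) < (t : ℝ) :=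
        lt_of_lt_of_le (by positivity) ht
      exact_mod_cast h1
    have hn1 : 1 ≤ n := le_trans hs hsn
    have hm1 : 1 ≤ m := le_trans ht1 htm
    have hsR : (0 : ℝ) < (s : ℝ) := by exact_mod_cast hs
    have htR : (0 : ℝ) < (t : ℝ) := by exact_mod_cast ht1
    have hnR : (0 : ℝ) < (n : ℝ) := by exact_mod_cast hn1
    have hmR : (0 : ℝ) < (m : ℝ) := by exact_mod_cast hm1
    have hexp : Real.exp (-(t : ℝ) * (ε * (s : ℝ) / 16) ^ 2 / (2 * (s : ℝ) ^ 2))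
        ≤ lam / 2 ^ (s + 1) := by
      have harg : -(t : ℝ) * (ε * (s : ℝ) / 16) ^ 2 / (2 * (s : ℝ) ^ 2)
          = -((t : ℝ) * ε ^ 2 / 512) := by
        field_simp
        ring
      rw [harg]
      have h1 : Real.log ((2 : ℝ) ^ (s + 1) / lam) ≤ (t : ℝ) * ε ^ 2 / 512 := by
        have h2 := mul_le_mul_of_nonneg_right ht
          (le_of_lt (by positivity : (0 : ℝ) < ε ^ 2 / 512))
        calc Real.log ((2 : ℝ) ^ (s + 1) / lam)
            = 512 * Real.log ((2 : ℝ) ^ (s + 1) / lam) / ε ^ 2 * (ε ^ 2 / 512) := by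
              field_simp
            _ ≤ (t : ℝ) * (ε ^ 2 / 512) := h2
            _ = (t : ℝ) * ε ^ 2 / 512 := by ring
      have hpos : (0 : ℝ) < (2 : ℝ) ^ (s + 1) / lam := by positivity
      calc Real.exp (-((t : ℝ) * ε ^ 2 / 512))
          ≤ Real.exp (-Real.log ((2 : ℝ) ^ (s + 1) / lam)) :=
            Real.exp_le_exp.mpr (by linarith)
        _ = lam / 2 ^ (s + 1) := by
            rw [Real.exp_neg, Real.exp_log hpos, inv_div]
    constructor
    · -- part 1
      intro hzero
      have hval : ∀ (p : Finset (Fin n)), (p.card : ℝ) ≤ (s : ℝ) →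
          (1 : ℝ) * netVal A w (bv fun i => decide (i ∈ p)) ≤ 0 := by
        intro p _
        rw [one_mul]
        exact hzero _
      have hbadcount := main_count A w hA hw s t hs ε lam hε1 (le_of_lt hl1) hexp hm1 1
        (abs_one) hval
      set good : Finset (Fin n) × Finset (Fin m) → Prop := fun ST =>
        ∀ x : Fin n → Bool,
          ((n : ℝ) * m / ((s : ℝ) * t)) * netVal (samplM ST.2 * A * samplM ST.1) w (bv x)
            - (1 / 16) * ε * n * m < 0 with hgood
      have hsubset : Ω.filter (fun ST => ¬ good ST) ⊆
          Ω.filter (fun ST : Finset (Fin n) × Finset (Fin m) => ∃ x : Fin n → Bool,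
            (t : ℝ) * (ε * (s : ℝ) / 16) ≤
              ∑ j ∈ ST.2, (1:ℝ) * (w j * relu (∑ i, A j i * bv (fun i => x i && decide (i ∈ ST.1)) i))) := by
        apply Finset.monotone_filter_right
        intro ST _ hbad
        replace hbad : ¬ ∀ x : Fin n → Bool,
            ((n : ℝ) * m / ((s : ℝ) * t)) * netVal (samplM ST.2 * A * samplM ST.1) w (bv x)
              - (1 / 16) * ε * n * m < 0 := hbad
        push_neg at hbad
        obtain ⟨x, hx⟩ := hbad
        refine ⟨x, ?_⟩
        have hx2 : (1 / 16) * ε * n * m ≤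
            ((n : ℝ) * m / ((s : ℝ) * t)) * netVal (samplM ST.2 * A * samplM ST.1) w (bv x) := by
          linarith
        have hconv := conv1 hnR hmR hsR htR hx2
        rw [sampled_eq] at hconv
        simpa using hconv
      have hsplit := Finset.card_filter_add_card_filter_not
        (s := Ω) (p := good)
      have hbadle : ((Ω.filter (fun ST => ¬ good ST)).card : ℝ) ≤ lam * (Ω.card : ℝ) :=
        le_trans (by exact_mod_cast Finset.card_le_card hsubset) hbadcount
      have hgoodcard : ((Ω.filter good).card : ℝ)
          = (Ω.card : ℝ) - ((Ω.filter (fun ST => ¬ good ST)).card : ℝ) := by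
        have := hsplit
        push_cast [← this]
        ring
      rw [hgoodcard]
      nlinarith [hbadle, (by positivity : (0:ℝ) ≤ (Ω.card : ℝ))]
    · -- part 2
      intro hpos2
      have hval : ∀ (p : Finset (Fin n)), (p.card : ℝ) ≤ (s : ℝ) →
          (-1 : ℝ) * netVal A w (bv fun i => decide (i ∈ p)) ≤ 0 := by
        intro p _
        rcases Finset.eq_empty_or_nonempty p with rfl | hpne
        · rw [netVal_empty_pattern]
          norm_num
        · obtain ⟨i0, hi0⟩ := hpne
          have hxne : (fun i => decide (i ∈ p)) ≠ (fun _ : Fin n => false) := by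
            intro hcontra
            have := congrFun hcontra i0
            simp [hi0] at this
          have := hpos2 _ hxne
          linarith
      have hbadcount := main_count A w hA hw s t hs ε lam hε1 (le_of_lt hl1) hexp hm1 (-1)
        (by norm_num) hval
      set good : Finset (Fin n) × Finset (Fin m) → Prop := fun ST =>
        ∀ x : Fin n → Bool, x ≠ (fun _ => false) →
          0 < ((n : ℝ) * m / ((s : ℝ) * t)) * netVal (samplM ST.2 * A * samplM ST.1) w (bv x)
            + (1 / 16) * ε * n * m with hgood
      have hsubset : Ω.filter (fun ST => ¬ good ST) ⊆
          Ω.filter (fun ST : Finset (Fin n) × Finset (Fin m) => ∃ x : Fin n → Bool,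
            (t : ℝ) * (ε * (s : ℝ) / 16) ≤
              ∑ j ∈ ST.2, (-1:ℝ) * (w j * relu (∑ i, A j i * bv (fun i => x i && decide (i ∈ ST.1)) i))) := by
        apply Finset.monotone_filter_right
        intro ST _ hbad
        replace hbad : ¬ ∀ x : Fin n → Bool, x ≠ (fun _ => false) →
            0 < ((n : ℝ) * m / ((s : ℝ) * t)) * netVal (samplM ST.2 * A * samplM ST.1) w (bv x)
              + (1 / 16) * ε * n * m := hbad
        push_neg at hbad
        obtain ⟨x, _, hx⟩ := hbad
        refine ⟨x, ?_⟩
        have hx2 : (1 / 16) * ε * n * m ≤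
            ((n : ℝ) * m / ((s : ℝ) * t)) * (-(netVal (samplM ST.2 * A * samplM ST.1) w (bv x))) := by
          have : ((n : ℝ) * m / ((s : ℝ) * t)) * (-(netVal (samplM ST.2 * A * samplM ST.1) w (bv x)))
              = -(((n : ℝ) * m / ((s : ℝ) * t)) * netVal (samplM ST.2 * A * samplM ST.1) w (bv x)) := by
            ring
          rw [this]
          linarith
        have hconv := conv1 hnR hmR hsR htR hx2
        rw [show -(netVal (samplM ST.2 * A * samplM ST.1) w (bv x))
            = ∑ j ∈ ST.2, (-1:ℝ) * (w j * relu (∑ i, A j i * bv (fun i => x i && decide (i ∈ ST.1)) i)) by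
          rw [sampled_eq]
          rw [← Finset.sum_neg_distrib]
          apply Finset.sum_congr rfl
          intro j _
          ring] at hconv
        exact hconv
      have hsplit := Finset.card_filter_add_card_filter_not
        (s := Ω) (p := good)
      have hbadle : ((Ω.filter (fun ST => ¬ good ST)).card : ℝ) ≤ lam * (Ω.card : ℝ) :=
        le_trans (by exact_mod_cast Finset.card_le_card hsubset) hbadcount
      have hgoodcard : ((Ω.filter good).card : ℝ)
          = (Ω.card : ℝ) - ((Ω.filter (fun ST => ¬ good ST)).card : ℝ) := by
        have := hsplit
        push_cast [← this]
        ring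
      rw [hgoodcard]
      nlinarith [hbadle, (by positivity : (0:ℝ) ≤ (Ω.card : ℝ))]
end
end

section
/- Let 0 < ε < 1/1000 with √ε·n an integer, and let (A_L, w_L) be the ReLU network with n input nodes and n hidden layer nodes defined as follows: with I_1 = {1,…,10√ε·n}, I_2 = {10√ε·n + 1,…,30√ε·n}, H_1 = {1,…,10√ε·n}, H_2 = {10√ε·n + 1,…,30√ε·n}, set A_L[j,i] = 1 if (i ∈ I_1 and j ∈ H_1) or (i ∈ I_2 and j ∈ H_2) and A_L[j,i] = 0 otherwise, and set (w_L)_j = 1 for j ∈ H_1, (w_L)_j = −1 for j ∈ H_2, and (w_L)_j = 0 otherwise. Then the probability that a vector x chosen uniformly at random from {0,1}^n satisfies w_Lᵀ·relu(A_L x) > 0 is at most e^{−10√ε·n/8}. -/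
open scoped Classical
open Finset

noncomputable section

lemma card_filter_fin_lt {n m : ℕ} (h : m ≤ n) :
    (Finset.univ.filter fun j : Fin n => (j:ℕ) < m).card = m := by
  have : (Finset.univ.filter fun j : Fin n => (j:ℕ) < m) = Finset.map (Fin.castLEEmb h) Finset.univ := by
    ext j
    simp only [mem_filter, mem_univ, true_and, Finset.mem_map, Fin.castLEEmb,
      Function.Embedding.coeFn_mk, Fin.castLE]
    constructor
    · intro hj; exact ⟨⟨j, hj⟩, rfl⟩
    · rintro ⟨a, rfl⟩; exact a.isLt
  rw [this, Finset.card_map, Finset.card_univ, Fintype.card_fin]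

/-- For the hard instance `(A_L, w_L)` (with `k = √ε·n` an integer),
the probability over uniform `x ∈ {0,1}^n` that the output value is positive
is at most `e^{-10·√ε·n/8}`. -/
theorem vanilla_hard_instance_rarely_positive (n k : ℕ) (ε : ℝ)
    (hε1 : 0 < ε) (hε2 : ε < 1 / 1000)
    (hk : (k : ℝ) = Real.sqrt ε * n) :
    let A : Matrix (Fin n) (Fin n) ℝ := fun j i =>
      if ((i : ℕ) < 10 * k ∧ (j : ℕ) < 10 * k) ∨
          (10 * k ≤ (i : ℕ) ∧ (i : ℕ) < 30 * k ∧ 10 * k ≤ (j : ℕ) ∧ (j : ℕ) < 30 * k)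
        then 1 else 0
    let w : Fin n → ℝ := fun j =>
      if (j : ℕ) < 10 * k then 1 else if (j : ℕ) < 30 * k then -1 else 0
    ((Finset.univ.filter (fun x : Fin n → Bool => 0 < netVal A w (bv x))).card : ℝ)
      ≤ Real.exp (-(10 * (k : ℝ)) / 8) * 2 ^ n := by
  intro A w
  rcases Nat.eq_zero_or_pos n with hn | hn
  · subst hn
    have he : (Finset.univ.filter (fun x : Fin 0 → Bool => 0 < netVal A w (bv x))) = ∅ := by
      ext x
      simp [netVal]
    rw [he]
    simp
    positivity
  -- basic facts
  have hsq : Real.sqrt ε < 1 / 30 := by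
    have h1 : Real.sqrt ε ^ 2 = ε := Real.sq_sqrt hε1.le
    nlinarith [Real.sqrt_nonneg ε]
  have h30 : 30 * k < n := by
    have : (30 * k : ℝ) < n := by
      rw [hk]
      have hn' : (0:ℝ) < n := by exact_mod_cast hn
      nlinarith
    exact_mod_cast this
  have hk1 : 0 < k := by
    by_contra h
    push_neg at h
    interval_cases k
    have : (0:ℝ) < Real.sqrt ε * n := by
      apply mul_pos (Real.sqrt_pos.mpr hε1)
      exact_mod_cast hn
    rw [← hk] at this
    norm_num at this
  have h10le : 10 * k ≤ n := by omega
  have h30le : 30 * k ≤ n := by omega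
  set I1 : Finset (Fin n) := Finset.univ.filter (fun i : Fin n => (i:ℕ) < 10 * k) with hI1
  set I2 : Finset (Fin n) := Finset.univ.filter (fun i : Fin n => 10 * k ≤ (i:ℕ) ∧ (i:ℕ) < 30 * k) with hI2
  have hcard1 : I1.card = 10 * k := card_filter_fin_lt h10le
  have hcard2 : I2.card = 20 * k := by
    have hsub : I1 ⊆ Finset.univ.filter (fun i : Fin n => (i:ℕ) < 30 * k) := by
      intro i hi
      simp only [hI1, mem_filter, mem_univ, true_and] at hi ⊢
      omega
    have hsd : (Finset.univ.filter (fun i : Fin n => (i:ℕ) < 30 * k)) \ I1 = I2 := by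
      ext i
      simp only [hI1, hI2, Finset.mem_sdiff, mem_filter, mem_univ, true_and]
      omega
    have := Finset.card_sdiff_of_subset hsub
    rw [hsd, hcard1, card_filter_fin_lt h30le] at this
    omega
  -- T x : number of true coordinates in I2
  -- key: positivity implies T x < 5k
  have key : ∀ x : Fin n → Bool, 0 < netVal A w (bv x) →
      (I2.filter fun i => x i = true).card < 5 * k := by
    intro x hpos
    set s1 : ℝ := ∑ i ∈ I1, bv x i with hs1
    set s2 : ℝ := ∑ i ∈ I2, bv x i with hs2
    have hs1nn : 0 ≤ s1 := Finset.sum_nonneg fun i _ => by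
      simp only [bv]; positivity
    have hs2nn : 0 ≤ s2 := Finset.sum_nonneg fun i _ => by
      simp only [bv]; positivity
    have hs1le : s1 ≤ 10 * k := by
      calc s1 ≤ ∑ i ∈ I1, 1 := Finset.sum_le_sum fun i _ => by
              simp only [bv]; split <;> norm_num
        _ = 10 * k := by rw [Finset.sum_const, hcard1]; simp
    -- compute netVal
    have hval : netVal A w (bv x) = (10 * k : ℝ) * s1 - (20 * k : ℝ) * s2 := by
      have hA : ∀ j i : Fin n, A j i =
          if ((i : ℕ) < 10 * k ∧ (j : ℕ) < 10 * k) ∨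
              (10 * k ≤ (i : ℕ) ∧ (i : ℕ) < 30 * k ∧ 10 * k ≤ (j : ℕ) ∧ (j : ℕ) < 30 * k)
            then (1:ℝ) else 0 := fun _ _ => rfl
      have hw : ∀ j : Fin n, w j =
          if (j : ℕ) < 10 * k then (1:ℝ) else if (j : ℕ) < 30 * k then -1 else 0 := fun _ => rfl
      have hrow1 : ∀ j : Fin n, (j:ℕ) < 10 * k → (∑ i, A j i * bv x i) = s1 := by
        intro j hj
        rw [hs1, hI1, Finset.sum_filter]
        apply Finset.sum_congr rfl
        intro i _
        rw [hA j i]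
        by_cases hi : (i:ℕ) < 10 * k
        · rw [if_pos hi, if_pos (Or.inl ⟨hi, hj⟩), one_mul]
        · rw [if_neg hi, if_neg, zero_mul]
          intro hcon; omega
      have hrow2 : ∀ j : Fin n, 10 * k ≤ (j:ℕ) → (j:ℕ) < 30 * k → (∑ i, A j i * bv x i) = s2 := by
        intro j hj1 hj2
        rw [hs2, hI2, Finset.sum_filter]
        apply Finset.sum_congr rfl
        intro i _
        rw [hA j i]
        by_cases hi : 10 * k ≤ (i:ℕ) ∧ (i:ℕ) < 30 * k
        · rw [if_pos hi, if_pos (Or.inr ⟨hi.1, hi.2, hj1, hj2⟩), one_mul]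
        · rw [if_neg hi, if_neg, zero_mul]
          intro hcon; omega
      have split1 : (Finset.univ : Finset (Fin n)) = I1 ∪ I2 ∪
          (Finset.univ.filter (fun j : Fin n => ¬((j:ℕ) < 30 * k))) := by
        ext j
        simp only [hI1, hI2, Finset.mem_union, mem_filter, mem_univ, true_and, true_iff]
        omega
      have hdisj1 : Disjoint I1 I2 := by
        rw [Finset.disjoint_left]
        intro a ha hb
        simp only [hI1, hI2, mem_filter, mem_univ, true_and] at ha hb
        omega
      have hdisj2 : Disjoint (I1 ∪ I2) (Finset.univ.filter (fun j : Fin n => ¬((j:ℕ) < 30 * k))) := by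
        rw [Finset.disjoint_left]
        intro a ha hb
        simp only [hI1, hI2, Finset.mem_union, mem_filter, mem_univ, true_and] at ha hb
        omega
      have e1 : ∑ j ∈ I1, w j * relu (∑ i, A j i * bv x i) = (10 * k : ℕ) • s1 := by
        rw [← hcard1, ← Finset.sum_const]
        apply Finset.sum_congr rfl
        intro j hj
        simp only [hI1, mem_filter, mem_univ, true_and] at hj
        rw [hrow1 j hj, hw j]
        simp only [if_pos hj, one_mul]
        rw [relu, max_eq_left hs1nn]
      have e2 : ∑ j ∈ I2, w j * relu (∑ i, A j i * bv x i) = (20 * k : ℕ) • (-s2) := by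
        rw [← hcard2, ← Finset.sum_const]
        apply Finset.sum_congr rfl
        intro j hj
        simp only [hI2, mem_filter, mem_univ, true_and] at hj
        rw [hrow2 j hj.1 hj.2, hw j]
        rw [if_neg (by omega), if_pos hj.2]
        rw [relu, max_eq_left hs2nn]
        ring
      have e3 : ∑ j ∈ Finset.univ.filter (fun j : Fin n => ¬((j:ℕ) < 30 * k)),
          w j * relu (∑ i, A j i * bv x i) = 0 := by
        apply Finset.sum_eq_zero
        intro j hj
        simp only [mem_filter, mem_univ, true_and] at hj
        rw [hw j, if_neg (by omega), if_neg (by omega), zero_mul]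
      calc netVal A w (bv x)
          = ∑ j ∈ I1 ∪ I2 ∪ (Finset.univ.filter (fun j : Fin n => ¬((j:ℕ) < 30 * k))),
              w j * relu (∑ i, A j i * bv x i) := Finset.sum_congr split1 fun _ _ => rfl
        _ = (10 * k : ℝ) * s1 - (20 * k : ℝ) * s2 := by
            rw [Finset.sum_union hdisj2, Finset.sum_union hdisj1, e1, e2, e3,
              nsmul_eq_mul, nsmul_eq_mul]
            push_cast
            ring
    rw [hval] at hpos
    have hs2eq : s2 = ((I2.filter fun i => x i = true).card : ℝ) := by
      rw [hs2, ← Finset.sum_boole]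
      apply Finset.sum_congr rfl
      intro i _
      simp [bv]
    have hk' : (0:ℝ) < k := by exact_mod_cast hk1
    have : s2 < 5 * k := by nlinarith
    rw [hs2eq] at this
    exact_mod_cast this

  -- counting via exponential moment
  set g : Fin n → Bool → ℝ := fun i b =>
    if 10 * k ≤ (i:ℕ) ∧ (i:ℕ) < 30 * k then (if b then Real.exp (-1) else 1) else 1 with hg
  have hgnn : ∀ i b, 0 ≤ g i b := by
    intro i b
    simp only [hg]
    split
    · split
      · exact (Real.exp_pos _).le
      · norm_num
    · norm_num
  have hF : ∀ x : Fin n → Bool, (∏ i, g i (x i))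
      = Real.exp (-1) ^ ((I2.filter fun i => x i = true).card) := by
    intro x
    rw [← Finset.prod_filter_mul_prod_filter_not Finset.univ
        (fun i : Fin n => 10 * k ≤ (i:ℕ) ∧ (i:ℕ) < 30 * k) (fun i => g i (x i))]
    have h2 : (∏ i ∈ Finset.univ.filter
        (fun i : Fin n => ¬(10 * k ≤ (i:ℕ) ∧ (i:ℕ) < 30 * k)), g i (x i)) = 1 := by
      apply Finset.prod_eq_one
      intro i hi
      simp only [mem_filter, mem_univ, true_and] at hi
      simp only [hg]
      exact if_neg hi
    rw [h2, mul_one, ← hI2]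
    rw [← Finset.prod_filter_mul_prod_filter_not I2 (fun i => x i = true) (fun i => g i (x i))]
    have ha : ∀ i ∈ I2.filter (fun i => x i = true), g i (x i) = Real.exp (-1) := by
      intro i hi
      simp only [hI2, Finset.mem_filter, mem_univ, true_and] at hi
      simp only [hg]
      rw [if_pos hi.1, if_pos hi.2]
    have hb : ∀ i ∈ I2.filter (fun i => ¬(x i = true)), g i (x i) = 1 := by
      intro i hi
      simp only [hI2, Finset.mem_filter, mem_univ, true_and] at hi
      simp only [hg]
      rw [if_pos hi.1, if_neg hi.2]
    rw [Finset.prod_congr rfl ha, Finset.prod_congr rfl hb, Finset.prod_const,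
      Finset.prod_const_one, mul_one]
  have hswap : (∑ x : Fin n → Bool, ∏ i, g i (x i)) = ∏ i : Fin n, ∑ b : Bool, g i b :=
    (Fintype.prod_sum g).symm
  have hcardnot : (Finset.univ.filter
      (fun i : Fin n => ¬(10 * k ≤ (i:ℕ) ∧ (i:ℕ) < 30 * k))).card = n - 20 * k := by
    have h := Finset.card_filter_add_card_filter_not
      (s := (Finset.univ : Finset (Fin n)))
      (p := fun i : Fin n => 10 * k ≤ (i:ℕ) ∧ (i:ℕ) < 30 * k)
    rw [← hI2] at h
    rw [hcard2, Finset.card_univ, Fintype.card_fin] at h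
    omega
  have hprodval : (∏ i : Fin n, ∑ b : Bool, g i b)
      = (Real.exp (-1) + 1) ^ (20 * k) * 2 ^ (n - 20 * k) := by
    have hbsum : ∀ i : Fin n, (∑ b : Bool, g i b) =
        if 10 * k ≤ (i:ℕ) ∧ (i:ℕ) < 30 * k then Real.exp (-1) + 1 else 2 := by
      intro i
      rw [Fintype.sum_bool]
      simp only [hg]
      split <;> norm_num
    rw [Finset.prod_congr rfl (fun i _ => hbsum i)]
    rw [← Finset.prod_filter_mul_prod_filter_not Finset.univ
        (fun i : Fin n => 10 * k ≤ (i:ℕ) ∧ (i:ℕ) < 30 * k)]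
    have hpa : ∀ i ∈ Finset.univ.filter (fun i : Fin n => 10 * k ≤ (i:ℕ) ∧ (i:ℕ) < 30 * k),
        (if 10 * k ≤ (i:ℕ) ∧ (i:ℕ) < 30 * k then Real.exp (-1) + 1 else (2:ℝ)) =
          Real.exp (-1) + 1 := by
      intro i hi
      simp only [mem_filter, mem_univ, true_and] at hi
      rw [if_pos hi]
    have hpb : ∀ i ∈ Finset.univ.filter (fun i : Fin n => ¬(10 * k ≤ (i:ℕ) ∧ (i:ℕ) < 30 * k)),
        (if 10 * k ≤ (i:ℕ) ∧ (i:ℕ) < 30 * k then Real.exp (-1) + 1 else (2:ℝ)) = 2 := by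
      intro i hi
      simp only [mem_filter, mem_univ, true_and] at hi
      rw [if_neg hi]
    rw [Finset.prod_congr rfl hpa, Finset.prod_congr rfl hpb, Finset.prod_const,
      Finset.prod_const, hcardnot, ← hI2, hcard2]
  have hmain : ((Finset.univ.filter (fun x : Fin n → Bool => 0 < netVal A w (bv x))).card : ℝ)
      ≤ Real.exp (5 * k) * ((Real.exp (-1) + 1) ^ (20 * k) * 2 ^ (n - 20 * k)) := by
    have hper : ∀ x ∈ Finset.univ.filter (fun x : Fin n → Bool => 0 < netVal A w (bv x)),
        (1:ℝ) ≤ Real.exp (5 * k) * ∏ i, g i (x i) := by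
      intro x hx
      rw [Finset.mem_filter] at hx
      have hT := key x hx.2
      rw [hF x]
      have hTr : ((I2.filter fun i => x i = true).card : ℝ) < 5 * k := by exact_mod_cast hT
      have heq : Real.exp (-1) ^ ((I2.filter fun i => x i = true).card)
          = Real.exp (-(((I2.filter fun i => x i = true).card : ℝ))) := by
        rw [← Real.exp_nat_mul]
        ring_nf
      rw [heq, ← Real.exp_add]
      apply Real.one_le_exp
      linarith
    calc ((Finset.univ.filter (fun x : Fin n → Bool => 0 < netVal A w (bv x))).card : ℝ)
        = ∑ _x ∈ Finset.univ.filter (fun x : Fin n → Bool => 0 < netVal A w (bv x)), (1:ℝ) := by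
          rw [Finset.sum_const, nsmul_eq_mul, mul_one]
      _ ≤ ∑ x ∈ Finset.univ.filter (fun x : Fin n → Bool => 0 < netVal A w (bv x)),
            Real.exp (5 * k) * ∏ i, g i (x i) := Finset.sum_le_sum hper
      _ ≤ ∑ x : Fin n → Bool, Real.exp (5 * k) * ∏ i, g i (x i) := by
          apply Finset.sum_le_sum_of_subset_of_nonneg (Finset.filter_subset _ _)
          intro x _ _
          exact mul_nonneg (Real.exp_pos _).le (Finset.prod_nonneg fun i _ => hgnn i (x i))
      _ = Real.exp (5 * k) * ∑ x : Fin n → Bool, ∏ i, g i (x i) := by rw [Finset.mul_sum]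
      _ = Real.exp (5 * k) * ((Real.exp (-1) + 1) ^ (20 * k) * 2 ^ (n - 20 * k)) := by
          rw [hswap, hprodval]
  -- numeric base inequality
  have hEnn : (0:ℝ) ≤ Real.exp (-1) + 1 := by positivity
  have hbase : Real.exp 1 ^ 7 * (Real.exp (-1) + 1) ^ 20 ≤ (2:ℝ) ^ 20 := by
    have he1 : Real.exp 1 < 2.7182818286 := Real.exp_one_lt_d9
    have he2 : (2.7182818283:ℝ) < Real.exp 1 := Real.exp_one_gt_d9
    have hp : Real.exp (-1) * Real.exp 1 = 1 := by
      rw [← Real.exp_add]; norm_num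
    have hinv : Real.exp (-1) < 0.368 := by nlinarith [Real.exp_pos 1, Real.exp_pos (-1)]
    have hE : Real.exp (-1) + 1 < 1.368 := by linarith
    have h7 : Real.exp 1 ^ 7 ≤ (2.7182818286:ℝ) ^ 7 :=
      pow_le_pow_left₀ (Real.exp_pos 1).le he1.le 7
    have h20 : (Real.exp (-1) + 1) ^ 20 ≤ (1.368:ℝ) ^ 20 := pow_le_pow_left₀ hEnn hE.le 20
    calc Real.exp 1 ^ 7 * (Real.exp (-1) + 1) ^ 20
        ≤ (2.7182818286:ℝ) ^ 7 * (1.368:ℝ) ^ 20 := by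
          apply mul_le_mul h7 h20 (pow_nonneg hEnn 20) (by positivity)
      _ ≤ (2:ℝ) ^ 20 := by norm_num
  -- final assembly
  have hpow : (2:ℝ) ^ n = 2 ^ (20 * k) * 2 ^ (n - 20 * k) := by
    rw [← pow_add]
    congr 1
    omega
  have hineq : Real.exp (5 * k) * (Real.exp (-1) + 1) ^ (20 * k)
      ≤ Real.exp (-(10 * (k:ℝ)) / 8) * 2 ^ (20 * k) := by
    have hsplit : Real.exp (5 * (k:ℝ)) = Real.exp (-(10 * (k:ℝ)) / 8)
        * Real.exp ((10 * (k:ℝ)) / 8 + 5 * k) := by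
      rw [← Real.exp_add]; ring_nf
    rw [hsplit, mul_assoc]
    apply mul_le_mul_of_nonneg_left _ (Real.exp_pos _).le
    have hknn : (0:ℝ) ≤ k := Nat.cast_nonneg k
    have step1 : Real.exp ((10 * (k:ℝ)) / 8 + 5 * k) ≤ Real.exp 1 ^ (7 * k) := by
      have : Real.exp ((10 * (k:ℝ)) / 8 + 5 * k) ≤ Real.exp (((7 * k : ℕ) : ℝ) * 1) := by
        apply Real.exp_le_exp.mpr
        push_cast
        linarith
      rwa [Real.exp_nat_mul] at this
    calc Real.exp ((10 * (k:ℝ)) / 8 + 5 * k) * (Real.exp (-1) + 1) ^ (20 * k)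
        ≤ Real.exp 1 ^ (7 * k) * (Real.exp (-1) + 1) ^ (20 * k) :=
          mul_le_mul_of_nonneg_right step1 (pow_nonneg hEnn _)
      _ = (Real.exp 1 ^ 7 * (Real.exp (-1) + 1) ^ 20) ^ k := by
          rw [pow_mul, pow_mul, ← mul_pow]
      _ ≤ ((2:ℝ) ^ 20) ^ k := pow_le_pow_left₀ (by positivity) hbase k
      _ = (2:ℝ) ^ (20 * k) := by rw [← pow_mul]
  calc ((Finset.univ.filter (fun x : Fin n → Bool => 0 < netVal A w (bv x))).card : ℝ)
      ≤ Real.exp (5 * k) * ((Real.exp (-1) + 1) ^ (20 * k) * 2 ^ (n - 20 * k)) := hmain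
    _ = (Real.exp (5 * k) * (Real.exp (-1) + 1) ^ (20 * k)) * 2 ^ (n - 20 * k) := by ring
    _ ≤ (Real.exp (-(10 * (k:ℝ)) / 8) * 2 ^ (20 * k)) * 2 ^ (n - 20 * k) :=
        mul_le_mul_of_nonneg_right hineq (by positivity)
    _ = Real.exp (-(10 * (k:ℝ)) / 8) * 2 ^ n := by rw [hpow]; ring
end
end

section
/- Let ℓ ∈ ℕ with ℓ ≥ 1 and let γ ∈ (0, 1/2). Let X_1, …, X_ℓ be independent random variables each uniform on {−1, 1}, and let Y_1, …, Y_ℓ be independent random variables with Pr[Y_i = 1] = 1/2 + γ and Pr[Y_i = −1] = 1/2 − γ. Let X^(ℓ) = relu(Σ_{i=1}^ℓ X_i) and Y^(ℓ) = relu(Σ_{i=1}^ℓ Y_i). Then (1/4)·γ·ℓ ≤ E[Y^(ℓ)] − E[X^(ℓ)] ≤ 4·γ·ℓ. -/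
open scoped Classical
open Finset

noncomputable section

/-- The sign value `±1` of a Boolean. -/
def sgn (b : Bool) : ℝ := if b then 1 else -1

namespace ReluGap

/-- Expectation of `f` applied to the sum of `n` i.i.d. `±1` variables with `P(+1)=p`. -/
noncomputable def Ew : ℕ → ℝ → (ℝ → ℝ) → ℝ
  | 0, _, f => f 0
  | n+1, p, f => p * Ew n p (fun x => f (x+1)) + (1-p) * Ew n p (fun x => f (x-1))

lemma Ew_congr {f h : ℝ → ℝ} (n : ℕ) (p : ℝ) (hfh : ∀ x, f x = h x) :
    Ew n p f = Ew n p h := by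
  rw [funext hfh]

lemma Ew_mono (n : ℕ) {p : ℝ} (hp0 : 0 ≤ p) (hp1 : p ≤ 1) :
    ∀ {f h : ℝ → ℝ}, (∀ x, f x ≤ h x) → Ew n p f ≤ Ew n p h := by
  induction n with
  | zero => intro f h hfh; exact hfh 0
  | succ n ih =>
    intro f h hfh
    simp only [Ew]
    have h1 := ih (f := fun x => f (x+1)) (h := fun x => h (x+1)) (fun x => hfh _)
    have h2 := ih (f := fun x => f (x-1)) (h := fun x => h (x-1)) (fun x => hfh _)
    nlinarith [h1, h2]

lemma Ew_const (n : ℕ) (p r : ℝ) : Ew n p (fun _ => r) = r := by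
  induction n with
  | zero => rfl
  | succ n ih => simp only [Ew, ih]; ring

lemma Ew_add (n : ℕ) (p : ℝ) :
    ∀ f h : ℝ → ℝ, Ew n p (fun x => f x + h x) = Ew n p f + Ew n p h := by
  induction n with
  | zero => intro f h; rfl
  | succ n ih =>
    intro f h
    simp only [Ew, ih]
    ring

lemma Ew_sub (n : ℕ) (p : ℝ) :
    ∀ f h : ℝ → ℝ, Ew n p (fun x => f x - h x) = Ew n p f - Ew n p h := by
  induction n with
  | zero => intro f h; rfl
  | succ n ih =>
    intro f h
    simp only [Ew, ih]
    ring

/-- `g x = relu (x+1) - relu (x-1)`, a clamp function. -/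
def g (x : ℝ) : ℝ := relu (x+1) - relu (x-1)

lemma g_nonneg (x : ℝ) : 0 ≤ g x := by
  simp only [g, relu, max_def]; split_ifs <;> linarith

lemma g_le_two (x : ℝ) : g x ≤ 2 := by
  simp only [g, relu, max_def]; split_ifs <;> linarith

lemma g_mono : ∀ x y : ℝ, x ≤ y → g x ≤ g y := by
  intro x y hxy
  simp only [g, relu, max_def]; split_ifs <;> linarith

lemma g_base {a b : ℝ} (h : 0 ≤ a + b) : 2 ≤ g a + g b := by
  simp only [g, relu, max_def]; split_ifs <;> linarith

lemma Ew_K (q : ℝ) (hq0 : 0 ≤ q) (hq1 : q ≤ 1) :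
    ∀ (n : ℕ) (a b : ℝ), 0 ≤ a + b → 2 ≤ Ew n q (fun x => g (x + a) + g (b - x)) := by
  intro n
  induction n with
  | zero =>
    intro a b hab
    show (2:ℝ) ≤ g (0 + a) + g (b - 0)
    rw [zero_add, sub_zero]
    exact g_base hab
  | succ n ih =>
    intro a b hab
    simp only [Ew]
    have e1 : Ew n q (fun x => g (x + 1 + a) + g (b - (x + 1)))
        = Ew n q (fun x => g (x + (a+1)) + g ((b-1) - x)) :=
      Ew_congr n q (fun x => by ring_nf)
    have e2 : Ew n q (fun x => g (x - 1 + a) + g (b - (x - 1)))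
        = Ew n q (fun x => g (x + (a-1)) + g ((b+1) - x)) :=
      Ew_congr n q (fun x => by ring_nf)
    rw [e1, e2]
    have h1 := ih (a+1) (b-1) (by linarith)
    have h2 := ih (a-1) (b+1) (by linarith)
    nlinarith [h1, h2]

lemma Ew_reflect (q : ℝ) (hq : 1/2 ≤ q) (hq1 : q ≤ 1) :
    ∀ (n : ℕ) (f : ℝ → ℝ), (∀ x y, x ≤ y → f x ≤ f y) →
      Ew n q (fun x => f (-x)) ≤ Ew n q f := by
  intro n
  induction n with
  | zero =>
    intro f _
    show f (-0) ≤ f 0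
    rw [neg_zero]
  | succ n ih =>
    intro f hf
    simp only [Ew]
    have A := ih (fun x => f (x+1)) (fun x y h => hf _ _ (by linarith))
    have B := ih (fun x => f (x-1)) (fun x y h => hf _ _ (by linarith))
    -- A : Ew n q (fun x => f (-x+1)) ≤ Ew n q (fun x => f (x+1))
    -- B : Ew n q (fun x => f (-x-1)) ≤ Ew n q (fun x => f (x-1))
    have eA : Ew n q (fun x => f (-(x-1))) = Ew n q (fun x => f (-x+1)) :=
      Ew_congr n q (fun x => by ring_nf)
    have eB : Ew n q (fun x => f (-(x+1))) = Ew n q (fun x => f (-x-1)) :=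
      Ew_congr n q (fun x => by ring_nf)
    rw [eA, eB]
    have C : Ew n q (fun x => f (x-1)) ≤ Ew n q (fun x => f (x+1)) :=
      Ew_mono n (by linarith) hq1 (fun x => hf _ _ (by linarith))
    nlinarith [A, B, C]

lemma Ew_nonneg (n : ℕ) {q : ℝ} (hq0 : 0 ≤ q) (hq1 : q ≤ 1) {f : ℝ → ℝ}
    (hf : ∀ x, 0 ≤ f x) : 0 ≤ Ew n q f := by
  have := Ew_mono n hq0 hq1 (f := fun _ => (0:ℝ)) (h := f) hf
  rwa [Ew_const] at this

lemma Ewg_one (q : ℝ) (hq : 1/2 ≤ q) (hq1 : q ≤ 1) (n : ℕ) {c : ℝ} (hc : 0 ≤ c) :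
    1 ≤ Ew n q (fun x => g (x + c)) := by
  have hK := Ew_K q (by linarith) hq1 n c c (by linarith)
  rw [Ew_add n q (fun x => g (x + c)) (fun x => g (c - x))] at hK
  have hR := Ew_reflect q hq hq1 n (fun x => g (x + c))
    (fun x y h => g_mono _ _ (by linarith))
  have eR : Ew n q (fun x => g (-x + c)) = Ew n q (fun x => g (c - x)) :=
    Ew_congr n q (fun x => by ring_nf)
  rw [eR] at hR
  linarith

/-- `psi k c = P(W_k + c ≥ 0)` for the simple symmetric walk `W_k`. -/
noncomputable def psi : ℕ → ℝ → ℝ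
  | 0, c => if 0 ≤ c then 1 else 0
  | k+1, c => (psi k (c+1) + psi k (c-1)) / 2

lemma psi_nonneg : ∀ (k : ℕ) (c : ℝ), 0 ≤ psi k c := by
  intro k
  induction k with
  | zero => intro c; simp only [psi]; split_ifs <;> norm_num
  | succ k ih => intro c; simp only [psi]; have := ih (c+1); have := ih (c-1); linarith

lemma psi_refl : ∀ (k : ℕ) (c : ℝ), 1 ≤ psi k c + psi k (-c) := by
  intro k
  induction k with
  | zero =>
    intro c
    simp only [psi]
    split_ifs <;> [norm_num; norm_num; norm_num; linarith]
  | succ k ih =>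
    intro c
    simp only [psi]
    have h1 := ih (c+1)
    have h2 := ih (c-1)
    have e1 : -(c+1) = -c - 1 := by ring
    have e2 : -(c-1) = -c + 1 := by ring
    rw [e1] at h1; rw [e2] at h2
    linarith

lemma psi_half (k : ℕ) : 1/2 ≤ psi k 0 := by
  have := psi_refl k 0
  rw [neg_zero] at this
  linarith

/-- Main lower bound by induction. -/
lemma lower (γ : ℝ) (hγ0 : 0 ≤ γ) (hγ : γ < 1/2) :
    ∀ (n : ℕ) (c : ℝ),
      γ * ∑ k ∈ Finset.range n, psi k c
        ≤ Ew n (1/2 + γ) (fun x => relu (x + c)) - Ew n (1/2) (fun x => relu (x + c)) := by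
  intro n
  induction n with
  | zero => intro c; simp [Ew]
  | succ n ih =>
    intro c
    have hq : (1:ℝ)/2 ≤ 1/2 + γ := by linarith
    have hq1 : (1:ℝ)/2 + γ ≤ 1 := by linarith
    simp only [Ew]
    set q : ℝ := 1/2 + γ with hqdef
    have eA : Ew n q (fun x => relu (x + 1 + c)) = Ew n q (fun x => relu (x + (c+1))) :=
      Ew_congr n q (fun x => by ring_nf)
    have eB : Ew n q (fun x => relu (x - 1 + c)) = Ew n q (fun x => relu (x + (c-1))) :=
      Ew_congr n q (fun x => by ring_nf)
    have eA' : Ew n (1/2) (fun x => relu (x + 1 + c)) = Ew n (1/2) (fun x => relu (x + (c+1))) :=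
      Ew_congr n (1/2) (fun x => by ring_nf)
    have eB' : Ew n (1/2) (fun x => relu (x - 1 + c)) = Ew n (1/2) (fun x => relu (x + (c-1))) :=
      Ew_congr n (1/2) (fun x => by ring_nf)
    rw [eA, eB, eA', eB']
    set A := Ew n q (fun x => relu (x + (c+1)))
    set B := Ew n q (fun x => relu (x + (c-1)))
    set A' := Ew n (1/2) (fun x => relu (x + (c+1)))
    set B' := Ew n (1/2) (fun x => relu (x + (c-1)))
    have hAB : A - B = Ew n q (fun x => g (x + c)) := by
      rw [← Ew_sub n q]
      exact Ew_congr n q (fun x => by simp only [g]; congr 1 <;> · congr 1; ring)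
    have hbonus : γ * psi 0 c ≤ γ * (A - B) := by
      rw [hAB]
      by_cases hc : 0 ≤ c
      · have := Ewg_one q hq hq1 n hc
        simp only [psi, if_pos hc]
        nlinarith
      · simp only [psi, if_neg hc]
        have := Ew_nonneg n (by rw [hqdef]; linarith : (0:ℝ) ≤ q) hq1 (fun x => g_nonneg (x + c))
        nlinarith
    have h1 := ih (c+1)
    have h2 := ih (c-1)
    have hsum : ∑ k ∈ Finset.range (n+1), psi k c
        = (∑ k ∈ Finset.range n, psi k (c+1) + ∑ k ∈ Finset.range n, psi k (c-1)) / 2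
          + psi 0 c := by
      rw [Finset.sum_range_succ']
      congr 1
      rw [← Finset.sum_add_distrib, Finset.sum_div]
      exact Finset.sum_congr rfl (fun k _ => rfl)
    rw [hsum]
    have expand : q * A + (1 - q) * B - (1/2 * A' + (1 - 1/2) * B')
        = (A - A') / 2 + (B - B') / 2 + γ * (A - B) := by
      rw [hqdef]; ring
    rw [expand]
    linarith

/-- Main upper bound by induction. -/
lemma upper (γ : ℝ) (hγ0 : 0 ≤ γ) (hγ : γ < 1/2) :
    ∀ (n : ℕ) (c : ℝ),
      Ew n (1/2 + γ) (fun x => relu (x + c)) - Ew n (1/2) (fun x => relu (x + c))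
        ≤ 2 * γ * n := by
  intro n
  induction n with
  | zero => intro c; simp [Ew]
  | succ n ih =>
    intro c
    have hq : (1:ℝ)/2 ≤ 1/2 + γ := by linarith
    have hq1 : (1:ℝ)/2 + γ ≤ 1 := by linarith
    simp only [Ew]
    set q : ℝ := 1/2 + γ with hqdef
    have eA : Ew n q (fun x => relu (x + 1 + c)) = Ew n q (fun x => relu (x + (c+1))) :=
      Ew_congr n q (fun x => by ring_nf)
    have eB : Ew n q (fun x => relu (x - 1 + c)) = Ew n q (fun x => relu (x + (c-1))) :=
      Ew_congr n q (fun x => by ring_nf)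
    have eA' : Ew n (1/2) (fun x => relu (x + 1 + c)) = Ew n (1/2) (fun x => relu (x + (c+1))) :=
      Ew_congr n (1/2) (fun x => by ring_nf)
    have eB' : Ew n (1/2) (fun x => relu (x - 1 + c)) = Ew n (1/2) (fun x => relu (x + (c-1))) :=
      Ew_congr n (1/2) (fun x => by ring_nf)
    rw [eA, eB, eA', eB']
    set A := Ew n q (fun x => relu (x + (c+1)))
    set B := Ew n q (fun x => relu (x + (c-1)))
    set A' := Ew n (1/2) (fun x => relu (x + (c+1)))
    set B' := Ew n (1/2) (fun x => relu (x + (c-1)))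
    have hAB : A - B = Ew n q (fun x => g (x + c)) := by
      rw [← Ew_sub n q]
      exact Ew_congr n q (fun x => by simp only [g]; congr 1 <;> · congr 1; ring)
    have hAB2 : A - B ≤ 2 := by
      rw [hAB]
      have := Ew_mono n (by rw [hqdef]; linarith : (0:ℝ) ≤ q) hq1
        (f := fun x => g (x + c)) (h := fun _ => (2:ℝ)) (fun x => g_le_two (x + c))
      rwa [Ew_const] at this
    have h1 := ih (c+1)
    have h2 := ih (c-1)
    have expand : q * A + (1 - q) * B - (1/2 * A' + (1 - 1/2) * B')
        = (A - A') / 2 + (B - B') / 2 + γ * (A - B) := by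
      rw [hqdef]; ring
    rw [expand]
    push_cast
    nlinarith [h1, h2, hAB2]

/-- Bridge between the explicit weighted sums and `Ew`. -/
lemma bridge (p : ℝ) : ∀ (n : ℕ) (f : ℝ → ℝ),
    (∑ σ : Fin n → Bool, (∏ i, if σ i then p else 1 - p) * f (∑ i, sgn (σ i)))
      = Ew n p f := by
  intro n
  induction n with
  | zero =>
    intro f
    rw [Fintype.sum_subsingleton _ (fun _ : Fin 0 => false)]
    simp [Ew]
  | succ n ih =>
    intro f
    have key := Equiv.sum_comp (Fin.consEquiv (fun _ : Fin (n+1) => Bool))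
      (fun σ => (∏ i, if σ i then p else 1 - p) * f (∑ i, sgn (σ i)))
    rw [← key, Fintype.sum_prod_type, Fintype.sum_bool]
    simp only [Fin.consEquiv_apply]
    have split : ∀ (b : Bool),
        (∑ τ : Fin n → Bool,
          (∏ i, if (Fin.cons b τ : Fin (n+1) → Bool) i then p else 1 - p) * f (∑ i, sgn ((Fin.cons b τ : Fin (n+1) → Bool) i)))
        = (if b then p else 1-p) * Ew n p (fun x => f (x + sgn b)) := by
      intro b
      have e : ∀ τ : Fin n → Bool,
          (∏ i, if (Fin.cons b τ : Fin (n+1) → Bool) i then p else 1 - p) * f (∑ i, sgn ((Fin.cons b τ : Fin (n+1) → Bool) i))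
          = (if b then p else 1-p) *
              ((∏ i, if τ i then p else 1 - p) * f (sgn b + ∑ i, sgn (τ i))) := by
        intro τ
        rw [Fin.prod_univ_succ, Fin.sum_univ_succ]
        simp only [Fin.cons_zero, Fin.cons_succ]
        ring
      rw [Finset.sum_congr rfl (fun τ _ => e τ), ← Finset.mul_sum]
      congr 1
      rw [← ih (fun x => f (x + sgn b))]
      refine Finset.sum_congr rfl (fun τ _ => ?_)
      show (∏ i, if τ i then p else 1 - p) * f (sgn b + ∑ i, sgn (τ i))
        = (∏ i, if τ i then p else 1 - p) * f ((∑ i, sgn (τ i)) + sgn b)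
      rw [add_comm (sgn b)]
    rw [split true, split false]
    have et : Ew n p (fun x => f (x + sgn true)) = Ew n p (fun x => f (x + 1)) :=
      Ew_congr n p (fun x => by norm_num [sgn])
    have ef : Ew n p (fun x => f (x + sgn false)) = Ew n p (fun x => f (x - 1)) :=
      Ew_congr n p (fun x => by norm_num [sgn, sub_eq_add_neg])
    rw [et, ef]
    show p * Ew n p (fun x => f (x + 1)) + (1 - p) * Ew n p (fun x => f (x - 1))
      = Ew (n+1) p f
    rfl

end ReluGap

/-- Difference of expectations of ReLU of sums of `ℓ` i.i.d. `±1` variables,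
unbiased versus `γ`-biased: `(1/4)·γ·ℓ ≤ E[Y^(ℓ)] − E[X^(ℓ)] ≤ 4·γ·ℓ`. Expectations are
written explicitly as weighted sums over `{−1,1}^ℓ`. -/
theorem relu_sum_expectation_gap (ℓ : ℕ) (hℓ : 1 ≤ ℓ) (γ : ℝ) (hγ1 : 0 < γ) (hγ2 : γ < 1 / 2) :
    let EX : ℝ := (1 / 2 ^ ℓ) * ∑ σ : Fin ℓ → Bool, relu (∑ i, sgn (σ i))
    let EY : ℝ := ∑ σ : Fin ℓ → Bool,
      (∏ i, if σ i then 1 / 2 + γ else 1 / 2 - γ) * relu (∑ i, sgn (σ i))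
    (1 / 4) * γ * ℓ ≤ EY - EX ∧ EY - EX ≤ 4 * γ * ℓ := by
  intro EX EY
  have hEX : EX = ReluGap.Ew ℓ (1/2) relu := by
    show (1 / 2 ^ ℓ) * ∑ σ : Fin ℓ → Bool, relu (∑ i, sgn (σ i)) = _
    rw [← ReluGap.bridge (1/2) ℓ relu, Finset.mul_sum]
    apply Finset.sum_congr rfl
    intro σ _
    have h1 : (∏ i, if σ i then (1:ℝ)/2 else 1 - 1/2) = 1 / 2 ^ ℓ := by
      have h2 : ∀ i : Fin ℓ, (if σ i then (1:ℝ)/2 else 1 - 1/2) = 1/2 := by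
        intro i; split_ifs <;> norm_num
      rw [Finset.prod_congr rfl (fun i _ => h2 i), Finset.prod_const]
      simp [div_pow]
    rw [h1]
  have hEY : EY = ReluGap.Ew ℓ (1/2 + γ) relu := by
    show (∑ σ : Fin ℓ → Bool, (∏ i, if σ i then 1/2 + γ else 1/2 - γ) * relu (∑ i, sgn (σ i)))
      = _
    rw [← ReluGap.bridge (1/2 + γ) ℓ relu]
    apply Finset.sum_congr rfl
    intro σ _
    congr 1
    apply Finset.prod_congr rfl
    intro i _
    split_ifs <;> ring
  have hc1 : ReluGap.Ew ℓ (1/2+γ) relu = ReluGap.Ew ℓ (1/2+γ) (fun x => relu (x + 0)) :=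
    (ReluGap.Ew_congr ℓ _ (fun x => by rw [add_zero])).symm
  have hc2 : ReluGap.Ew ℓ (1/2) relu = ReluGap.Ew ℓ (1/2) (fun x => relu (x + 0)) :=
    (ReluGap.Ew_congr ℓ _ (fun x => by rw [add_zero])).symm
  have hlow := ReluGap.lower γ hγ1.le hγ2 ℓ 0
  have hup := ReluGap.upper γ hγ1.le hγ2 ℓ 0
  have hsum : (ℓ:ℝ)/2 ≤ ∑ k ∈ Finset.range ℓ, ReluGap.psi k 0 := by
    calc (ℓ:ℝ)/2 = ∑ _k ∈ Finset.range ℓ, (1:ℝ)/2 := by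
          rw [Finset.sum_const, Finset.card_range, nsmul_eq_mul]; ring
      _ ≤ _ := Finset.sum_le_sum (fun k _ => ReluGap.psi_half k)
  have hmul : γ * ((ℓ:ℝ)/2) ≤ γ * ∑ k ∈ Finset.range ℓ, ReluGap.psi k 0 :=
    mul_le_mul_of_nonneg_left hsum hγ1.le
  have hln : (0:ℝ) ≤ (ℓ:ℝ) := Nat.cast_nonneg ℓ
  have hgl : (0:ℝ) ≤ γ * ℓ := mul_nonneg hγ1.le hln
  rw [hEX, hEY, hc1, hc2]
  constructor
  · nlinarith [hlow, hmul]
  · nlinarith [hup]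
end
end

section
/- Let k ≥ 2 be even. Let X_1, …, X_k be random variables such that X_1, …, X_{k−1} are independent and uniform on {−1, 1}, and X_k = 1 if the number of indices i ∈ {1, …, k−1} with X_i = 1 is odd and X_k = −1 otherwise. Let U_1, …, U_k be independent random variables each uniform on {−1, 1}. Then E[relu(Σ_{i=1}^k X_i)] − E[relu(Σ_{i=1}^k U_i)] = ((−1)^{k/2 − 1} / 2^{k−1}) · C(k−2, k/2 − 1), where C(·,·) denotes the binomial coefficient. -/
open scoped Classical
open Finset

noncomputable section

lemma relu_of_nonpos {x : ℝ} (h : x ≤ 0) : relu x = 0 := max_eq_right h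
lemma relu_of_nonneg {x : ℝ} (h : 0 ≤ x) : relu x = x := max_eq_left h

lemma alt_sum (n : ℕ) (r : ℕ) :
    ∑ j ∈ Finset.range (r+1), (-1:ℝ)^j * ((n+1).choose j) = (-1)^r * (n.choose r) := by
  induction r with
  | zero => simp
  | succ r ih =>
    rw [Finset.sum_range_succ, ih, Nat.choose_succ_succ]
    push_cast
    ring

lemma keyD' (p : ℕ) :
    ∑ j ∈ Finset.range (2*p+5), ((2*p+4).choose j : ℝ) *
        ((-1)^j * relu (2*(j:ℝ) - (2*(p:ℝ)+4))) =
      2 * (-1:ℝ)^(p+1) * ((2*p+2).choose (p+1)) := by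
  rw [Finset.range_eq_Ico,
    ← Finset.sum_Ico_consecutive _ (show 0 ≤ p+2 by omega) (show p+2 ≤ 2*p+5 by omega)]
  have hzero : ∑ j ∈ Finset.Ico 0 (p+2), ((2*p+4).choose j : ℝ) *
      ((-1)^j * relu (2*(j:ℝ) - (2*(p:ℝ)+4))) = 0 := by
    apply Finset.sum_eq_zero
    intro j hj
    rw [Finset.mem_Ico] at hj
    have hj2 : (j:ℝ) ≤ p+1 := by exact_mod_cast Nat.lt_succ_iff.mp hj.2
    rw [relu_of_nonpos (by linarith)]
    ring
  rw [hzero, zero_add, Finset.sum_Ico_eq_sum_range]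
  rw [show 2*p+5 - (p+2) = p+3 by omega]
  have hterm : ∀ i ∈ Finset.range (p+3),
      ((2*p+4).choose (p+2+i) : ℝ) * ((-1)^(p+2+i) * relu (2*((p+2+i : ℕ):ℝ) - (2*(p:ℝ)+4)))
      = (2*(p:ℝ)+4) * ((-1)^(p+i) * ((2*p+3).choose (p+1+i) : ℝ)
          - (-1)^(p+i) * ((2*p+3).choose (p+2+i) : ℝ)) := by
    intro i hi
    have hip : i ≤ p+2 := by rw [Finset.mem_range] at hi; omega
    have harg : 2*((p+2+i : ℕ):ℝ) - (2*(p:ℝ)+4) = 2*(i:ℝ) := by push_cast; ring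
    rw [harg, relu_of_nonneg (by positivity)]
    have hsgn : (-1:ℝ)^(p+2+i) = (-1)^(p+i) := by
      rw [show p+2+i = (p+i)+2 by ring, pow_add]; norm_num
    rw [hsgn]
    -- nat identities
    have h1 : (2*p+4) * (2*p+3).choose (p+1+i) = (2*p+4).choose (p+2+i) * (p+2+i) := by
      have h := Nat.add_one_mul_choose_eq (2*p+3) (p+1+i)
      rw [show 2*p+3+1 = 2*p+4 by omega, show p+1+i+1 = p+2+i by omega] at h
      exact h
    have h2 : (2*p+3).choose (p+2+i) * (2*p+4) = (2*p+4).choose (p+2+i) * (p+2-i) := by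
      have h := Nat.choose_mul_succ_eq (2*p+3) (p+2+i)
      rw [show 2*p+3+1 = 2*p+4 by omega] at h
      rw [show 2*p+4 - (p+2+i) = p+2-i by omega] at h
      exact h
    have h1' : (2*(p:ℝ)+4) * ((2*p+3).choose (p+1+i) : ℝ)
        = ((2*p+4).choose (p+2+i) : ℝ) * ((p:ℝ)+2+(i:ℝ)) := by
      exact_mod_cast congrArg (Nat.cast : ℕ → ℝ) h1
    have h2' : ((2*p+3).choose (p+2+i) : ℝ) * (2*(p:ℝ)+4)
        = ((2*p+4).choose (p+2+i) : ℝ) * ((p:ℝ)+2-(i:ℝ)) := by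
      have hc := congrArg (Nat.cast : ℕ → ℝ) h2
      push_cast [Nat.cast_sub (show i ≤ p+2 by omega)] at hc
      linear_combination hc
    linear_combination (-1:ℝ)^(p+i) * h2' - (-1:ℝ)^(p+i) * h1'
  rw [Finset.sum_congr rfl hterm]
  have A1 : ∑ j ∈ Finset.range (2*p+4), (-1:ℝ)^j * ((2*p+3).choose j) = 0 := by
    have h := alt_sum (2*p+2) (2*p+3)
    rw [show 2*p+3+1 = 2*p+4 by omega, show 2*p+2+1 = 2*p+3 by omega] at h
    rw [h, Nat.choose_eq_zero_of_lt (by omega)]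
    simp
  have A2 : ∑ j ∈ Finset.range (p+1), (-1:ℝ)^j * ((2*p+3).choose j)
      = (-1:ℝ)^p * ((2*p+2).choose p) := by
    have h := alt_sum (2*p+2) p
    rw [show 2*p+2+1 = 2*p+3 by omega] at h
    exact h
  have A3 : ∑ j ∈ Finset.range (2*p+5), (-1:ℝ)^j * ((2*p+3).choose j) = 0 := by
    have h := alt_sum (2*p+2) (2*p+4)
    rw [show 2*p+4+1 = 2*p+5 by omega, show 2*p+2+1 = 2*p+3 by omega] at h
    rw [h, Nat.choose_eq_zero_of_lt (by omega)]
    simp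
  have A4 : ∑ j ∈ Finset.range (p+2), (-1:ℝ)^j * ((2*p+3).choose j)
      = (-1:ℝ)^(p+1) * ((2*p+2).choose (p+1)) := by
    have h := alt_sum (2*p+2) (p+1)
    rw [show 2*p+2+1 = 2*p+3 by omega] at h
    exact h
  have e1 : ∑ j ∈ Finset.Ico (p+1) (2*p+4), (-1:ℝ)^j * ((2*p+3).choose j)
      = ∑ i ∈ Finset.range (p+3), (-1:ℝ)^(p+1+i) * ((2*p+3).choose (p+1+i)) := by
    rw [Finset.sum_Ico_eq_sum_range, show 2*p+4-(p+1) = p+3 by omega]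
  have e2 : ∑ j ∈ Finset.Ico (p+2) (2*p+5), (-1:ℝ)^j * ((2*p+3).choose j)
      = ∑ i ∈ Finset.range (p+3), (-1:ℝ)^(p+2+i) * ((2*p+3).choose (p+2+i)) := by
    rw [Finset.sum_Ico_eq_sum_range, show 2*p+5-(p+2) = p+3 by omega]
  have hS1 : ∑ i ∈ Finset.range (p+3), (-1:ℝ)^(p+i) * ((2*p+3).choose (p+1+i))
      = (-1:ℝ)^p * ((2*p+2).choose p) := by
    have step : ∑ i ∈ Finset.range (p+3), (-1:ℝ)^(p+i) * ((2*p+3).choose (p+1+i))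
        = -∑ i ∈ Finset.range (p+3), (-1:ℝ)^(p+1+i) * ((2*p+3).choose (p+1+i)) := by
      rw [← Finset.sum_neg_distrib]
      refine Finset.sum_congr rfl fun i _ => ?_
      rw [show p+1+i = (p+i)+1 by ring, pow_succ]
      ring
    rw [step, ← e1, Finset.sum_Ico_eq_sub _ (by omega), A1, A2]
    ring
  have hS2 : ∑ i ∈ Finset.range (p+3), (-1:ℝ)^(p+i) * ((2*p+3).choose (p+2+i))
      = (-1:ℝ)^p * ((2*p+2).choose (p+1)) := by
    have step : ∑ i ∈ Finset.range (p+3), (-1:ℝ)^(p+i) * ((2*p+3).choose (p+2+i))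
        = ∑ i ∈ Finset.range (p+3), (-1:ℝ)^(p+2+i) * ((2*p+3).choose (p+2+i)) := by
      refine Finset.sum_congr rfl fun i _ => ?_
      rw [show (-1:ℝ)^(p+2+i) = (-1)^(p+i) from by
        rw [show p+2+i = (p+i)+2 by ring, pow_add]; norm_num]
    rw [step, ← e2, Finset.sum_Ico_eq_sub _ (by omega), A3, A4, pow_succ]
    ring
  rw [← Finset.mul_sum, Finset.sum_sub_distrib, hS1, hS2]
  have hn := Nat.choose_succ_right_eq (2*p+2) p
  rw [show 2*p+2-p = p+2 by omega] at hn
  have hn' : ((2*p+2).choose (p+1) : ℝ) * ((p:ℝ)+1) = ((2*p+2).choose p : ℝ) * ((p:ℝ)+2) := by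
    exact_mod_cast congrArg (Nat.cast : ℕ → ℝ) hn
  rw [pow_succ]
  linear_combination (-2:ℝ)*(-1:ℝ)^p * hn'


lemma sum_fun_bool {k : ℕ} (G : ℕ → ℝ) :
    ∑ τ : Fin k → Bool, G ((Finset.univ.filter (fun i => τ i = true)).card) =
      ∑ j ∈ Finset.range (k+1), (k.choose j : ℝ) * G j := by
  have hbij : Function.Bijective
      (fun τ : Fin k → Bool => Finset.univ.filter (fun i => τ i = true)) := by
    constructor
    · intro τ₁ τ₂ h
      funext i
      have h2 := Finset.ext_iff.mp h i
      simp only [Finset.mem_filter, Finset.mem_univ, true_and] at h2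
      exact Bool.eq_iff_iff.mpr h2
    · intro s
      refine ⟨fun i => decide (i ∈ s), ?_⟩
      ext i; simp
  have h1 := Function.Bijective.sum_comp hbij (fun s => G s.card)
  rw [h1]
  have h2 : (Finset.univ : Finset (Finset (Fin k))) =
      (Finset.univ : Finset (Fin k)).powerset := (Finset.powerset_univ).symm
  rw [h2, Finset.sum_powerset_apply_card]
  simp [Finset.card_univ, smul_eq_mul, mul_comm]

lemma sum_sgn {k : ℕ} (τ : Fin k → Bool) :
    ∑ i, sgn (τ i) = 2 * ((Finset.univ.filter (fun i => τ i = true)).card : ℝ) - k := by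
  have h : ∀ b, sgn b = 2 * (if b = true then (1:ℝ) else 0) - 1 := by
    intro b; cases b <;> norm_num [sgn]
  simp only [h]
  rw [Finset.sum_sub_distrib, ← Finset.mul_sum, Finset.sum_boole, Finset.sum_const]
  simp [Finset.card_univ]

lemma step_parity (n : ℕ) :
    2 * ∑ σ : Fin n → Bool, relu ((∑ i, sgn (σ i)) +
        (if Odd (Finset.univ.filter (fun i => σ i = true)).card then 1 else -1)) =
    ∑ τ : Fin (n+1) → Bool, relu (∑ i, sgn (τ i)) *
        (1 + (-1:ℝ) ^ (Finset.univ.filter (fun i => τ i = true)).card) := by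
  rw [← Equiv.sum_comp (Fin.consEquiv (fun _ : Fin (n+1) => Bool))
      (fun τ : Fin (n+1) → Bool => relu (∑ i, sgn (τ i)) *
        (1 + (-1:ℝ) ^ (Finset.univ.filter (fun i => τ i = true)).card))]
  rw [Fintype.sum_prod_type, Fintype.sum_bool, ← Finset.sum_add_distrib, Finset.mul_sum]
  refine Finset.sum_congr rfl fun σ _ => ?_
  have hS : ∀ b : Bool, ∑ i : Fin (n+1), sgn ((Fin.cons b σ : Fin (n+1) → Bool) i)
      = sgn b + ∑ i : Fin n, sgn (σ i) := by
    intro b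
    rw [Fin.sum_univ_succ]
    simp
  have hc : ∀ b : Bool,
      (Finset.univ.filter (fun i => (Fin.cons b σ : Fin (n+1) → Bool) i = true)).card
      = (if b then 1 else 0) + (Finset.univ.filter (fun i => σ i = true)).card := by
    intro b
    rw [Finset.card_filter, Finset.card_filter, Fin.sum_univ_succ]
    simp
  simp only [Fin.consEquiv_apply, hS, hc]
  norm_num
  set c := (Finset.univ.filter (fun i => σ i = true)).card with hcdef
  set S := ∑ i : Fin n, sgn (σ i) with hSdef
  have ht : sgn true = 1 := rfl
  have hf : sgn false = -1 := rfl
  rw [ht, hf]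
  rcases Nat.even_or_odd c with h | h
  · have h1 : (-1:ℝ) ^ c = 1 := h.neg_one_pow
    have h2 : (-1:ℝ) ^ (1 + c) = -1 := by
      have ho : Odd (1 + c) := by rcases h with ⟨t, ht2⟩; exact ⟨t, by omega⟩
      exact ho.neg_one_pow
    have h3 : ¬ Odd c := by simpa using h
    rw [if_neg h3, h1, h2]
    have : relu (S + -1) = relu (-1 + S) := by rw [add_comm]
    rw [this]; ring
  · have h1 : (-1:ℝ) ^ c = -1 := h.neg_one_pow
    have h2 : (-1:ℝ) ^ (1 + c) = 1 := by
      have he : Even (1 + c) := by rcases h with ⟨t, ht2⟩; exact ⟨t+1, by omega⟩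
      exact he.neg_one_pow
    rw [if_pos h, h1, h2]
    have : relu (S + 1) = relu (1 + S) := by rw [add_comm]
    rw [this]; ring

lemma keyD (m : ℕ) (hm : 1 ≤ m) :
    ∑ j ∈ Finset.range (2*m+1), ((2*m).choose j : ℝ) *
        ((-1)^j * relu (2*(j:ℝ) - 2*(m:ℝ))) =
      2 * (-1:ℝ)^(m-1) * ((2*m-2).choose (m-1)) := by
  obtain ⟨q, rfl⟩ : ∃ q, m = q + 1 := ⟨m-1, by omega⟩
  cases q with
  | zero =>
    norm_num [Finset.sum_range_succ, relu]
  | succ p =>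
    rw [show 2*(p+1+1) = 2*p+4 by omega, show 2*p+4+1 = 2*p+5 by omega,
      show 2*p+4-2 = 2*p+2 by omega, show p+1+1-1 = p+1 by omega]
    rw [← keyD' p]
    refine Finset.sum_congr rfl fun j _ => ?_
    rw [show 2*(j:ℝ) - 2*((p+1+1 : ℕ):ℝ) = 2*(j:ℝ) - (2*(p:ℝ)+4) from by push_cast; ring]

/-- Let `k ≥ 2` be even, let `X_1,…,X_{k−1}` be i.i.d. uniform `±1` and let
`X_k = 1` iff the number of `+1`s among `X_1,…,X_{k−1}` is odd (else `−1`); let `U_1,…,U_k`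
be i.i.d. uniform `±1`. Then
`E[relu(ΣX_i)] − E[relu(ΣU_i)] = ((−1)^{k/2−1}/2^{k−1})·C(k−2, k/2−1)`. -/
theorem parity_relu_expectation (k : ℕ) (hk : 2 ≤ k) (hke : Even k) :
    let EX : ℝ := (1 / 2 ^ (k - 1)) * ∑ σ : Fin (k - 1) → Bool,
      relu ((∑ i, sgn (σ i)) +
        (if Odd (Finset.univ.filter (fun i => σ i = true)).card then 1 else -1))
    let EU : ℝ := (1 / 2 ^ k) * ∑ τ : Fin k → Bool, relu (∑ i, sgn (τ i))
    EX - EU = ((-1 : ℝ) ^ (k / 2 - 1) / 2 ^ (k - 1)) * (Nat.choose (k - 2) (k / 2 - 1)) := by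
  intro EX EU
  obtain ⟨m, hm⟩ := hke
  have hk2 : k = 2*m := by omega
  subst hk2
  have hm1 : 1 ≤ m := by omega
  have hA := step_parity (2*m-1)
  rw [show 2*m-1+1 = 2*m by omega] at hA
  set S1 := ∑ σ : Fin (2*m-1) → Bool,
      relu ((∑ i, sgn (σ i)) +
        (if Odd (Finset.univ.filter (fun i => σ i = true)).card then 1 else -1)) with hS1def
  set S2 := ∑ τ : Fin (2*m) → Bool, relu (∑ i, sgn (τ i)) with hS2def
  set S3 := ∑ τ : Fin (2*m) → Bool, relu (∑ i, sgn (τ i)) *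
      (-1:ℝ) ^ (Finset.univ.filter (fun i => τ i = true)).card with hS3def
  have hsplit : ∑ τ : Fin (2*m) → Bool, relu (∑ i, sgn (τ i)) *
      (1 + (-1:ℝ) ^ (Finset.univ.filter (fun i => τ i = true)).card) = S2 + S3 := by
    rw [hS2def, hS3def, ← Finset.sum_add_distrib]
    refine Finset.sum_congr rfl fun τ _ => by ring
  rw [hsplit] at hA
  have hS3 : S3 = ∑ j ∈ Finset.range (2*m+1), ((2*m).choose j : ℝ) *
      ((-1)^j * relu (2*(j:ℝ) - 2*(m:ℝ))) := by
    rw [← sum_fun_bool (k := 2*m) (fun j => (-1:ℝ)^j * relu (2*(j:ℝ) - 2*(m:ℝ))), hS3def]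
    refine Finset.sum_congr rfl fun τ _ => ?_
    rw [sum_sgn τ]
    rw [show 2 * ((Finset.univ.filter (fun i => τ i = true)).card : ℝ) - ((2*m : ℕ):ℝ)
        = 2 * ((Finset.univ.filter (fun i => τ i = true)).card : ℝ) - 2*(m:ℝ) from by
      push_cast; ring]
    ring
  have hkey := keyD m hm1
  rw [← hS3] at hkey
  have hEX : EX = (1 / 2 ^ (2*m - 1)) * S1 := rfl
  have hEU : EU = (1 / 2 ^ (2*m)) * S2 := rfl
  rw [hEX, hEU]
  rw [show 2*m/2 - 1 = m - 1 by omega]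
  have hpow : (2:ℝ)^(2*m) = 2 * 2^(2*m-1) := by
    have h := pow_succ (2:ℝ) (2*m-1)
    rw [show 2*m-1+1 = 2*m by omega] at h
    linarith
  have key2 : 2*S1 - S2 = 2*(-1:ℝ)^(m-1)*((2*m-2).choose (m-1)) := by
    linarith [hA, hkey]
  rw [hpow]
  have h2 : (2:ℝ)^(2*m-1) ≠ 0 := by positivity
  rw [show (1:ℝ)/2^(2*m-1)*S1 - 1/(2*2^(2*m-1))*S2 = 1/(2*2^(2*m-1))*(2*S1 - S2) from by ring]
  rw [key2]
  field_simp
end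
end

section
/- Let A ∈ [−1,1]^{m×n} and w ∈ [−1,1]^m be arbitrary. Then for any choice of at most m/4 entries from A and w (i.e., any set consisting of at most m/4 positions, each position being either an entry of A or an entry of w), there exist A' ∈ [−1,1]^{m×n} and w' ∈ [−1,1]^m that agree with A and w respectively on all chosen positions, such that the ReLU network (A', w') computes the constant 0-function, i.e., w'ᵀ·relu(A'x) ≤ 0 for all x ∈ {0,1}^n. -/
open scoped Classical
open Finset

noncomputable section

/-- For any `A ∈ [−1,1]^{m×n}`, `w ∈ [−1,1]^m`, and any set `P` of at most `m/4`
positions (each position either an entry of `A` or an entry of `w`), there exist `A', w'` with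
entries in `[−1,1]` agreeing with `A, w` on all positions in `P` such that `(A', w')` computes
the constant 0-function, i.e. `w'ᵀ·relu(A'x) ≤ 0` for all `x ∈ {0,1}^n`. -/
theorem complete_to_zero_function (m n : ℕ)
    (A : Matrix (Fin m) (Fin n) ℝ) (w : Fin m → ℝ)
    (hA : ∀ j i, |A j i| ≤ 1) (hw : ∀ j, |w j| ≤ 1)
    (P : Finset ((Fin m × Fin n) ⊕ Fin m)) (hP : (P.card : ℝ) ≤ (m : ℝ) / 4) :
    ∃ (A' : Matrix (Fin m) (Fin n) ℝ) (w' : Fin m → ℝ),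
      (∀ j i, |A' j i| ≤ 1) ∧ (∀ j, |w' j| ≤ 1) ∧
      (∀ p : Fin m × Fin n, Sum.inl p ∈ P → A' p.1 p.2 = A p.1 p.2) ∧
      (∀ j : Fin m, Sum.inr j ∈ P → w' j = w j) ∧
      (∀ x : Fin n → Bool, netVal A' w' (bv x) ≤ 0) := by
  -- the set of "pinned" rows
  set B : Finset (Fin m) :=
    Finset.univ.filter (fun j => Sum.inr j ∈ P ∨ ∃ i, Sum.inl (j, i) ∈ P) with hB
  -- B.card ≤ P.card
  have hBP : B.card ≤ P.card := by
    apply Finset.card_le_card_of_injOn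
      (fun j => if h : Sum.inr j ∈ P then Sum.inr j
        else if h2 : ∃ i, Sum.inl (j, i) ∈ P then Sum.inl (j, h2.choose) else Sum.inr j)
    · intro j hj
      simp only [hB, Finset.mem_coe, Finset.mem_filter] at hj
      rcases hj with ⟨-, hj⟩
      by_cases h : Sum.inr j ∈ P
      · simp [h]
      · rcases hj with h' | h2
        · exact absurd h' h
        · simp [h, h2, h2.choose_spec]
    · intro a _ b _ hab
      have key : ∀ j : Fin m, (Sum.elim (Prod.fst) id :
          (Fin m × Fin n) ⊕ Fin m → Fin m)
          (if h : Sum.inr j ∈ P then Sum.inr j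
            else if h2 : ∃ i, Sum.inl (j, i) ∈ P then Sum.inl (j, h2.choose)
            else Sum.inr j) = j := by
        intro j
        by_cases h : Sum.inr j ∈ P
        · simp [h]
        · by_cases h2 : ∃ i, Sum.inl (j, i) ∈ P <;> simp [h, h2]
      have := congrArg (Sum.elim (Prod.fst) id) hab
      rwa [key a, key b] at this
  -- card bound: B.card ≤ Bᶜ.card
  have h4 : 4 * B.card ≤ m := by
    have : (4 * B.card : ℝ) ≤ (m : ℝ) := by
      have : (B.card : ℝ) ≤ (m : ℝ) / 4 := le_trans (by exact_mod_cast hBP) hP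
      linarith
    exact_mod_cast this
  have hcard : Fintype.card ↥B ≤ Fintype.card ↥(Bᶜ) := by
    rw [Fintype.card_coe, Fintype.card_coe, Finset.card_compl, Fintype.card_fin]
    omega
  obtain ⟨e⟩ : Nonempty (↥B ↪ ↥(Bᶜ)) :=
    Function.Embedding.nonempty_iff_card_le.2 hcard
  -- definitions
  have himg : ∀ j : ↥B, ((e j : Fin m)) ∉ B := fun j => Finset.mem_compl.1 (e j).2
  refine ⟨fun k => if h : ∃ j : ↥B, (e j : Fin m) = k then A h.choose else A k,
    fun k => if k ∈ B then w k
      else if h : ∃ j : ↥B, (e j : Fin m) = k then -(w h.choose) else 0,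
    ?_, ?_, ?_, ?_, ?_⟩
  · intro j i
    by_cases h : ∃ j' : ↥B, (e j' : Fin m) = j <;> simp [h, hA]
  · intro j
    by_cases hj : j ∈ B
    · simp [hj, hw]
    · by_cases h : ∃ j' : ↥B, (e j' : Fin m) = j <;> simp [hj, h, hw, abs_neg]
  · intro p hp
    have hpB : p.1 ∈ B := by
      simp only [hB, Finset.mem_filter]
      exact ⟨Finset.mem_univ _, Or.inr ⟨p.2, hp⟩⟩
    have : ¬ ∃ j' : ↥B, (e j' : Fin m) = p.1 := by
      rintro ⟨j', hj'⟩; exact himg j' (hj' ▸ hpB)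
    simp [this]
  · intro j hj
    have hjB : j ∈ B := by
      simp only [hB, Finset.mem_filter]
      exact ⟨Finset.mem_univ _, Or.inl hj⟩
    simp [hjB]
  · intro x
    -- abbreviate the summand
    set A' : Matrix (Fin m) (Fin n) ℝ :=
      fun k => if h : ∃ j : ↥B, (e j : Fin m) = k then A h.choose else A k with hA'
    set w' : Fin m → ℝ := fun k => if k ∈ B then w k
      else if h : ∃ j : ↥B, (e j : Fin m) = k then -(w h.choose) else 0 with hw'
    set g : Fin m → ℝ := fun k => w' k * relu (∑ i, A' k i * bv x i) with hg
    have hsplit : netVal A' w' (bv x) = ∑ k ∈ B, g k + ∑ k ∈ Bᶜ, g k := by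
      rw [netVal, ← Finset.sum_add_sum_compl B]
    -- value of g on B
    have hgB : ∀ k ∈ B, g k = w k * relu (∑ i, A k i * bv x i) := by
      intro k hk
      have hno : ¬ ∃ j' : ↥B, (e j' : Fin m) = k := by
        rintro ⟨j', hj'⟩; exact himg j' (hj' ▸ hk)
      simp only [hg, hw', hA', if_pos hk, dif_neg hno]
    -- sum over Bᶜ equals minus sum over B
    have hgC : ∑ k ∈ Bᶜ, g k = -∑ k ∈ B, w k * relu (∑ i, A k i * bv x i) := by
      have hsub : B.attach.image (fun j : ↥B => (e j : Fin m)) ⊆ Bᶜ := by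
        intro k hk
        simp only [Finset.mem_image] at hk
        obtain ⟨j, -, rfl⟩ := hk
        exact Finset.mem_compl.2 (himg j)
      have hzero : ∀ k ∈ Bᶜ, k ∉ B.attach.image (fun j : ↥B => (e j : Fin m)) → g k = 0 := by
        intro k hk hnk
        have hkB : k ∉ B := Finset.mem_compl.1 hk
        have hno : ¬ ∃ j' : ↥B, (e j' : Fin m) = k := by
          rintro ⟨j', hj'⟩
          exact hnk (Finset.mem_image.2 ⟨j', Finset.mem_attach _ _, hj'⟩)
        simp only [hg, hw', if_neg hkB, dif_neg hno, zero_mul]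
      rw [← Finset.sum_subset hsub hzero]
      rw [Finset.sum_image (by
        intro a _ b _ hab
        exact e.injective (Subtype.ext hab))]
      have hval : ∀ j : ↥B, g (e j) = -(w j * relu (∑ i, A j i * bv x i)) := by
        intro j
        have hex : ∃ j' : ↥B, (e j' : Fin m) = (e j : Fin m) := ⟨j, rfl⟩
        have hc : hex.choose = j := e.injective (Subtype.ext hex.choose_spec)
        have hkB : (e j : Fin m) ∉ B := himg j
        simp only [hg, hw', hA', if_neg hkB, dif_pos hex, hc, neg_mul]
      rw [Finset.sum_congr rfl (fun j _ => hval j), Finset.sum_neg_distrib,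
        ← Finset.sum_attach B (fun j => w j * relu (∑ i, A j i * bv x i))]
    rw [hsplit, Finset.sum_congr rfl hgB, hgC]
    simp
end
end

section
/- Let A ∈ [−1,1]^{m×n} and w ∈ [−1,1]^m be arbitrary. Then for any choice of fewer than m/4 entries from A and w (i.e., any set consisting of fewer than m/4 positions, each position being either an entry of A or an entry of w), there exist A' ∈ [−1,1]^{m×n} and w' ∈ [−1,1]^m that agree with A and w respectively on all chosen positions, such that the ReLU network (A', w') computes the OR-function, i.e., w'ᵀ·relu(A'x) > 0 for all x ∈ {0,1}^n with x ≠ 0. -/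
open scoped Classical
open Finset

noncomputable section

/-- For any `A ∈ [−1,1]^{m×n}`, `w ∈ [−1,1]^m`, and any set `P` of fewer than
`m/4` positions (each position either an entry of `A` or an entry of `w`), there exist
`A', w'` with entries in `[−1,1]` agreeing with `A, w` on all positions in `P` such that
`(A', w')` computes the OR-function, i.e. `w'ᵀ·relu(A'x) > 0` for all nonzero `x ∈ {0,1}^n`. -/
theorem complete_to_or_function (m n : ℕ)
    (A : Matrix (Fin m) (Fin n) ℝ) (w : Fin m → ℝ)
    (hA : ∀ j i, |A j i| ≤ 1) (hw : ∀ j, |w j| ≤ 1)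
    (P : Finset ((Fin m × Fin n) ⊕ Fin m)) (hP : (P.card : ℝ) < (m : ℝ) / 4) :
    ∃ (A' : Matrix (Fin m) (Fin n) ℝ) (w' : Fin m → ℝ),
      (∀ j i, |A' j i| ≤ 1) ∧ (∀ j, |w' j| ≤ 1) ∧
      (∀ p : Fin m × Fin n, Sum.inl p ∈ P → A' p.1 p.2 = A p.1 p.2) ∧
      (∀ j : Fin m, Sum.inr j ∈ P → w' j = w j) ∧
      (∀ x : Fin n → Bool, x ≠ (fun _ => false) → 0 < netVal A' w' (bv x)) := by
  classical
  set rowOf : (Fin m × Fin n) ⊕ Fin m → Fin m := Sum.elim Prod.fst id with hrow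
  set T : Finset (Fin m) := P.image rowOf with hT
  set A' : Matrix (Fin m) (Fin n) ℝ := fun j i =>
    if Sum.inl (j, i) ∈ P then A j i else if j ∈ T then 0 else 1 with hA'
  set w' : Fin m → ℝ := fun j =>
    if Sum.inr j ∈ P then w j else if j ∈ T then 0 else 1 with hw'
  have hA'bd : ∀ j i, |A' j i| ≤ 1 := by
    intro j i
    simp only [hA']
    split
    · exact hA j i
    · split <;> norm_num
  have hw'bd : ∀ j, |w' j| ≤ 1 := by
    intro j
    simp only [hw']
    split
    · exact hw j
    · split <;> norm_num
  refine ⟨A', w', hA'bd, hw'bd, ?_, ?_, ?_⟩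
  · intro p hp
    simp only [hA', if_pos (show Sum.inl (p.1, p.2) ∈ P by rwa [Prod.mk.eta])]
  · intro j hj
    simp only [hw', if_pos hj]
  · intro x hx
    -- get a coordinate where x is true
    obtain ⟨i0, hi0⟩ : ∃ i, x i = true := by
      by_contra h
      push_neg at h
      exact hx (funext fun i => by simpa using h i)
    -- c j counts constrained A-entries in row j
    set c : Fin m → ℕ := fun j => (univ.filter fun i : Fin n => Sum.inl (j, i) ∈ P).card with hc
    -- sum of c over all rows is at most |P|
    have hsumc : (∑ j, c j) ≤ P.card := by
      have h1 : (∑ j, c j) =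
          ((univ : Finset (Fin m × Fin n)).filter (fun p => Sum.inl p ∈ P)).card := by
        rw [Finset.card_filter]
        rw [Fintype.sum_prod_type]
        simp only [hc, Finset.card_filter]
      rw [h1]
      apply Finset.card_le_card_of_injOn (fun p => Sum.inl p)
      · intro p hp
        simpa using hp
      · intro p _ q _ hpq
        exact Sum.inl.injEq _ _ ▸ hpq
    have hTcard : T.card ≤ P.card := Finset.card_image_le
    -- untouched rows
    have huntouched : ∀ j ∉ T, (1 : ℝ) ≤ w' j * relu (∑ i, A' j i * bv x i) := by
      intro j hj
      have hjr : Sum.inr j ∉ P := fun h => hj (Finset.mem_image.2 ⟨_, h, rfl⟩)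
      have hji : ∀ i, Sum.inl (j, i) ∉ P := fun i h => hj (Finset.mem_image.2 ⟨_, h, rfl⟩)
      have hw'j : w' j = 1 := by simp [hw', hjr, hj]
      have hA'j : ∀ i, A' j i = 1 := fun i => by simp [hA', hji i, hj]
      have hsum : (1 : ℝ) ≤ ∑ i, A' j i * bv x i := by
        calc (1 : ℝ) = A' j i0 * bv x i0 := by simp [hA'j, bv, hi0]
        _ ≤ ∑ i, A' j i * bv x i := by
            apply Finset.single_le_sum (f := fun i => A' j i * bv x i)
            · intro i _
              simp only [hA'j, one_mul, bv]
              split <;> norm_num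
            · exact Finset.mem_univ i0
      rw [hw'j, one_mul]
      exact le_trans hsum (le_max_left _ _)
    -- touched rows
    have htouched : ∀ j ∈ T, -(c j : ℝ) ≤ w' j * relu (∑ i, A' j i * bv x i) := by
      intro j hj
      have hrelu_nonneg : (0:ℝ) ≤ relu (∑ i, A' j i * bv x i) := le_max_right _ _
      by_cases hjr : Sum.inr j ∈ P
      · have hw'j : w' j = w j := by simp [hw', hjr]
        have hS : (∑ i, A' j i * bv x i) ≤ (c j : ℝ) := by
          have : (∑ i, A' j i * bv x i) ≤
              ∑ i, (if Sum.inl (j, i) ∈ P then (1:ℝ) else 0) := by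
            apply Finset.sum_le_sum
            intro i _
            by_cases h : Sum.inl (j, i) ∈ P
            · simp only [hA', if_pos h]
              have hb0 : (0:ℝ) ≤ bv x i := by simp only [bv]; split <;> norm_num
              have hb1 : bv x i ≤ 1 := by simp only [bv]; split <;> norm_num
              calc A j i * bv x i ≤ 1 * bv x i :=
                    mul_le_mul_of_nonneg_right (le_of_abs_le (hA j i)) hb0
                _ ≤ 1 := by rw [one_mul]; exact hb1
            · simp [hA', h, hj]
          calc (∑ i, A' j i * bv x i) ≤ _ := this
          _ = (c j : ℝ) := by rw [hc]; simp [Finset.sum_ite_eq, Finset.sum_boole]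
        have hrelu_le : relu (∑ i, A' j i * bv x i) ≤ (c j : ℝ) :=
          max_le hS (by positivity)
        have hwge : (-1 : ℝ) ≤ w j := neg_le_of_abs_le (hw j)
        calc -(c j : ℝ) ≤ -(relu (∑ i, A' j i * bv x i)) := by linarith
        _ = (-1) * relu (∑ i, A' j i * bv x i) := by ring
        _ ≤ w j * relu (∑ i, A' j i * bv x i) :=
            mul_le_mul_of_nonneg_right hwge hrelu_nonneg
        _ = w' j * relu (∑ i, A' j i * bv x i) := by rw [hw'j]
      · have hw'j : w' j = 0 := by simp [hw', hjr, hj]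
        rw [hw'j, zero_mul]
        simp
    -- combine
    have hsplit : netVal A' w' (bv x) =
        (∑ j ∈ T, w' j * relu (∑ i, A' j i * bv x i)) +
        (∑ j ∈ Tᶜ, w' j * relu (∑ i, A' j i * bv x i)) := by
      rw [netVal, Finset.sum_add_sum_compl]
    have h1 : -(P.card : ℝ) ≤ ∑ j ∈ T, w' j * relu (∑ i, A' j i * bv x i) := by
      calc -(P.card : ℝ) ≤ -(∑ j, (c j : ℝ)) := by
            rw [neg_le_neg_iff]
            exact_mod_cast hsumc
      _ ≤ -(∑ j ∈ T, (c j : ℝ)) := by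
            rw [neg_le_neg_iff]
            apply Finset.sum_le_sum_of_subset_of_nonneg (Finset.subset_univ T)
            intro j _ _
            positivity
      _ = ∑ j ∈ T, -(c j : ℝ) := by rw [Finset.sum_neg_distrib]
      _ ≤ _ := Finset.sum_le_sum htouched
    have h2 : ((m : ℝ) - P.card) ≤ ∑ j ∈ Tᶜ, w' j * relu (∑ i, A' j i * bv x i) := by
      have hcc : (Tᶜ.card : ℝ) = m - T.card := by
        rw [Finset.card_compl]
        have := Finset.card_le_univ T
        push_cast [Nat.cast_sub this]
        simp
      calc ((m : ℝ) - P.card) ≤ (m : ℝ) - T.card := by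
            have : (T.card : ℝ) ≤ P.card := by exact_mod_cast hTcard
            linarith
      _ = (Tᶜ.card : ℝ) := hcc.symm
      _ = ∑ j ∈ Tᶜ, (1:ℝ) := by rw [Finset.sum_const, nsmul_eq_mul, mul_one]
      _ ≤ _ := Finset.sum_le_sum (fun j hj => huntouched j (Finset.mem_compl.1 hj))
    have hm : (0:ℝ) < m := by
      have : (0:ℝ) ≤ P.card := Nat.cast_nonneg _
      linarith
    rw [hsplit]
    linarith
end
end
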